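/- arXiv:2307.01049 — 4 statements merged into one kernel-verified Lean document; each statement's English description precedes it below -/
import Mathlib

section
/- Under Assumptions 1.1–1.4, for every a ∈ ℝ and every pair (d,d') ∈ {0,1}², the cumulative distribution function of the potential outcome Y(d, M(d')) at a is identified as P(Y(d, M(d')) ≤ a) = E[ g_{d,d',a}(X) ], where g_{d,d',a}(x) := E[ F_a(d, M, X) | D = d', X = x ] = Σ_{m∈𝓜} F_a(d, m, x) · P(M = m | D = d', X = x). -/
open MeasureTheory ProbabilityTheory
open Filter

section Helpers

variable {Ω : Type*} {m : MeasurableSpace Ω} {mΩ : MeasurableSpace Ω} {μ : Measure Ω}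
  [IsProbabilityMeasure μ]

lemma aux_ind_int {s : Set Ω} (hs : MeasurableSet[mΩ] s) :
    Integrable (s.indicator fun _ => (1 : ℝ)) μ :=
  (integrable_const 1).indicator hs

lemma aux_ind_le_one (s : Set Ω) (ω : Ω) : ‖s.indicator (fun _ => (1:ℝ)) ω‖ ≤ 1 := by
  classical
  rw [Set.indicator_apply]; split_ifs <;> simp

omit [IsProbabilityMeasure μ] in
lemma aux_condexp_ind_nonneg {s : Set Ω} :
    0 ≤ᵐ[μ] μ⟦s|m⟧ :=
  condExp_nonneg (Eventually.of_forall fun ω =>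
    Set.indicator_nonneg (fun _ _ => zero_le_one) ω)

lemma aux_condexp_ind_le_one (hm : m ≤ mΩ) {s : Set Ω}
    (hs : MeasurableSet[mΩ] s) :
    ∀ᵐ ω ∂μ, (μ⟦s|m⟧) ω ≤ 1 := by
  have h := condExp_mono (μ := μ) (m := m) (aux_ind_int hs) (integrable_const (1:ℝ))
    (Eventually.of_forall fun ω => by
      classical
      rw [Set.indicator_apply]; split_ifs <;> norm_num)
  rw [condExp_const hm (1:ℝ)] at h
  exact h

lemma aux_condexp_ind_bound (hm : m ≤ mΩ) {s : Set Ω}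
    (hs : MeasurableSet[mΩ] s) :
    ∀ᵐ ω ∂μ, ‖(μ⟦s|m⟧) ω‖ ≤ 1 := by
  filter_upwards [aux_condexp_ind_le_one hm hs, aux_condexp_ind_nonneg (μ := μ) (m := m) (s := s)]
    with ω h1 h2
  simp only [Pi.zero_apply] at h2
  rw [Real.norm_eq_abs, abs_le]
  exact ⟨by linarith, h1⟩

/-- If `f > 0` a.e. and `f` is integrable then its conditional expectation is a.e. positive. -/
lemma aux_condexp_pos (hm : m ≤ mΩ) {f : Ω → ℝ}
    (hf : Integrable f μ) (hfpos : ∀ᵐ ω ∂μ, 0 < f ω) :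
    ∀ᵐ ω ∂μ, 0 < (μ[f|m]) ω := by
  have hSm : MeasurableSet[m] ((μ[f|m]) ⁻¹' (Set.Iic 0)) :=
    stronglyMeasurable_condExp.measurable measurableSet_Iic
  set S : Set Ω := (μ[f|m]) ⁻¹' (Set.Iic 0) with hSdef
  have hS : MeasurableSet[mΩ] S := hm _ hSm
  have h1 : ∫ ω in S, (μ[f|m]) ω ∂μ = ∫ ω in S, f ω ∂μ := setIntegral_condExp hm hf hSm
  have h2 : ∫ ω in S, (μ[f|m]) ω ∂μ ≤ 0 := by
    apply integral_nonpos_of_ae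
    exact (ae_restrict_iff' hS).mpr (Eventually.of_forall fun ω hω => hω)
  have hSzero : μ S = 0 := by
    by_contra hne
    have hpos : 0 < μ S := lt_of_le_of_ne (by positivity) (Ne.symm hne)
    have hnn : 0 ≤ᵐ[μ.restrict S] f := ae_restrict_of_ae (hfpos.mono fun _ h => h.le)
    have hsupp : μ (S \ Function.support f) = 0 := by
      refine measure_mono_null (fun ω hω => ?_) hfpos
      simp only [Set.mem_setOf_eq]
      intro hpos'
      exact hω.2 (ne_of_gt hpos')
    have hle : μ S ≤ μ (Function.support f ∩ S) := by
      calc μ S ≤ μ ((Function.support f ∩ S) ∪ (S \ Function.support f)) := by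
            apply measure_mono
            intro ω hω
            by_cases hsup : ω ∈ Function.support f
            · exact Or.inl ⟨hsup, hω⟩
            · exact Or.inr ⟨hω, hsup⟩
        _ ≤ μ (Function.support f ∩ S) + μ (S \ Function.support f) := measure_union_le _ _
        _ = μ (Function.support f ∩ S) := by rw [hsupp, add_zero]
    have : 0 < ∫ ω in S, f ω ∂μ :=
      (setIntegral_pos_iff_support_of_nonneg_ae hnn hf.integrableOn).mpr (lt_of_lt_of_le hpos hle)
    linarith [h1 ▸ h2]
  have : ∀ᵐ ω ∂μ, ω ∉ S := by
    rw [ae_iff]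
    simpa using hSzero
  filter_upwards [this] with ω hω
  simpa [hSdef, not_le] using hω

/-- Tower property combined with pulling an indicator of an `m₂`-measurable set inside. -/
lemma aux_tower_ind {m₁ m₂ : MeasurableSpace Ω} (h12 : m₁ ≤ m₂) (hm2 : m₂ ≤ mΩ)
    {s : Set Ω} (hs : MeasurableSet[m₂] s) {f : Ω → ℝ} (hf : Integrable f μ) :
    μ[s.indicator f|m₁] =ᵐ[μ] μ[s.indicator (μ[f|m₂])|m₁] := by
  have heqf : (fun ω => s.indicator (fun _ => (1:ℝ)) ω * f ω) = s.indicator f := by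
    funext ω
    classical
    by_cases h : ω ∈ s <;> simp [Set.indicator_apply, h]
  have heqc : (fun ω => s.indicator (fun _ => (1:ℝ)) ω * (μ[f|m₂]) ω)
      = s.indicator (μ[f|m₂]) := by
    funext ω
    classical
    by_cases h : ω ∈ s <;> simp [Set.indicator_apply, h]
  have h2 : μ[s.indicator f|m₂] =ᵐ[μ] s.indicator (μ[f|m₂]) := by
    have h := condExp_stronglyMeasurable_mul_of_bound hm2
      (stronglyMeasurable_const.indicator hs) hf 1
      (Eventually.of_forall (aux_ind_le_one s))
    rw [show (Set.indicator s fun _ => (1:ℝ)) * f = fun ω => s.indicator (fun _ => (1:ℝ)) ω * f ω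
      from rfl, heqf] at h
    refine h.trans ?_
    rw [show (Set.indicator s fun _ => (1:ℝ)) * μ[f|m₂]
      = fun ω => s.indicator (fun _ => (1:ℝ)) ω * (μ[f|m₂]) ω from rfl, heqc]
  exact (condExp_condExp_of_le h12 hm2).symm.trans (condExp_congr_ae h2)

lemma aux_tower_ind_congr {m₁ m₂ : MeasurableSpace Ω} (h12 : m₁ ≤ m₂) (hm2 : m₂ ≤ mΩ)
    {s : Set Ω} (hs : MeasurableSet[m₂] s) {f g : Ω → ℝ} (hf : Integrable f μ)
    (hg : Integrable g μ) (h : μ[f|m₂] =ᵐ[μ] μ[g|m₂]) :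
    μ[s.indicator f|m₁] =ᵐ[μ] μ[s.indicator g|m₁] := by
  refine (aux_tower_ind h12 hm2 hs hf).trans (EventuallyEq.trans ?_
    (aux_tower_ind h12 hm2 hs hg).symm)
  apply condExp_congr_ae
  filter_upwards [h] with ω hω
  classical
  by_cases hmem : ω ∈ s <;> simp [Set.indicator_apply, hmem, hω]

end Helpers

section Helpers2

variable {Ω : Type*} {m : MeasurableSpace Ω} {mΩ : MeasurableSpace Ω} {μ : Measure Ω}
  [IsProbabilityMeasure μ]

/-- If `w > 0` a.e., `w` integrable, and `∫_E w = 0`, then `E` is null. -/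
lemma aux_null_of_setIntegral_zero {w : Ω → ℝ} (hw : Integrable w μ)
    (hwpos : ∀ᵐ ω ∂μ, 0 < w ω) {E : Set Ω} (hE : MeasurableSet[mΩ] E)
    (hzero : ∫ ω in E, w ω ∂μ = 0) : μ E = 0 := by
  by_contra hne
  have hpos : 0 < μ E := lt_of_le_of_ne (by positivity) (Ne.symm hne)
  have hnn : 0 ≤ᵐ[μ.restrict E] w := ae_restrict_of_ae (hwpos.mono fun _ h => h.le)
  have hsupp : μ (E \ Function.support w) = 0 := by
    refine measure_mono_null (fun ω hω => ?_) hwpos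
    simp only [Set.mem_setOf_eq]
    intro hpos'
    exact hω.2 (ne_of_gt hpos')
  have hle : μ E ≤ μ (Function.support w ∩ E) := by
    calc μ E ≤ μ ((Function.support w ∩ E) ∪ (E \ Function.support w)) := by
          apply measure_mono
          intro ω hω
          by_cases hsup : ω ∈ Function.support w
          · exact Or.inl ⟨hsup, hω⟩
          · exact Or.inr ⟨hω, hsup⟩
      _ ≤ μ (Function.support w ∩ E) + μ (E \ Function.support w) := measure_union_le _ _
      _ = μ (Function.support w ∩ E) := by rw [hsupp, add_zero]
  have : 0 < ∫ ω in E, w ω ∂μ :=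
    (setIntegral_pos_iff_support_of_nonneg_ae hnn hw.integrableOn).mpr
      (lt_of_lt_of_le hpos hle)
  linarith

/-- Integral of an indicator over a set. -/
lemma aux_setIntegral_ind {E t : Set Ω} (hE : MeasurableSet[mΩ] E) (ht : MeasurableSet[mΩ] t) :
    ∫ ω in E, t.indicator (fun _ => (1:ℝ)) ω ∂μ = (μ (E ∩ t)).toReal := by
  rw [setIntegral_indicator ht, setIntegral_const, smul_eq_mul, mul_one]
  rfl

lemma aux_ind_congr {s : Set Ω} {f g : Ω → ℝ} (h : f =ᵐ[μ] g) :
    s.indicator f =ᵐ[μ] s.indicator g := by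
  filter_upwards [h] with ω hω
  classical
  by_cases hm : ω ∈ s <;> simp [Set.indicator_apply, hm, hω]

end Helpers2

section Part2

variable {Ω : Type*} {m : MeasurableSpace Ω} {mΩ : MeasurableSpace Ω} {μ : Measure Ω}
  [IsProbabilityMeasure μ]

/-- Every set measurable w.r.t. `comap (D, X)` with `D : Ω → ℕ` decomposes as a countable
disjoint union, so it suffices to check set-integral equalities on `D⁻¹{δ} ∩ X⁻¹ S`. -/
lemma aux_setIntegral_comap_prod {𝓧 : Type*} [MeasurableSpace 𝓧]
    {D : Ω → ℕ} {X : Ω → 𝓧} (hD : Measurable D) (hX : Measurable X)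
    {f₁ f₂ : Ω → ℝ} (h1 : Integrable f₁ μ) (h2 : Integrable f₂ μ)
    (h : ∀ (δ : ℕ) (S : Set 𝓧), MeasurableSet S →
      ∫ ω in D ⁻¹' {δ} ∩ X ⁻¹' S, f₁ ω ∂μ = ∫ ω in D ⁻¹' {δ} ∩ X ⁻¹' S, f₂ ω ∂μ)
    {t : Set Ω}
    (ht : MeasurableSet[MeasurableSpace.comap (fun ω => (D ω, X ω)) inferInstance] t) :
    ∫ ω in t, f₁ ω ∂μ = ∫ ω in t, f₂ ω ∂μ := by
  obtain ⟨T, hT, rfl⟩ := ht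
  set s : ℕ → Set Ω := fun δ => D ⁻¹' {δ} ∩ X ⁻¹' {x | (δ, x) ∈ T} with hsdef
  have hslice : ∀ δ : ℕ, MeasurableSet {x | (δ, x) ∈ T} := fun δ =>
    measurable_prodMk_left hT
  have hset : (fun ω => (D ω, X ω)) ⁻¹' T = ⋃ δ, s δ := by
    ext ω
    simp only [Set.mem_preimage, Set.mem_iUnion, hsdef, Set.mem_inter_iff,
      Set.mem_singleton_iff, Set.mem_setOf_eq]
    constructor
    · intro hmem; exact ⟨D ω, rfl, hmem⟩
    · rintro ⟨δ, hδ, hmem⟩; rwa [← hδ] at hmem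
  have hmeas : ∀ δ, MeasurableSet (s δ) := fun δ =>
    (hD (measurableSet_singleton δ)).inter (hX (hslice δ))
  have hdisj : Pairwise (Function.onFun Disjoint s) := by
    intro i j hij
    simp only [Function.onFun, hsdef]
    apply Set.disjoint_left.mpr
    rintro ω ⟨hi, -⟩ ⟨hj, -⟩
    simp only [Set.mem_preimage, Set.mem_singleton_iff] at hi hj
    exact hij (hi.symm.trans hj)
  rw [hset, integral_iUnion hmeas hdisj h1.integrableOn,
    integral_iUnion hmeas hdisj h2.integrableOn]
  exact tsum_congr fun δ => h δ _ (hslice δ)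

lemma aux_comap_snd_le {𝓨 𝓧 : Type*} [MeasurableSpace 𝓨] [MeasurableSpace 𝓧]
    {W : Ω → 𝓨} {X : Ω → 𝓧} :
    MeasurableSpace.comap X inferInstance ≤
      MeasurableSpace.comap (fun ω => (W ω, X ω)) inferInstance := by
  rintro t ⟨S, hS, rfl⟩
  exact ⟨Prod.snd ⁻¹' S, measurable_snd hS, rfl⟩

/-- If `1_A` is conditionally independent of `D` given `X` (expressed through the product
formula for conditional expectations), then conditioning on `(D, X)` is the same as
conditioning on `X`. -/
lemma aux_condexp_prod_eq_condexp {𝓧 : Type*} [MeasurableSpace 𝓧]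
    {D : Ω → ℕ} {X : Ω → 𝓧} (hD : Measurable D) (hX : Measurable X)
    {A : Set Ω} (hA : MeasurableSet[mΩ] A)
    (hind : ∀ δ : ℕ,
      (μ⟦A ∩ D ⁻¹' {δ} | MeasurableSpace.comap X inferInstance⟧) =ᵐ[μ]
      fun ω => (μ⟦A | MeasurableSpace.comap X inferInstance⟧) ω *
        (μ⟦D ⁻¹' {δ} | MeasurableSpace.comap X inferInstance⟧) ω) :
    (μ⟦A | MeasurableSpace.comap (fun ω => (D ω, X ω)) inferInstance⟧) =ᵐ[μ]
      μ⟦A | MeasurableSpace.comap X inferInstance⟧ := by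
  set 𝔛 : MeasurableSpace Ω := MeasurableSpace.comap X inferInstance with h𝔛
  set 𝔇𝔛 : MeasurableSpace Ω := MeasurableSpace.comap (fun ω => (D ω, X ω)) inferInstance
    with h𝔇𝔛
  letI : MeasurableSpace Ω := mΩ
  have h𝔛le : 𝔛 ≤ mΩ := hX.comap_le
  have h𝔇𝔛le : 𝔇𝔛 ≤ mΩ := (hD.prodMk hX).comap_le
  have h𝔛𝔇𝔛 : 𝔛 ≤ 𝔇𝔛 := aux_comap_snd_le
  set r : Ω → ℝ := μ⟦A | 𝔛⟧ with hrdef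
  have hr_bd : ∀ᵐ ω ∂μ, ‖r ω‖ ≤ 1 := aux_condexp_ind_bound h𝔛le hA
  have hr_int : Integrable r μ := integrable_condExp
  symm
  refine ae_eq_condExp_of_forall_setIntegral_eq h𝔇𝔛le (aux_ind_int hA)
    (fun t _ _ => hr_int.integrableOn) (fun t ht _ => ?_)
    ((stronglyMeasurable_condExp.mono h𝔛𝔇𝔛).aestronglyMeasurable)
  refine aux_setIntegral_comap_prod hD hX hr_int (aux_ind_int hA) (fun δ S hS => ?_) ht
  have hXS : MeasurableSet[𝔛] (X ⁻¹' S) := ⟨S, hS, rfl⟩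
  have hDδ : MeasurableSet[mΩ] (D ⁻¹' {δ}) := hD (measurableSet_singleton δ)
  -- both sides equal ∫_{X⁻¹S} r * p_δ
  have hlhs : ∫ ω in D ⁻¹' {δ} ∩ X ⁻¹' S, r ω ∂μ
      = ∫ ω in X ⁻¹' S, r ω * (μ⟦D ⁻¹' {δ} | 𝔛⟧) ω ∂μ := by
    rw [Set.inter_comm, ← setIntegral_indicator hDδ]
    have heq : ∀ ω, (D ⁻¹' {δ}).indicator r ω
        = r ω * (D ⁻¹' {δ}).indicator (fun _ => (1:ℝ)) ω := by
      intro ω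
      classical
      by_cases hmem : ω ∈ D ⁻¹' {δ} <;> simp [Set.indicator_apply, hmem]
    rw [integral_congr_ae (Eventually.of_forall fun ω => heq ω)]
    have hint : Integrable (fun ω => r ω * (D ⁻¹' {δ}).indicator (fun _ => (1:ℝ)) ω) μ :=
      (aux_ind_int hDδ).bdd_mul hr_int.aestronglyMeasurable hr_bd
    rw [← setIntegral_condExp h𝔛le hint hXS]
    refine setIntegral_congr_ae (h𝔛le _ hXS) ?_
    filter_upwards [condExp_stronglyMeasurable_mul_of_bound h𝔛le
      stronglyMeasurable_condExp (aux_ind_int hDδ) 1 hr_bd] with ω hω _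
    exact hω
  have hrhs : ∫ ω in D ⁻¹' {δ} ∩ X ⁻¹' S, A.indicator (fun _ => (1:ℝ)) ω ∂μ
      = ∫ ω in X ⁻¹' S, r ω * (μ⟦D ⁻¹' {δ} | 𝔛⟧) ω ∂μ := by
    rw [Set.inter_comm, ← setIntegral_indicator hDδ]
    have heq : (D ⁻¹' {δ}).indicator (A.indicator (fun _ => (1:ℝ)))
        = (A ∩ D ⁻¹' {δ}).indicator (fun _ => (1:ℝ)) := by
      rw [Set.indicator_indicator, Set.inter_comm]
    rw [heq, ← setIntegral_condExp h𝔛le (aux_ind_int (hA.inter hDδ)) hXS]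
    refine setIntegral_congr_ae (h𝔛le _ hXS) ?_
    filter_upwards [hind δ] with ω hω _
    exact hω
  rw [hlhs, hrhs]

end Part2

/-- Under Assumptions 1.1–1.4, for every `a ∈ ℝ` and `(d, d') ∈ {0,1}²`,
the c.d.f. of the potential outcome `Y(d, M(d'))` at `a` is identified as
`P(Y(d, M(d')) ≤ a) = E[g_{d,d',a}(X)]`, where `g` is (a measurable version of)
`E[F_a(d, M, X) | D = d', X = x]`, `F_a(D,M,X)` being a version of `P(Y ≤ a | D, M, X)`. -/
theorem statement_0
    {Ω 𝓜 𝓧 : Type*} [MeasurableSpace Ω] [StandardBorelSpace Ω]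
    [MeasurableSpace 𝓜] [Countable 𝓜] [MeasurableSingletonClass 𝓜] [MeasurableSpace 𝓧]
    (P : Measure Ω) [IsProbabilityMeasure P]
    (Y : Ω → ℝ) (D : Ω → ℕ) (M : Ω → 𝓜) (X : Ω → 𝓧)
    (hY : Measurable Y) (hD : Measurable D) (hM : Measurable M) (hX : Measurable X)
    (hD01 : ∀ ω, D ω ≤ 1)
    -- potential outcomes and potential mediators
    (Ypot : ℕ → 𝓜 → Ω → ℝ) (Mpot : ℕ → Ω → 𝓜)
    (hYpot : ∀ d m, Measurable (Ypot d m)) (hMpot : ∀ d, Measurable (Mpot d))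
    -- Assumption 1.1 (consistency / SUTVA)
    (hcons_M : ∀ d ω, D ω = d → Mpot d ω = M ω)
    (hcons_Y : ∀ d m ω, D ω = d → M ω = m → Ypot d m ω = Y ω)
    -- Assumption 1.2 : (Y(d,m), M(d')) ⫫ D | X
    (hA2 : ∀ d ≤ 1, ∀ d' ≤ 1, ∀ m : 𝓜,
      CondIndepFun (MeasurableSpace.comap X inferInstance) hX.comap_le
        (fun ω => (Ypot d m ω, Mpot d' ω)) D P)
    -- Assumption 1.3 : Y(d,m) ⫫ M(d') | (D, X)
    (hA3 : ∀ d ≤ 1, ∀ d' ≤ 1, ∀ m : 𝓜,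
      CondIndepFun (MeasurableSpace.comap (fun ω => (D ω, X ω)) inferInstance)
        (hD.prodMk hX).comap_le (Ypot d m) (Mpot d') P)
    -- Assumption 1.4 (common support) : P(D = d | M, X) > 0 a.s.
    (hA4 : ∀ d ≤ 1, ∀ᵐ ω ∂P,
      0 < (P[(fun ω' => if D ω' = d then (1:ℝ) else 0) |
        MeasurableSpace.comap (fun ω' => (M ω', X ω')) inferInstance]) ω)
    -- threshold and treatment indices
    (a : ℝ) (d d' : ℕ) (hd : d ≤ 1) (hd' : d' ≤ 1)
    -- F_a : version of P(Y ≤ a | D, M, X)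
    (F : ℕ → 𝓜 → 𝓧 → ℝ)
    (hFmeas : Measurable (fun t : ℕ × 𝓜 × 𝓧 => F t.1 t.2.1 t.2.2))
    (hFver : (fun ω => F (D ω) (M ω) (X ω)) =ᵐ[P]
      P[(fun ω' => if Y ω' ≤ a then (1:ℝ) else 0) |
        MeasurableSpace.comap (fun ω' => (D ω', M ω', X ω')) inferInstance])
    -- g_{d,·,a} : version of E[F_a(d, M, X) | D, X]
    (g : ℕ → 𝓧 → ℝ)
    (hgmeas : Measurable (fun t : ℕ × 𝓧 => g t.1 t.2))
    (hgver : (fun ω => g (D ω) (X ω)) =ᵐ[P]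
      P[(fun ω' => F d (M ω') (X ω')) |
        MeasurableSpace.comap (fun ω' => (D ω', X ω')) inferInstance]) :
    (P {ω | Ypot d (Mpot d' ω) ω ≤ a}).toReal = ∫ ω, g d' (X ω) ∂P := by
  classical
  letI mΩ : MeasurableSpace Ω := inferInstance
  set 𝔛 : MeasurableSpace Ω := MeasurableSpace.comap X inferInstance with h𝔛def
  set 𝔇𝔛 : MeasurableSpace Ω := MeasurableSpace.comap (fun ω => (D ω, X ω)) inferInstance
    with h𝔇𝔛def
  set 𝔐𝔛 : MeasurableSpace Ω := MeasurableSpace.comap (fun ω => (M ω, X ω)) inferInstance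
    with h𝔐𝔛def
  set 𝔇𝔐𝔛 : MeasurableSpace Ω :=
    MeasurableSpace.comap (fun ω => (D ω, M ω, X ω)) inferInstance with h𝔇𝔐𝔛def
  letI : MeasurableSpace Ω := mΩ
  have h𝔛le : 𝔛 ≤ mΩ := hX.comap_le
  have h𝔇𝔛le : 𝔇𝔛 ≤ mΩ := (hD.prodMk hX).comap_le
  have h𝔐𝔛le : 𝔐𝔛 ≤ mΩ := (hM.prodMk hX).comap_le
  have h𝔇𝔐𝔛le : 𝔇𝔐𝔛 ≤ mΩ := (hD.prodMk (hM.prodMk hX)).comap_le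
  have h𝔛𝔇𝔛 : 𝔛 ≤ 𝔇𝔛 := aux_comap_snd_le
  have h𝔛𝔐𝔛 : 𝔛 ≤ 𝔐𝔛 := aux_comap_snd_le
  have h𝔛𝔇𝔐𝔛 : 𝔛 ≤ 𝔇𝔐𝔛 := by
    rintro t ⟨S, hS, rfl⟩
    exact ⟨Prod.snd ⁻¹' (Prod.snd ⁻¹' S), measurable_snd (measurable_snd hS), rfl⟩
  -- events
  set IYa : Set Ω := Y ⁻¹' Set.Iic a with hIYadef
  have hIYa : MeasurableSet[mΩ] IYa := hY measurableSet_Iic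
  set A : 𝓜 → Set Ω := fun m => Ypot d m ⁻¹' Set.Iic a with hAdef
  have hA : ∀ m, MeasurableSet[mΩ] (A m) := fun m => hYpot d m measurableSet_Iic
  set B : 𝓜 → Set Ω := fun m => Mpot d' ⁻¹' {m} with hBdef
  have hB : ∀ m, MeasurableSet[mΩ] (B m) := fun m => hMpot d' (measurableSet_singleton m)
  set B' : 𝓜 → Set Ω := fun m => Mpot d ⁻¹' {m} with hB'def
  have hB' : ∀ m, MeasurableSet[mΩ] (B' m) := fun m => hMpot d (measurableSet_singleton m)
  set Dset : ℕ → Set Ω := fun δ => D ⁻¹' {δ} with hDsetdef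
  have hDset : ∀ δ, MeasurableSet[mΩ] (Dset δ) := fun δ => hD (measurableSet_singleton δ)
  have hDset𝔇𝔛 : ∀ δ, MeasurableSet[𝔇𝔛] (Dset δ) := fun δ =>
    ⟨Prod.fst ⁻¹' {δ}, measurable_fst (measurableSet_singleton δ), rfl⟩
  have hDset𝔇𝔐𝔛 : ∀ δ, MeasurableSet[𝔇𝔐𝔛] (Dset δ) := fun δ =>
    ⟨Prod.fst ⁻¹' {δ}, measurable_fst (measurableSet_singleton δ), rfl⟩
  set Mm : 𝓜 → Set Ω := fun m => M ⁻¹' {m} with hMmdef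
  have hMm : ∀ m, MeasurableSet[mΩ] (Mm m) := fun m => hM (measurableSet_singleton m)
  have hMm𝔐𝔛 : ∀ m, MeasurableSet[𝔐𝔛] (Mm m) := fun m =>
    ⟨Prod.fst ⁻¹' {m}, measurable_fst (measurableSet_singleton m), rfl⟩
  have hMmDd𝔇𝔐𝔛 : ∀ (m : 𝓜) (δ : ℕ), MeasurableSet[𝔇𝔐𝔛] (Mm m ∩ Dset δ) := fun m δ =>
    ⟨((fun t : ℕ × 𝓜 × 𝓧 => t.2.1) ⁻¹' {m}) ∩ ((fun t : ℕ × 𝓜 × 𝓧 => t.1) ⁻¹' {δ}),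
      ((measurable_fst.comp measurable_snd) (measurableSet_singleton m)).inter
        (measurable_fst (measurableSet_singleton δ)), rfl⟩
  -- conditional expectations
  set r : 𝓜 → Ω → ℝ := fun m => P⟦A m | 𝔛⟧ with hrdef
  set q : 𝓜 → Ω → ℝ := fun m => P⟦B m | 𝔛⟧ with hqdef
  set p : ℕ → Ω → ℝ := fun δ => P⟦Dset δ | 𝔛⟧ with hpdef
  set τ : 𝓜 → Ω → ℝ := fun m => P⟦Mm m ∩ Dset d | 𝔛⟧ with hτdef
  set σ : 𝓜 → Ω → ℝ := fun m => P⟦Mm m ∩ Dset d' | 𝔛⟧ with hσdef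
  -- if-then-else versus indicators
  have hifY : (fun ω' => if Y ω' ≤ a then (1:ℝ) else 0) = IYa.indicator (fun _ => (1:ℝ)) := by
    funext ω; rw [Set.indicator_apply]; simp [hIYadef]
  have hifD : ∀ δ : ℕ, (fun ω' => if D ω' = δ then (1:ℝ) else 0)
      = (Dset δ).indicator (fun _ => (1:ℝ)) := by
    intro δ; funext ω; rw [Set.indicator_apply]; simp [hDsetdef]
  rw [hifY] at hFver
  -- common support: positivity of conditional probabilities given (M, X)
  have hA4' : ∀ δ, δ ≤ 1 → ∀ᵐ ω ∂P,
      0 < (P[(Dset δ).indicator (fun _ => (1:ℝ)) | 𝔐𝔛]) ω := by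
    intro δ hδ
    have h := hA4 δ hδ
    rwa [hifD δ] at h
  -- positivity of p
  have hppos : ∀ δ, δ ≤ 1 → ∀ᵐ ω ∂P, 0 < p δ ω := by
    intro δ hδ
    have h1 : P[P[(Dset δ).indicator (fun _ => (1:ℝ)) | 𝔐𝔛] | 𝔛] =ᵐ[P] p δ :=
      condExp_condExp_of_le h𝔛𝔐𝔛 h𝔐𝔛le
    have h2 := aux_condexp_pos h𝔛le (integrable_condExp (m := 𝔐𝔛)) (hA4' δ hδ)
    filter_upwards [h1, h2] with ω hω1 hω2
    rwa [hω1] at hω2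
  -- a null set trick based on common support
  have hnullMX : ∀ (δ : ℕ), δ ≤ 1 → ∀ (E : Set Ω), MeasurableSet[𝔐𝔛] E →
      P (E ∩ Dset δ) = 0 → P E = 0 := by
    intro δ hδ E hE𝔐𝔛 hzero
    have hE : MeasurableSet[mΩ] E := h𝔐𝔛le _ hE𝔐𝔛
    refine aux_null_of_setIntegral_zero (integrable_condExp (m := 𝔐𝔛)) (hA4' δ hδ) hE ?_
    rw [setIntegral_condExp h𝔐𝔛le (aux_ind_int (hDset δ)) hE𝔐𝔛,
      aux_setIntegral_ind hE (hDset δ), hzero, ENNReal.toReal_zero]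
  -- F (d, M, X) is a.e. in [0,1]
  have hFdm : Measurable (fun pr : 𝓜 × 𝓧 => F d pr.1 pr.2) :=
    hFmeas.comp (measurable_const.prodMk measurable_id)
  have hFdM : Measurable (fun ω => F d (M ω) (X ω)) := hFdm.comp (hM.prodMk hX)
  have hE1bd : ∀ᵐ ω ∂P, 0 ≤ (P[IYa.indicator (fun _ => (1:ℝ)) | 𝔇𝔐𝔛]) ω ∧
      (P[IYa.indicator (fun _ => (1:ℝ)) | 𝔇𝔐𝔛]) ω ≤ 1 := by
    filter_upwards [aux_condexp_ind_nonneg (μ := P) (m := 𝔇𝔐𝔛) (s := IYa),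
      aux_condexp_ind_le_one h𝔇𝔐𝔛le hIYa] with ω h1 h2
    exact ⟨h1, h2⟩
  have hFbd : ∀ᵐ ω ∂P, 0 ≤ F d (M ω) (X ω) ∧ F d (M ω) (X ω) ≤ 1 := by
    set Tbad : Set (𝓜 × 𝓧) := {pr | F d pr.1 pr.2 < 0 ∨ 1 < F d pr.1 pr.2} with hTbaddef
    have hTbad : MeasurableSet Tbad := by
      have : Tbad = (fun pr : 𝓜 × 𝓧 => F d pr.1 pr.2) ⁻¹' (Set.Iio 0 ∪ Set.Ioi 1) := by
        ext pr; simp [hTbaddef]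
      rw [this]
      exact hFdm (measurableSet_Iio.union measurableSet_Ioi)
    set E : Set Ω := (fun ω => (M ω, X ω)) ⁻¹' Tbad with hEdef
    have hE𝔐𝔛 : MeasurableSet[𝔐𝔛] E := ⟨Tbad, hTbad, rfl⟩
    have hEDd : P (E ∩ Dset d) = 0 := by
      have hae : ∀ᵐ ω ∂P, ω ∉ E ∩ Dset d := by
        filter_upwards [hFver, hE1bd] with ω hver hbd
        rintro ⟨hE, hDd⟩
        have hDd' : D ω = d := hDd
        have : F d (M ω) (X ω) = (P[IYa.indicator (fun _ => (1:ℝ)) | 𝔇𝔐𝔛]) ω := by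
          rw [← hDd']; exact hver
        simp only [hEdef, hTbaddef, Set.mem_preimage, Set.mem_setOf_eq] at hE
        rcases hE with h | h
        · rw [this] at h; linarith [hbd.1]
        · rw [this] at h; linarith [hbd.2]
      have := ae_iff.mp hae
      simpa using this
    have hEnull : P E = 0 := hnullMX d hd E hE𝔐𝔛 hEDd
    have : ∀ᵐ ω ∂P, ω ∉ E := by
      rw [ae_iff]
      simpa using hEnull
    filter_upwards [this] with ω hω
    simp only [hEdef, hTbaddef, Set.mem_preimage, Set.mem_setOf_eq, not_or, not_lt] at hω
    exact ⟨hω.1, hω.2⟩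
  have hFint : Integrable (fun ω => F d (M ω) (X ω)) P := by
    refine Integrable.mono' (integrable_const (1:ℝ)) hFdM.aestronglyMeasurable ?_
    filter_upwards [hFbd] with ω hω
    rw [Real.norm_eq_abs, abs_le]
    exact ⟨by linarith [hω.1], hω.2⟩
  -- Step 1: E[1_{A m} | D, X] = r m  (uses A2)
  have hS1 : ∀ m : 𝓜, (P⟦A m | 𝔇𝔛⟧) =ᵐ[P] r m := by
    intro m
    refine aux_condexp_prod_eq_condexp hD hX (hA m) (fun δ => ?_)
    have hCI : CondIndepFun 𝔛 h𝔛le (Ypot d m) D P := by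
      have h := (hA2 d hd d' hd' m).comp measurable_fst measurable_id
      exact h
    exact (condIndepFun_iff_condExp_inter_preimage_eq_mul (hYpot d m) hD).mp hCI
      (Set.Iic a) {δ} measurableSet_Iic (measurableSet_singleton δ)
  -- Step 2: E[1_{B m} | D, X] = q m  (uses A2)
  have hS2 : ∀ m : 𝓜, (P⟦B m | 𝔇𝔛⟧) =ᵐ[P] q m := by
    intro m
    refine aux_condexp_prod_eq_condexp hD hX (hB m) (fun δ => ?_)
    have hCI : CondIndepFun 𝔛 h𝔛le (Mpot d') D P := by
      have h := (hA2 d hd d' hd' m).comp measurable_snd measurable_id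
      exact h
    exact (condIndepFun_iff_condExp_inter_preimage_eq_mul (hMpot d') hD).mp hCI
      {m} {δ} (measurableSet_singleton m) (measurableSet_singleton δ)
  -- analogue for B' (with d' := d)
  have hS2' : ∀ m : 𝓜, (P⟦B' m | 𝔇𝔛⟧) =ᵐ[P] P⟦B' m | 𝔛⟧ := by
    intro m
    refine aux_condexp_prod_eq_condexp hD hX (hB' m) (fun δ => ?_)
    have hCI : CondIndepFun 𝔛 h𝔛le (Mpot d) D P := by
      have h := (hA2 d hd d hd m).comp measurable_snd measurable_id
      exact h
    exact (condIndepFun_iff_condExp_inter_preimage_eq_mul (hMpot d) hD).mp hCI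
      {m} {δ} (measurableSet_singleton m) (measurableSet_singleton δ)
  -- Step 3: E[1_{A m ∩ B m} | D, X] = r m * q m  (uses A3)
  have hS3 : ∀ m : 𝓜, (P⟦A m ∩ B m | 𝔇𝔛⟧) =ᵐ[P] fun ω => r m ω * q m ω := by
    intro m
    have h := (condIndepFun_iff_condExp_inter_preimage_eq_mul (hYpot d m) (hMpot d')).mp
      (hA3 d hd d' hd' m) (Set.Iic a) {m} measurableSet_Iic (measurableSet_singleton m)
    filter_upwards [h, hS1 m, hS2 m] with ω h1 h2 h3
    rw [h1, h2, h3]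
  -- version with B'
  have hS3' : ∀ m : 𝓜, (P⟦A m ∩ B' m | 𝔇𝔛⟧) =ᵐ[P]
      fun ω => r m ω * (P⟦B' m | 𝔇𝔛⟧) ω := by
    intro m
    have h := (condIndepFun_iff_condExp_inter_preimage_eq_mul (hYpot d m) (hMpot d)).mp
      (hA3 d hd d hd m) (Set.Iic a) {m} measurableSet_Iic (measurableSet_singleton m)
    filter_upwards [h, hS1 m] with ω h1 h2
    rw [h1, h2]
  -- Step 4: P(A m ∩ B m) = ∫ r m * q m
  have hS4 : ∀ m : 𝓜, (P (A m ∩ B m)).toReal = ∫ ω, r m ω * q m ω ∂P := by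
    intro m
    have h0 : ∫ ω, (A m ∩ B m).indicator (fun _ => (1:ℝ)) ω ∂P = (P (A m ∩ B m)).toReal := by
      rw [integral_indicator ((hA m).inter (hB m)), setIntegral_const, smul_eq_mul, mul_one]
      rfl
    rw [← h0, ← integral_condExp h𝔇𝔛le (f := (A m ∩ B m).indicator fun _ => (1:ℝ)) (m := 𝔇𝔛)]
    exact integral_congr_ae (hS3 m)
  -- measurability of X relative to 𝔛, and of F d m ∘ X, g d' ∘ X
  have hX𝔛 : Measurable[𝔛] X := fun s hs => ⟨s, hs, rfl⟩
  have hFmX : ∀ m : 𝓜, StronglyMeasurable[𝔛] (fun ω => F d m (X ω)) := by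
    intro m
    have h1 : Measurable (fun x : 𝓧 => F d m x) :=
      hFmeas.comp (measurable_const.prodMk (measurable_const.prodMk measurable_id))
    exact (h1.comp hX𝔛).stronglyMeasurable
  have hgX : StronglyMeasurable[𝔛] (fun ω => g d' (X ω)) := by
    have h1 : Measurable (fun x : 𝓧 => g d' x) :=
      hgmeas.comp (measurable_const.prodMk measurable_id)
    exact (h1.comp hX𝔛).stronglyMeasurable
  -- Step 5: σ m = q m * p d'
  have hS5 : ∀ m : 𝓜, σ m =ᵐ[P] fun ω => q m ω * p d' ω := by
    intro m
    have e0 : (Mm m ∩ Dset d').indicator (fun _ => (1:ℝ))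
        = (Dset d').indicator ((B m).indicator (fun _ => (1:ℝ))) := by
      funext ω
      by_cases h1 : ω ∈ Dset d'
      · have hMeq : Mpot d' ω = M ω := hcons_M d' ω h1
        by_cases h2 : ω ∈ Mm m
        · have h2' : M ω = m := h2
          have : ω ∈ B m := by
            simp only [hBdef, Set.mem_preimage, Set.mem_singleton_iff, hMeq, h2']
          simp [Set.indicator_apply, h1, h2, this]
        · have : ω ∉ B m := by
            simp only [hBdef, Set.mem_preimage, Set.mem_singleton_iff, hMeq]
            simpa [hMmdef, Set.mem_preimage, Set.mem_singleton_iff] using h2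
          simp [Set.indicator_apply, h1, h2, this]
      · simp [Set.indicator_apply, h1]
    have e1 := aux_tower_ind (μ := P) h𝔛𝔇𝔛 h𝔇𝔛le (hDset𝔇𝔛 d') (aux_ind_int (hB m))
    have e2 : P[(Dset d').indicator (P⟦B m | 𝔇𝔛⟧)|𝔛] =ᵐ[P] P[(Dset d').indicator (q m)|𝔛] :=
      condExp_congr_ae (aux_ind_congr (hS2 m))
    have e3 : (Dset d').indicator (q m)
        = fun ω => q m ω * (Dset d').indicator (fun _ => (1:ℝ)) ω := by
      funext ω
      by_cases h1 : ω ∈ Dset d' <;> simp [Set.indicator_apply, h1]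
    have e4 : P[fun ω => q m ω * (Dset d').indicator (fun _ => (1:ℝ)) ω|𝔛] =ᵐ[P]
        fun ω => q m ω * p d' ω :=
      condExp_stronglyMeasurable_mul_of_bound h𝔛le stronglyMeasurable_condExp
        (aux_ind_int (hDset d')) 1 (aux_condexp_ind_bound h𝔛le (hB m))
    calc σ m = P[(Dset d').indicator ((B m).indicator (fun _ => (1:ℝ)))|𝔛] := by
          show P⟦Mm m ∩ Dset d' | 𝔛⟧ = _
          rw [e0]
      _ =ᵐ[P] P[(Dset d').indicator (P⟦B m | 𝔇𝔛⟧)|𝔛] := e1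
      _ =ᵐ[P] P[(Dset d').indicator (q m)|𝔛] := e2
      _ = P[fun ω => q m ω * (Dset d').indicator (fun _ => (1:ℝ)) ω|𝔛] := by rw [e3]
      _ =ᵐ[P] fun ω => q m ω * p d' ω := e4
  -- Step 6: F(d,m,X) * τ m = r m * τ m a.e.
  have hS6 : ∀ m : 𝓜, (fun ω => F d m (X ω) * τ m ω) =ᵐ[P] fun ω => r m ω * τ m ω := by
    intro m
    -- the common middle quantity
    set J : Ω → ℝ := P[(Mm m ∩ Dset d).indicator (IYa.indicator (fun _ => (1:ℝ)))|𝔛] with hJdef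
    -- Way 1 : J = F(d,m,X) * τ m
    have ht3 : (Mm m ∩ Dset d).indicator (fun ω => F (D ω) (M ω) (X ω))
        = fun ω => F d m (X ω) * (Mm m ∩ Dset d).indicator (fun _ => (1:ℝ)) ω := by
      funext ω
      by_cases h1 : ω ∈ Mm m ∩ Dset d
      · have hDeq : D ω = d := h1.2
        have hMeq : M ω = m := h1.1
        simp [Set.indicator_apply, h1, hDeq, hMeq]
      · simp [Set.indicator_apply, h1]
    have hint1 : Integrable ((Mm m ∩ Dset d).indicator (fun ω => F (D ω) (M ω) (X ω))) P :=
      (integrable_condExp.indicator ((hMm m).inter (hDset d))).congr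
        (aux_ind_congr hFver.symm)
    have hint1' : Integrable (fun ω => F d m (X ω) *
        (Mm m ∩ Dset d).indicator (fun _ => (1:ℝ)) ω) P := ht3 ▸ hint1
    have hW1 : J =ᵐ[P] fun ω => F d m (X ω) * τ m ω := by
      calc J =ᵐ[P] P[(Mm m ∩ Dset d).indicator
            (P[IYa.indicator (fun _ => (1:ℝ))|𝔇𝔐𝔛])|𝔛] :=
          aux_tower_ind (μ := P) h𝔛𝔇𝔐𝔛 h𝔇𝔐𝔛le (hMmDd𝔇𝔐𝔛 m d) (aux_ind_int hIYa)
        _ =ᵐ[P] P[(Mm m ∩ Dset d).indicator (fun ω => F (D ω) (M ω) (X ω))|𝔛] :=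
          condExp_congr_ae (aux_ind_congr hFver.symm)
        _ = P[fun ω => F d m (X ω) * (Mm m ∩ Dset d).indicator (fun _ => (1:ℝ)) ω|𝔛] := by
          rw [ht3]
        _ =ᵐ[P] fun ω => F d m (X ω) * τ m ω :=
          condExp_mul_of_stronglyMeasurable_left (hFmX m) hint1' (aux_ind_int ((hMm m).inter (hDset d)))
    -- Way 2 : J = r m * τ m
    have hu0 : (Mm m ∩ Dset d).indicator (IYa.indicator (fun _ => (1:ℝ)))
        = (Dset d).indicator ((A m ∩ B' m).indicator (fun _ => (1:ℝ))) := by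
      funext ω
      by_cases hDd : ω ∈ Dset d
      · have hDeq : D ω = d := hDd
        have hMeq : Mpot d ω = M ω := hcons_M d ω hDeq
        by_cases hMmem : ω ∈ Mm m
        · have hMeq' : M ω = m := hMmem
          have hYeq : Ypot d m ω = Y ω := hcons_Y d m ω hDeq hMeq'
          have hB'mem : ω ∈ B' m := by
            simp only [hB'def, Set.mem_preimage, Set.mem_singleton_iff, hMeq, hMeq']
          by_cases hYmem : ω ∈ IYa
          · have hAmem : ω ∈ A m := by
              simp only [hAdef, Set.mem_preimage, Set.mem_Iic, hYeq]
              exact hYmem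
            simp [Set.indicator_apply, hDd, hMmem, hYmem, hAmem, hB'mem]
          · have hAmem : ω ∉ A m := by
              simp only [hAdef, Set.mem_preimage, Set.mem_Iic, hYeq]
              exact hYmem
            simp [Set.indicator_apply, hDd, hMmem, hYmem, hAmem]
        · have hB'mem : ω ∉ B' m := by
            simp only [hB'def, Set.mem_preimage, Set.mem_singleton_iff, hMeq]
            simpa [hMmdef, Set.mem_preimage, Set.mem_singleton_iff] using hMmem
          simp [Set.indicator_apply, hDd, hMmem, hB'mem]
      · simp [Set.indicator_apply, hDd]
    have hu6 : (Dset d).indicator ((B' m).indicator (fun _ => (1:ℝ)))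
        = (Mm m ∩ Dset d).indicator (fun _ => (1:ℝ)) := by
      funext ω
      by_cases hDd : ω ∈ Dset d
      · have hDeq : D ω = d := hDd
        have hMeq : Mpot d ω = M ω := hcons_M d ω hDeq
        by_cases hMmem : ω ∈ Mm m
        · have hB'mem : ω ∈ B' m := by
            simp only [hB'def, Set.mem_preimage, Set.mem_singleton_iff, hMeq]
            exact hMmem
          simp [Set.indicator_apply, hDd, hMmem, hB'mem]
        · have hB'mem : ω ∉ B' m := by
            simp only [hB'def, Set.mem_preimage, Set.mem_singleton_iff, hMeq]
            simpa [hMmdef, Set.mem_preimage, Set.mem_singleton_iff] using hMmem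
          simp [Set.indicator_apply, hDd, hMmem, hB'mem]
      · simp [Set.indicator_apply, hDd]
    set Pb : Ω → ℝ := P⟦B' m | 𝔇𝔛⟧ with hPbdef
    have hu3 : (Dset d).indicator (fun ω => r m ω * Pb ω)
        = fun ω => r m ω * (Dset d).indicator Pb ω := by
      funext ω
      by_cases hDd : ω ∈ Dset d <;> simp [Set.indicator_apply, hDd]
    have hintPb : Integrable ((Dset d).indicator Pb) P :=
      integrable_condExp.indicator (hDset d)
    have hu5 : P[(Dset d).indicator Pb|𝔛] =ᵐ[P] τ m := by
      have h := (aux_tower_ind (μ := P) h𝔛𝔇𝔛 h𝔇𝔛le (hDset𝔇𝔛 d)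
        (aux_ind_int (hB' m))).symm
      rw [hu6] at h
      exact h
    have hW2 : J =ᵐ[P] fun ω => r m ω * τ m ω := by
      calc J = P[(Dset d).indicator ((A m ∩ B' m).indicator (fun _ => (1:ℝ)))|𝔛] := by
            rw [hJdef, hu0]
        _ =ᵐ[P] P[(Dset d).indicator (P⟦A m ∩ B' m | 𝔇𝔛⟧)|𝔛] :=
            aux_tower_ind (μ := P) h𝔛𝔇𝔛 h𝔇𝔛le (hDset𝔇𝔛 d)
              (aux_ind_int ((hA m).inter (hB' m)))
        _ =ᵐ[P] P[(Dset d).indicator (fun ω => r m ω * Pb ω)|𝔛] :=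
            condExp_congr_ae (aux_ind_congr (hS3' m))
        _ = P[fun ω => r m ω * (Dset d).indicator Pb ω|𝔛] := by rw [hu3]
        _ =ᵐ[P] fun ω => r m ω * (P[(Dset d).indicator Pb|𝔛]) ω :=
            condExp_stronglyMeasurable_mul_of_bound h𝔛le stronglyMeasurable_condExp
              hintPb 1 (aux_condexp_ind_bound h𝔛le (hA m))
        _ =ᵐ[P] fun ω => r m ω * τ m ω := by
            filter_upwards [hu5] with ω hω
            rw [hω]
    exact hW1.symm.trans hW2
  -- Step 7: where τ m = 0, also σ m = 0 (uses common support)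
  have hS7 : ∀ m : 𝓜, ∀ᵐ ω ∂P, τ m ω = 0 → σ m ω = 0 := by
    intro m
    have hSm𝔛 : MeasurableSet[𝔛] (τ m ⁻¹' {0}) :=
      stronglyMeasurable_condExp.measurable (measurableSet_singleton 0)
    set S : Set Ω := τ m ⁻¹' {0} with hSdef
    have hS : MeasurableSet[mΩ] S := h𝔛le _ hSm𝔛
    have h1 : P (S ∩ (Mm m ∩ Dset d)) = 0 := by
      have hint : ∫ ω in S, τ m ω ∂P = (P (S ∩ (Mm m ∩ Dset d))).toReal := by
        rw [hτdef]
        rw [setIntegral_condExp h𝔛le (aux_ind_int ((hMm m).inter (hDset d))) hSm𝔛]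
        exact aux_setIntegral_ind hS ((hMm m).inter (hDset d))
      have hzero : ∫ ω in S, τ m ω ∂P = 0 := by
        rw [setIntegral_congr_fun hS (fun ω hω => hω)]
        simp
      rw [hzero] at hint
      have := hint.symm
      exact (ENNReal.toReal_eq_zero_iff _).mp this |>.resolve_right (measure_ne_top _ _)
    have h2 : P (S ∩ Mm m) = 0 := by
      refine hnullMX d hd (S ∩ Mm m) ((h𝔛𝔐𝔛 _ hSm𝔛).inter (hMm𝔐𝔛 m)) ?_
      rw [Set.inter_assoc]
      exact h1
    have h3 : ∫ ω in S, σ m ω ∂P = 0 := by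
      rw [hσdef, setIntegral_condExp h𝔛le (aux_ind_int ((hMm m).inter (hDset d'))) hSm𝔛,
        aux_setIntegral_ind hS ((hMm m).inter (hDset d'))]
      have : P (S ∩ (Mm m ∩ Dset d')) = 0 := by
        refine measure_mono_null ?_ h2
        intro ω hω
        exact ⟨hω.1, hω.2.1⟩
      rw [this, ENNReal.toReal_zero]
    have h4 : σ m =ᵐ[P.restrict S] 0 := by
      refine (integral_eq_zero_iff_of_nonneg_ae ?_ integrable_condExp.integrableOn).mp h3
      exact ae_restrict_of_ae (aux_condexp_ind_nonneg (μ := P) (m := 𝔛))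
    have h5 : ∀ᵐ ω ∂P, ω ∈ S → σ m ω = 0 := (ae_restrict_iff' hS).mp h4
    filter_upwards [h5] with ω hω hτω
    exact hω hτω
  -- Step 8: F(d,m,X) * σ m = r m * σ m a.e.
  have hS8 : ∀ m : 𝓜, (fun ω => F d m (X ω) * σ m ω) =ᵐ[P] fun ω => r m ω * σ m ω := by
    intro m
    filter_upwards [hS6 m, hS7 m] with ω h6 h7
    by_cases hτ : τ m ω = 0
    · rw [h7 hτ, mul_zero, mul_zero]
    · have : F d m (X ω) = r m ω := mul_right_cancel₀ hτ h6
      rw [this]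
  -- Step 8': condexp of F(d,m,X) 1_{M = m, D = d'} equals r m * q m * p d'
  have hf1meas : ∀ m : 𝓜, Measurable (fun ω => F d m (X ω) *
      (Mm m ∩ Dset d').indicator (fun _ => (1:ℝ)) ω) := by
    intro m
    have h1 : Measurable (fun x : 𝓧 => F d m x) :=
      hFmeas.comp (measurable_const.prodMk (measurable_const.prodMk measurable_id))
    exact (h1.comp hX).mul (measurable_const.indicator ((hMm m).inter (hDset d')))
  have hf1bd : ∀ m : 𝓜, ∀ᵐ ω ∂P, 0 ≤ F d m (X ω) *
      (Mm m ∩ Dset d').indicator (fun _ => (1:ℝ)) ω ∧ F d m (X ω) *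
      (Mm m ∩ Dset d').indicator (fun _ => (1:ℝ)) ω ≤ 1 := by
    intro m
    filter_upwards [hFbd] with ω hω
    by_cases h1 : ω ∈ Mm m ∩ Dset d'
    · have hMeq : M ω = m := h1.1
      rw [Set.indicator_of_mem h1, mul_one, ← hMeq]
      exact hω
    · rw [Set.indicator_of_notMem h1, mul_zero]
      norm_num
  have hf1int : ∀ m : 𝓜, Integrable (fun ω => F d m (X ω) *
      (Mm m ∩ Dset d').indicator (fun _ => (1:ℝ)) ω) P := by
    intro m
    refine Integrable.mono' (integrable_const (1:ℝ)) (hf1meas m).aestronglyMeasurable ?_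
    filter_upwards [hf1bd m] with ω hω
    rw [Real.norm_eq_abs, abs_le]
    exact ⟨by linarith [hω.1], hω.2⟩
  have hS8' : ∀ m : 𝓜,
      P[fun ω => F d m (X ω) * (Mm m ∩ Dset d').indicator (fun _ => (1:ℝ)) ω|𝔛] =ᵐ[P]
        fun ω => r m ω * q m ω * p d' ω := by
    intro m
    have hint1 := hf1int m
    calc P[fun ω => F d m (X ω) * (Mm m ∩ Dset d').indicator (fun _ => (1:ℝ)) ω|𝔛]
        =ᵐ[P] fun ω => F d m (X ω) * σ m ω :=
          condExp_mul_of_stronglyMeasurable_left (hFmX m) hint1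
            (aux_ind_int ((hMm m).inter (hDset d')))
      _ =ᵐ[P] fun ω => r m ω * σ m ω := hS8 m
      _ =ᵐ[P] fun ω => r m ω * q m ω * p d' ω := by
          filter_upwards [hS5 m] with ω hω
          rw [hω, mul_assoc]
  -- Step 10: condexp of F(d,M,X) 1_{D = d'} equals g(d',X) * p d'
  have hgint : Integrable (fun ω => g (D ω) (X ω)) P :=
    integrable_condExp.congr hgver.symm
  have hS10 : P[fun ω => F d (M ω) (X ω) * (Dset d').indicator (fun _ => (1:ℝ)) ω|𝔛] =ᵐ[P]
      fun ω => g d' (X ω) * p d' ω := by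
    have e1 : (fun ω => F d (M ω) (X ω) * (Dset d').indicator (fun _ => (1:ℝ)) ω)
        = (Dset d').indicator (fun ω => F d (M ω) (X ω)) := by
      funext ω
      by_cases h1 : ω ∈ Dset d' <;> simp [Set.indicator_apply, h1]
    have e2 : (Dset d').indicator (fun ω => g (D ω) (X ω))
        = fun ω => g d' (X ω) * (Dset d').indicator (fun _ => (1:ℝ)) ω := by
      funext ω
      by_cases h1 : ω ∈ Dset d'
      · have hDeq : D ω = d' := h1
        simp [Set.indicator_apply, h1, hDeq]
      · simp [Set.indicator_apply, h1]
    have hint2 : Integrable (fun ω => g d' (X ω) *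
        (Dset d').indicator (fun _ => (1:ℝ)) ω) P := by
      rw [← e2]
      exact hgint.indicator (hDset d')
    calc P[fun ω => F d (M ω) (X ω) * (Dset d').indicator (fun _ => (1:ℝ)) ω|𝔛]
        = P[(Dset d').indicator (fun ω => F d (M ω) (X ω))|𝔛] := by rw [e1]
      _ =ᵐ[P] P[(Dset d').indicator (P[fun ω => F d (M ω) (X ω)|𝔇𝔛])|𝔛] :=
          aux_tower_ind (μ := P) h𝔛𝔇𝔛 h𝔇𝔛le (hDset𝔇𝔛 d') hFint
      _ =ᵐ[P] P[(Dset d').indicator (fun ω => g (D ω) (X ω))|𝔛] :=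
          condExp_congr_ae (aux_ind_congr hgver.symm)
      _ = P[fun ω => g d' (X ω) * (Dset d').indicator (fun _ => (1:ℝ)) ω|𝔛] := by rw [e2]
      _ =ᵐ[P] fun ω => g d' (X ω) * p d' ω :=
          condExp_mul_of_stronglyMeasurable_left hgX hint2 (aux_ind_int (hDset d'))
  -- pool of a.e. bounds
  have hr01 : ∀ᵐ ω ∂P, ∀ m : 𝓜, 0 ≤ r m ω ∧ r m ω ≤ 1 := by
    rw [ae_all_iff]
    intro m
    filter_upwards [aux_condexp_ind_nonneg (μ := P) (m := 𝔛) (s := A m),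
      aux_condexp_ind_le_one h𝔛le (hA m)] with ω h1 h2
    exact ⟨h1, h2⟩
  have hq01 : ∀ᵐ ω ∂P, ∀ m : 𝓜, 0 ≤ q m ω ∧ q m ω ≤ 1 := by
    rw [ae_all_iff]
    intro m
    filter_upwards [aux_condexp_ind_nonneg (μ := P) (m := 𝔛) (s := B m),
      aux_condexp_ind_le_one h𝔛le (hB m)] with ω h1 h2
    exact ⟨h1, h2⟩
  have hp01 : ∀ᵐ ω ∂P, 0 ≤ p d' ω ∧ p d' ω ≤ 1 := by
    filter_upwards [aux_condexp_ind_nonneg (μ := P) (m := 𝔛) (s := Dset d'),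
      aux_condexp_ind_le_one h𝔛le (hDset d')] with ω h1 h2
    exact ⟨h1, h2⟩
  -- partial sums of q are a.e. bounded by 1
  have hqsum : ∀ᵐ ω ∂P, ∀ s : Finset 𝓜, (∑ m ∈ s, q m ω) ≤ 1 := by
    rw [ae_all_iff]
    intro s
    have hsum : P[∑ m ∈ s, (B m).indicator (fun _ => (1:ℝ))|𝔛] =ᵐ[P]
        ∑ m ∈ s, P⟦B m|𝔛⟧ :=
      condExp_finsetSum (fun m _ => aux_ind_int (hB m)) _
    have hle : (∑ m ∈ s, (B m).indicator (fun _ => (1:ℝ))) ≤ᵐ[P] fun _ => (1:ℝ) := by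
      refine Filter.Eventually.of_forall fun ω => ?_
      have : ∀ m : 𝓜, (B m).indicator (fun _ => (1:ℝ)) ω
          = if Mpot d' ω = m then (1:ℝ) else 0 := by
        intro m
        rw [Set.indicator_apply]
        simp [hBdef]
      calc (∑ m ∈ s, (B m).indicator (fun _ => (1:ℝ))) ω
          = ∑ m ∈ s, if Mpot d' ω = m then (1:ℝ) else 0 := by
            rw [Finset.sum_apply]
            exact Finset.sum_congr rfl fun m _ => this m
        _ = if Mpot d' ω ∈ s then (1:ℝ) else 0 := Finset.sum_ite_eq s (Mpot d' ω) fun _ => 1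
        _ ≤ 1 := by split_ifs <;> norm_num
    have hmono := condExp_mono (μ := P) (m := 𝔛)
      (integrable_finset_sum' s (fun m _ => aux_ind_int (hB m))) (integrable_const (1:ℝ)) hle
    rw [condExp_const h𝔛le (1:ℝ)] at hmono
    filter_upwards [hsum.symm.le.trans hmono] with ω hω
    calc (∑ m ∈ s, q m ω) = (∑ m ∈ s, P⟦B m|𝔛⟧) ω := by rw [Finset.sum_apply]
      _ ≤ 1 := hω
  -- the candidate function c(x) = Σ_m r_m(x) q_m(x), defined through ℝ≥0∞
  set Φ : Ω → ENNReal := fun ω => ∑' m : 𝓜, ENNReal.ofReal (r m ω * q m ω) with hΦdef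
  have hrmeas𝔛 : ∀ m : 𝓜, Measurable[𝔛] (r m) := fun m => stronglyMeasurable_condExp.measurable
  have hqmeas𝔛 : ∀ m : 𝓜, Measurable[𝔛] (q m) := fun m => stronglyMeasurable_condExp.measurable
  have hpmeas𝔛 : Measurable[𝔛] (p d') := stronglyMeasurable_condExp.measurable
  have hΦmeas𝔛 : Measurable[𝔛] Φ :=
    Measurable.ennreal_tsum fun m => ((hrmeas𝔛 m).mul (hqmeas𝔛 m)).ennreal_ofReal
  have hΦle1 : ∀ᵐ ω ∂P, Φ ω ≤ 1 := by
    filter_upwards [hqsum, hr01, hq01] with ω hs hr hq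
    show (∑' m : 𝓜, ENNReal.ofReal (r m ω * q m ω)) ≤ 1
    rw [ENNReal.tsum_eq_iSup_sum]
    refine iSup_le fun t => ?_
    rw [← ENNReal.ofReal_sum_of_nonneg (fun m _ => mul_nonneg (hr m).1 (hq m).1)]
    rw [← ENNReal.ofReal_one]
    refine ENNReal.ofReal_le_ofReal ?_
    calc (∑ m ∈ t, r m ω * q m ω) ≤ ∑ m ∈ t, q m ω :=
          Finset.sum_le_sum fun m _ => mul_le_of_le_one_left (hq m).1 (hr m).2
      _ ≤ 1 := hs t
  have hΦlt : ∀ᵐ ω ∂P, Φ ω < (⊤ : ENNReal) := by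
    filter_upwards [hΦle1] with ω hω
    exact lt_of_le_of_lt hω ENNReal.one_lt_top
  set c : Ω → ℝ := fun ω => (Φ ω).toReal with hcdef
  have hcmeas𝔛 : Measurable[𝔛] c := hΦmeas𝔛.ennreal_toReal
  have hcmeas : Measurable c := hcmeas𝔛.mono h𝔛le le_rfl
  have hc01 : ∀ᵐ ω ∂P, 0 ≤ c ω ∧ c ω ≤ 1 := by
    filter_upwards [hΦle1] with ω hω
    refine ⟨ENNReal.toReal_nonneg, ?_⟩
    have := ENNReal.toReal_mono ENNReal.one_ne_top hω
    simpa using this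
  have hcint : Integrable c P := by
    refine Integrable.mono' (integrable_const (1:ℝ)) hcmeas.aestronglyMeasurable ?_
    filter_upwards [hc01] with ω hω
    rw [Real.norm_eq_abs, abs_le]
    exact ⟨by linarith [hω.1], hω.2⟩
  -- integrability of products r q p
  have hrq_int : ∀ m : 𝓜, Integrable (fun ω => r m ω * q m ω) P := by
    intro m
    exact integrable_condExp.bdd_mul
      (stronglyMeasurable_condExp.mono h𝔛le).aestronglyMeasurable
      (aux_condexp_ind_bound h𝔛le (hA m))
  have hrqp_int : ∀ m : 𝓜, Integrable (fun ω => r m ω * q m ω * p d' ω) P := by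
    intro m
    refine integrable_condExp.bdd_mul (c := 1) (hrq_int m).aestronglyMeasurable ?_
    filter_upwards [hr01, hq01] with ω hr hq
    rw [Real.norm_eq_abs, abs_le]
    constructor
    · have := mul_nonneg (hr m).1 (hq m).1
      linarith
    · calc r m ω * q m ω ≤ q m ω := mul_le_of_le_one_left (hq m).1 (hr m).2
        _ ≤ 1 := (hq m).2
  -- the function f0 = F(d,M,X) 1_{D = d'}
  set f0 : Ω → ℝ := fun ω => F d (M ω) (X ω) * (Dset d').indicator (fun _ => (1:ℝ)) ω
    with hf0def
  have hf0meas : Measurable f0 := hFdM.mul (measurable_const.indicator (hDset d'))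
  have hf0bd : ∀ᵐ ω ∂P, 0 ≤ f0 ω ∧ f0 ω ≤ 1 := by
    filter_upwards [hFbd] with ω hω
    show 0 ≤ F d (M ω) (X ω) * (Dset d').indicator (fun _ => (1:ℝ)) ω ∧
      F d (M ω) (X ω) * (Dset d').indicator (fun _ => (1:ℝ)) ω ≤ 1
    by_cases h1 : ω ∈ Dset d'
    · rw [Set.indicator_of_mem h1, mul_one]
      exact hω
    · rw [Set.indicator_of_notMem h1, mul_zero]
      norm_num
  have hf0int : Integrable f0 P := by
    refine Integrable.mono' (integrable_const (1:ℝ)) hf0meas.aestronglyMeasurable ?_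
    filter_upwards [hf0bd] with ω hω
    rw [Real.norm_eq_abs, abs_le]
    exact ⟨by linarith [hω.1], hω.2⟩
  -- Key identification: c * p d' is a version of E[f0 | X]
  have hK : (fun ω => c ω * p d' ω) =ᵐ[P] P[f0|𝔛] := by
    refine ae_eq_condExp_of_forall_setIntegral_eq h𝔛le hf0int
      (fun t _ _ => (integrable_condExp.bdd_mul hcmeas.aestronglyMeasurable
        (by filter_upwards [hc01] with ω hω;
            rw [Real.norm_eq_abs, abs_le]; exact ⟨by linarith [hω.1], hω.2⟩)).integrableOn)
      (fun t ht𝔛 _ => ?_)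
      ((hcmeas𝔛.stronglyMeasurable.mul stronglyMeasurable_condExp).aestronglyMeasurable)
    have ht : MeasurableSet[mΩ] t := h𝔛le _ ht𝔛
    -- step (i) : pass to lintegral
    have e1 : ∫ ω in t, c ω * p d' ω ∂P
        = (∫⁻ ω in t, Φ ω * ENNReal.ofReal (p d' ω) ∂P).toReal := by
      rw [← integral_toReal]
      · refine integral_congr_ae (ae_restrict_of_ae ?_)
        filter_upwards [hp01, hΦlt] with ω hp hΦ
        rw [ENNReal.toReal_mul, ENNReal.toReal_ofReal hp.1]
      · exact ((hΦmeas𝔛.mono h𝔛le le_rfl).mul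
          ((hpmeas𝔛.mono h𝔛le le_rfl).ennreal_ofReal)).aemeasurable
      · refine ae_restrict_of_ae ?_
        filter_upwards [hΦlt] with ω hΦ
        exact ENNReal.mul_lt_top hΦ ENNReal.ofReal_lt_top
    -- step (ii) : expand the product into a tsum
    have e2 : ∫⁻ ω in t, Φ ω * ENNReal.ofReal (p d' ω) ∂P
        = ∫⁻ ω in t, ∑' m : 𝓜, ENNReal.ofReal (r m ω * q m ω * p d' ω) ∂P := by
      refine lintegral_congr_ae (ae_restrict_of_ae ?_)
      filter_upwards [hr01, hq01] with ω hr hq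
      show (∑' m : 𝓜, ENNReal.ofReal (r m ω * q m ω)) * ENNReal.ofReal (p d' ω)
        = ∑' m : 𝓜, ENNReal.ofReal (r m ω * q m ω * p d' ω)
      rw [← ENNReal.tsum_mul_right]
      exact tsum_congr fun m => (ENNReal.ofReal_mul (mul_nonneg (hr m).1 (hq m).1)).symm
    -- step (iii) : swap tsum and lintegral; identify each term
    have e3 : ∫⁻ ω in t, ∑' m : 𝓜, ENNReal.ofReal (r m ω * q m ω * p d' ω) ∂P
        = ∑' m : 𝓜, ∫⁻ ω in t, ENNReal.ofReal (r m ω * q m ω * p d' ω) ∂P :=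
      lintegral_tsum fun m => (((((hrmeas𝔛 m).mul (hqmeas𝔛 m)).mul hpmeas𝔛).mono
        h𝔛le le_rfl).ennreal_ofReal).aemeasurable
    have e4 : ∀ m : 𝓜, ∫⁻ ω in t, ENNReal.ofReal (r m ω * q m ω * p d' ω) ∂P
        = ∫⁻ ω in t, ENNReal.ofReal
            (F d m (X ω) * (Mm m ∩ Dset d').indicator (fun _ => (1:ℝ)) ω) ∂P := by
      intro m
      rw [← ofReal_integral_eq_lintegral_ofReal (hrqp_int m).integrableOn
        (ae_restrict_of_ae (by
          filter_upwards [hr01, hq01, hp01] with ω hr hq hp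
          exact mul_nonneg (mul_nonneg (hr m).1 (hq m).1) hp.1)),
        ← ofReal_integral_eq_lintegral_ofReal (hf1int m).integrableOn
        (ae_restrict_of_ae (by filter_upwards [hf1bd m] with ω hω; exact hω.1))]
      congr 1
      calc ∫ ω in t, r m ω * q m ω * p d' ω ∂P
          = ∫ ω in t, (P[fun ω => F d m (X ω) *
              (Mm m ∩ Dset d').indicator (fun _ => (1:ℝ)) ω|𝔛]) ω ∂P :=
            setIntegral_congr_ae ht (by filter_upwards [hS8' m] with ω hω _; exact hω.symm)
        _ = ∫ ω in t, F d m (X ω) * (Mm m ∩ Dset d').indicator (fun _ => (1:ℝ)) ω ∂P :=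
            setIntegral_condExp h𝔛le (hf1int m) ht𝔛
    -- step (iv) : sum the indicators back
    have e5 : ∑' m : 𝓜, ∫⁻ ω in t, ENNReal.ofReal
          (F d m (X ω) * (Mm m ∩ Dset d').indicator (fun _ => (1:ℝ)) ω) ∂P
        = ∫⁻ ω in t, ENNReal.ofReal (f0 ω) ∂P := by
      rw [← lintegral_tsum fun m =>
        (((hf1meas m).mono le_rfl le_rfl).ennreal_ofReal).aemeasurable]
      refine lintegral_congr fun ω => ?_
      have hsingle : ∀ m : 𝓜, m ≠ M ω → ENNReal.ofReal
          (F d m (X ω) * (Mm m ∩ Dset d').indicator (fun _ => (1:ℝ)) ω) = 0 := by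
        intro m hm
        have : ω ∉ Mm m ∩ Dset d' := by
          rintro ⟨h1, -⟩
          exact hm (h1 : M ω = m).symm
        rw [Set.indicator_of_notMem this, mul_zero, ENNReal.ofReal_zero]
      rw [tsum_eq_single (M ω) hsingle]
      congr 1
      show F d (M ω) (X ω) * (Mm (M ω) ∩ Dset d').indicator (fun _ => (1:ℝ)) ω
        = F d (M ω) (X ω) * (Dset d').indicator (fun _ => (1:ℝ)) ω
      by_cases h1 : ω ∈ Dset d'
      · have : ω ∈ Mm (M ω) ∩ Dset d' := ⟨rfl, h1⟩
        rw [Set.indicator_of_mem this, Set.indicator_of_mem h1]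
      · have : ω ∉ Mm (M ω) ∩ Dset d' := fun h => h1 h.2
        rw [Set.indicator_of_notMem this, Set.indicator_of_notMem h1]
    -- step (v) : back to the Bochner integral
    have e6 : (∫⁻ ω in t, ENNReal.ofReal (f0 ω) ∂P).toReal = ∫ ω in t, f0 ω ∂P := by
      rw [← ofReal_integral_eq_lintegral_ofReal hf0int.integrableOn
        (ae_restrict_of_ae (by filter_upwards [hf0bd] with ω hω; exact hω.1))]
      exact ENNReal.toReal_ofReal (integral_nonneg_of_ae (ae_restrict_of_ae
        (by filter_upwards [hf0bd] with ω hω; exact hω.1)))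
    rw [e1, e2, e3, tsum_congr e4, e5, e6]
  -- cancellation: g(d', X) = c a.e.
  have hgc : (fun ω => g d' (X ω)) =ᵐ[P] c := by
    filter_upwards [hS10, hK, hppos d' hd'] with ω h10 hk hp
    have h1 : g d' (X ω) * p d' ω = c ω * p d' ω := by
      rw [← h10, ← hk]
    exact mul_right_cancel₀ (ne_of_gt hp) h1
  -- value of ∫ c
  have hcval : ∫ ω, c ω ∂P = (∑' m : 𝓜, P (A m ∩ B m)).toReal := by
    have e1 : ∫ ω, c ω ∂P = (∫⁻ ω, Φ ω ∂P).toReal :=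
      integral_toReal (hΦmeas𝔛.mono h𝔛le le_rfl).aemeasurable hΦlt
    have e2 : ∫⁻ ω, Φ ω ∂P = ∑' m : 𝓜, ∫⁻ ω, ENNReal.ofReal (r m ω * q m ω) ∂P :=
      lintegral_tsum fun m =>
        ((((hrmeas𝔛 m).mul (hqmeas𝔛 m)).mono h𝔛le le_rfl).ennreal_ofReal).aemeasurable
    have e3 : ∀ m : 𝓜, ∫⁻ ω, ENNReal.ofReal (r m ω * q m ω) ∂P = P (A m ∩ B m) := by
      intro m
      rw [← ofReal_integral_eq_lintegral_ofReal (hrq_int m)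
        (by filter_upwards [hr01, hq01] with ω hr hq
            exact mul_nonneg (hr m).1 (hq m).1),
        ← hS4 m, ENNReal.ofReal_toReal (measure_ne_top P _)]
    rw [e1, e2, tsum_congr e3]
  -- the event in question decomposes as a disjoint union
  have hseteq : {ω | Ypot d (Mpot d' ω) ω ≤ a} = ⋃ m : 𝓜, (B m ∩ A m) := by
    ext ω
    simp only [Set.mem_setOf_eq, Set.mem_iUnion, Set.mem_inter_iff, hBdef, hAdef,
      Set.mem_preimage, Set.mem_singleton_iff, Set.mem_Iic]
    constructor
    · intro h
      exact ⟨Mpot d' ω, rfl, h⟩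
    · rintro ⟨m, h1, h2⟩
      rw [h1]
      exact h2
  have hdisjBA : Pairwise (Function.onFun Disjoint fun m : 𝓜 => B m ∩ A m) := by
    intro i j hij
    simp only [Function.onFun]
    refine Set.disjoint_left.mpr ?_
    rintro ω ⟨h1, -⟩ ⟨h2, -⟩
    have h1' : Mpot d' ω = i := h1
    have h2' : Mpot d' ω = j := h2
    exact hij (h1'.symm.trans h2')
  rw [hseteq, measure_iUnion hdisjBA (fun m => (hB m).inter (hA m))]
  have hfinal : (∑' m : 𝓜, P (B m ∩ A m)) = ∑' m : 𝓜, P (A m ∩ B m) :=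
    tsum_congr fun m => by rw [Set.inter_comm]
  rw [hfinal, ← hcval]
  exact (integral_congr_ae hgc).symm
end

section
/- Under Assumptions 1.1–1.4 and the overlap condition, for every a ∈ ℝ and d ∈ {0,1} with d' := 1 − d, the expectation of the efficient score at the true nuisance parameters recovers the potential-outcome c.d.f.: E[ ψ_{d,d',a} ] = P(Y(d, M(d')) ≤ a). -/
open MeasureTheory ProbabilityTheory
open scoped ENNReal

section Helpers
variable {Ω : Type*} [m0 : MeasurableSpace Ω] {P : Measure Ω} [IsProbabilityMeasure P]

/-- Integrability from an a.e. bound. -/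
lemma bddInt {f : Ω → ℝ} (hf : AEStronglyMeasurable f P) {c : ℝ}
    (hc : ∀ᵐ ω ∂P, |f ω| ≤ c) : Integrable f P := by
  refine Integrable.mono' (integrable_const c) hf ?_
  simpa [Real.norm_eq_abs] using hc

/-- Tower / pull-out property in integral form. -/
lemma tower {m : MeasurableSpace Ω} (hm : m ≤ m0) {h f r : Ω → ℝ} {c : ℝ}
    (hh : StronglyMeasurable[m] h) (hc : ∀ᵐ ω ∂P, |h ω| ≤ c)
    (hf : Integrable f P) (hr : r =ᵐ[P] P[f|m]) :
    ∫ ω, h ω * f ω ∂P = ∫ ω, h ω * r ω ∂P := by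
  haveI : SigmaFinite (P.trim hm) := by
    have : IsFiniteMeasure (P.trim hm) := isFiniteMeasure_trim hm
    infer_instance
  have hsm : AEStronglyMeasurable[m0] h P := ((hh.mono hm).aestronglyMeasurable)
  have hint : Integrable (fun ω => h ω * f ω) P := by
    refine Integrable.mono' (hf.norm.const_mul c) (hsm.mul hf.aestronglyMeasurable) ?_
    filter_upwards [hc] with ω hω
    rw [norm_mul, Real.norm_eq_abs, Real.norm_eq_abs]
    exact mul_le_mul_of_nonneg_right hω (abs_nonneg _)
  have key : P[(fun ω => h ω * f ω)|m] =ᵐ[P] fun ω => h ω * (P[f|m]) ω :=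
    condExp_stronglyMeasurable_mul_of_bound hm hh hf c
      (by simpa [Real.norm_eq_abs] using hc)
  calc ∫ ω, h ω * f ω ∂P = ∫ ω, (P[(fun ω => h ω * f ω)|m]) ω ∂P :=
        (integral_condExp hm).symm
    _ = ∫ ω, h ω * (P[f|m]) ω ∂P := integral_congr_ae key
    _ = ∫ ω, h ω * r ω ∂P := by
        refine integral_congr_ae ?_
        filter_upwards [hr] with ω hω
        rw [hω]

/-- conditional expectations of [0,1]-valued functions take values in [0,1] -/
lemma cond01 {m : MeasurableSpace Ω} (hm : m ≤ m0) {f : Ω → ℝ} (hf : Integrable f P)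
    (h01 : ∀ᵐ ω ∂P, 0 ≤ f ω ∧ f ω ≤ 1) :
    ∀ᵐ ω ∂P, 0 ≤ (P[f|m]) ω ∧ (P[f|m]) ω ≤ 1 := by
  have h0 : 0 ≤ᵐ[P] P[f|m] := condExp_nonneg (by filter_upwards [h01] with ω h; exact h.1)
  have h1 : P[f|m] ≤ᵐ[P] P[(fun _ => (1:ℝ))|m] :=
    condExp_mono hf (integrable_const 1) (by filter_upwards [h01] with ω h; exact h.2)
  have h2 := condExp_const (μ := P) hm (1:ℝ)
  rw [h2] at h1
  filter_upwards [h0, h1] with ω h0 h1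
  exact ⟨h0, h1⟩

omit [IsProbabilityMeasure P] in
/-- If `∫ h·w = 0` with `h ≥ 0` and `w ≥ ε > 0` a.e., then `h = 0` a.e. -/
lemma aeZero {h w : Ω → ℝ} {ε : ℝ} (hε : 0 < ε) (hh0 : 0 ≤ᵐ[P] h)
    (hw : ∀ᵐ ω ∂P, ε ≤ w ω) (hint : Integrable h P)
    (hint2 : Integrable (fun ω => h ω * w ω) P)
    (hz : ∫ ω, h ω * w ω ∂P = 0) : h =ᵐ[P] 0 := by
  have h1 : ∫ ω, ε * h ω ∂P ≤ ∫ ω, h ω * w ω ∂P := by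
    refine integral_mono_ae (hint.const_mul ε) hint2 ?_
    filter_upwards [hh0, hw] with ω h1 h2
    calc ε * h ω ≤ w ω * h ω := mul_le_mul_of_nonneg_right h2 h1
      _ = h ω * w ω := mul_comm _ _
  rw [integral_const_mul, hz] at h1
  have h2 : 0 ≤ ∫ ω, h ω ∂P := integral_nonneg_of_ae hh0
  have h3 : ∫ ω, h ω ∂P = 0 := le_antisymm (by nlinarith) h2
  exact (integral_eq_zero_iff_of_nonneg_ae hh0 hint).mp h3

end Helpers

open scoped Classical in
/-- The per-mediator-value identification lemma. -/
theorem key_m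
    {Ω 𝓜 𝓧 : Type*} [MeasurableSpace Ω] [StandardBorelSpace Ω]
    [MeasurableSpace 𝓜] [MeasurableSingletonClass 𝓜] [MeasurableSpace 𝓧]
    (P : Measure Ω) [IsProbabilityMeasure P]
    (Y : Ω → ℝ) (D : Ω → ℕ) (M : Ω → 𝓜) (X : Ω → 𝓧)
    (hY : Measurable Y) (hD : Measurable D) (hM : Measurable M) (hX : Measurable X)
    (hD01 : ∀ ω, D ω ≤ 1)
    (Ypot : ℕ → 𝓜 → Ω → ℝ) (Mpot : ℕ → Ω → 𝓜)
    (hYpot : ∀ d m, Measurable (Ypot d m)) (hMpot : ∀ d, Measurable (Mpot d))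
    (hcons_M : ∀ d ω, D ω = d → Mpot d ω = M ω)
    (hcons_Y : ∀ d m ω, D ω = d → M ω = m → Ypot d m ω = Y ω)
    (a : ℝ) (d d' : ℕ) (hd : d ≤ 1) (hd'1 : d' ≤ 1) (hne : d ≠ d') (m : 𝓜)
    (hA2m : CondIndepFun (MeasurableSpace.comap X inferInstance) hX.comap_le
        (fun ω => (Ypot d m ω, Mpot d' ω)) D P)
    (hA3dd : CondIndepFun (MeasurableSpace.comap (fun ω => (D ω, X ω)) inferInstance)
        (hD.prodMk hX).comap_le (Ypot d m) (Mpot d) P)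
    (hA3dd' : CondIndepFun (MeasurableSpace.comap (fun ω => (D ω, X ω)) inferInstance)
        (hD.prodMk hX).comap_le (Ypot d m) (Mpot d') P)
    (p : ℕ → 𝓧 → ℝ) (F : ℕ → 𝓜 → 𝓧 → ℝ) (q : ℕ → 𝓜 → 𝓧 → ℝ)
    (hpmeas : Measurable (fun t : ℕ × 𝓧 => p t.1 t.2))
    (hqmeas : Measurable (fun t : ℕ × 𝓜 × 𝓧 => q t.1 t.2.1 t.2.2))
    (hFmeas : Measurable (fun t : ℕ × 𝓜 × 𝓧 => F t.1 t.2.1 t.2.2))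
    (hpver : ∀ δ ≤ 1, (fun ω => p δ (X ω)) =ᵐ[P]
      P[(fun ω' => if D ω' = δ then (1:ℝ) else 0) | MeasurableSpace.comap X inferInstance])
    (hqverd : (fun ω => q d (M ω) (X ω)) =ᵐ[P]
      P[(fun ω' => if D ω' = d then (1:ℝ) else 0) |
        MeasurableSpace.comap (fun ω' => (M ω', X ω')) inferInstance])
    (hFver : (fun ω => F (D ω) (M ω) (X ω)) =ᵐ[P]
      P[(fun ω' => if Y ω' ≤ a then (1:ℝ) else 0) |
        MeasurableSpace.comap (fun ω' => (D ω', M ω', X ω')) inferInstance])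
    (ε₁ ε₂ : ℝ) (hε₁ : 0 < ε₁) (hε₂ : 0 < ε₂)
    (hoverp : ∀ δ ≤ 1, ∀ᵐ ω ∂P, ε₁ ≤ p δ (X ω) ∧ p δ (X ω) ≤ 1 - ε₁)
    (hoverqd : ∀ᵐ ω ∂P, ε₂ ≤ q d (M ω) (X ω) ∧ q d (M ω) (X ω) ≤ 1 - ε₂)
    (hε₁1 : ε₁ < 1) (hε₂1 : ε₂ < 1)
    (hFd01 : ∀ᵐ ω ∂P, 0 ≤ F d (M ω) (X ω) ∧ F d (M ω) (X ω) ≤ 1) :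
    ∫ ω, (if M ω = m then (1:ℝ) else 0) *
        ((if D ω = d' then (1:ℝ) else 0) / p d' (X ω) * F d (M ω) (X ω)) ∂P
      = (P ({ω | Ypot d m ω ≤ a} ∩ {ω | Mpot d' ω = m})).toReal := by
  classical
  have hmX : (MeasurableSpace.comap X inferInstance) ≤ (inferInstance : MeasurableSpace Ω) := hX.comap_le
  have hmMX : (MeasurableSpace.comap (fun ω => (M ω, X ω)) inferInstance) ≤ (inferInstance : MeasurableSpace Ω) := (hM.prodMk hX).comap_le
  have hmDX : (MeasurableSpace.comap (fun ω => (D ω, X ω)) inferInstance) ≤ (inferInstance : MeasurableSpace Ω) := (hD.prodMk hX).comap_le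
  have hmDMX : (MeasurableSpace.comap (fun ω => (D ω, M ω, X ω)) inferInstance) ≤ (inferInstance : MeasurableSpace Ω) :=
    (hD.prodMk (hM.prodMk hX)).comap_le
  have hXleMX : (MeasurableSpace.comap X inferInstance) ≤ (MeasurableSpace.comap (fun ω => (M ω, X ω)) inferInstance) := by
    calc MeasurableSpace.comap X inferInstance
        = MeasurableSpace.comap (fun ω => (M ω, X ω))
            (MeasurableSpace.comap Prod.snd inferInstance) := by
          rw [MeasurableSpace.comap_comp]; rfl
      _ ≤ _ := MeasurableSpace.comap_mono measurable_snd.comap_le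
  have hXleDX : (MeasurableSpace.comap X inferInstance) ≤ (MeasurableSpace.comap (fun ω => (D ω, X ω)) inferInstance) := by
    calc MeasurableSpace.comap X inferInstance
        = MeasurableSpace.comap (fun ω => (D ω, X ω))
            (MeasurableSpace.comap Prod.snd inferInstance) := by
          rw [MeasurableSpace.comap_comp]; rfl
      _ ≤ _ := MeasurableSpace.comap_mono measurable_snd.comap_le
  have hXleDMX : (MeasurableSpace.comap X inferInstance) ≤ (MeasurableSpace.comap (fun ω => (D ω, M ω, X ω)) inferInstance) := by
    calc MeasurableSpace.comap X inferInstance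
        = MeasurableSpace.comap (fun ω => (D ω, M ω, X ω))
            (MeasurableSpace.comap (Prod.snd ∘ Prod.snd) inferInstance) := by
          rw [MeasurableSpace.comap_comp]; rfl
      _ ≤ _ := MeasurableSpace.comap_mono (measurable_snd.comp measurable_snd).comap_le
  have measX : Measurable[(MeasurableSpace.comap X inferInstance)] X := Measurable.of_comap_le le_rfl
  have measMX : Measurable[(MeasurableSpace.comap (fun ω => (M ω, X ω)) inferInstance)] (fun ω => (M ω, X ω)) := Measurable.of_comap_le le_rfl
  have measDX : Measurable[(MeasurableSpace.comap (fun ω => (D ω, X ω)) inferInstance)] (fun ω => (D ω, X ω)) := Measurable.of_comap_le le_rfl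
  have measDMX : Measurable[(MeasurableSpace.comap (fun ω => (D ω, M ω, X ω)) inferInstance)] (fun ω => (D ω, M ω, X ω)) := Measurable.of_comap_le le_rfl
  have hDc : ∀ ω, D ω = d ∨ D ω = d' := fun ω => by have := hD01 ω; omega
  -- component measurability
  have hpd'x : Measurable fun x : 𝓧 => p d' x :=
    hpmeas.comp (measurable_const.prodMk measurable_id)
  have hpδx : ∀ δ : ℕ, Measurable fun x : 𝓧 => p δ x := fun δ =>
    hpmeas.comp (measurable_const.prodMk measurable_id)
  have hqdmx : Measurable fun t : 𝓜 × 𝓧 => q d t.1 t.2 :=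
    hqmeas.comp (measurable_const.prodMk measurable_id)
  have hFdmx : Measurable fun t : 𝓜 × 𝓧 => F d t.1 t.2 :=
    hFmeas.comp (measurable_const.prodMk measurable_id)
  have hFdm : Measurable fun x : 𝓧 => F d m x :=
    hFdmx.comp (measurable_const.prodMk measurable_id)
  -- indicators, ambient measurable
  have hIA : Measurable fun ω => if Ypot d m ω ≤ a then (1:ℝ) else 0 :=
    Measurable.ite (measurableSet_le (hYpot d m) measurable_const)
      measurable_const measurable_const
  have hIB : Measurable fun ω => if Mpot d' ω = m then (1:ℝ) else 0 :=
    Measurable.ite (hMpot d' (measurableSet_singleton m)) measurable_const measurable_const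
  have hIBd : Measurable fun ω => if Mpot d ω = m then (1:ℝ) else 0 :=
    Measurable.ite (hMpot d (measurableSet_singleton m)) measurable_const measurable_const
  have hIM : Measurable fun ω => if M ω = m then (1:ℝ) else 0 :=
    Measurable.ite (hM (measurableSet_singleton m)) measurable_const measurable_const
  have hDδ : ∀ δ : ℕ, Measurable fun ω => if D ω = δ then (1:ℝ) else 0 := fun δ =>
    Measurable.ite (hD (measurableSet_singleton δ)) measurable_const measurable_const
  have hYa : Measurable fun ω => if Y ω ≤ a then (1:ℝ) else 0 :=
    Measurable.ite (measurableSet_le hY measurable_const) measurable_const measurable_const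
  -- integrability of indicators
  have int01 : ∀ {f : Ω → ℝ}, Measurable f → (∀ ω, |f ω| ≤ 1) → Integrable f P :=
    fun hf hb => bddInt hf.aestronglyMeasurable (ae_of_all _ hb)
  have iteb : ∀ (c : Prop) (inst : Decidable c), |if c then (1:ℝ) else 0| ≤ 1 := by
    intro c inst; split_ifs <;> norm_num
  have hIAint : Integrable (fun ω => if Ypot d m ω ≤ a then (1:ℝ) else 0) P :=
    int01 hIA (fun ω => iteb _ _)
  have hIBint : Integrable (fun ω => if Mpot d' ω = m then (1:ℝ) else 0) P :=
    int01 hIB (fun ω => iteb _ _)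
  have hIBdint : Integrable (fun ω => if Mpot d ω = m then (1:ℝ) else 0) P :=
    int01 hIBd (fun ω => iteb _ _)
  have hDint : ∀ δ : ℕ, Integrable (fun ω => if D ω = δ then (1:ℝ) else 0) P := fun δ =>
    int01 (hDδ δ) (fun ω => iteb _ _)
  have hYaint : Integrable (fun ω => if Y ω ≤ a then (1:ℝ) else 0) P :=
    int01 hYa (fun ω => iteb _ _)
  -- conditional expectation u of the potential-outcome indicator given X
  set u := P[(fun ω => if Ypot d m ω ≤ a then (1:ℝ) else 0)|(MeasurableSpace.comap X inferInstance)] with hu_def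
  have hu_sm : StronglyMeasurable[(MeasurableSpace.comap X inferInstance)] u := stronglyMeasurable_condExp
  have ite01 : ∀ (c : Prop) (inst : Decidable c),
      0 ≤ (if c then (1:ℝ) else 0) ∧ (if c then (1:ℝ) else 0) ≤ 1 := by
    intro c inst; split_ifs <;> norm_num
  have hu01 : ∀ᵐ ω ∂P, 0 ≤ u ω ∧ u ω ≤ 1 :=
    cond01 hmX hIAint (ae_of_all _ fun ω => ite01 _ _)
  have huint : Integrable u P := integrable_condExp
  -- === L1 ===
  have hL1 : u =ᵐ[P] P[(fun ω => if Ypot d m ω ≤ a then (1:ℝ) else 0)|(MeasurableSpace.comap (fun ω => (D ω, X ω)) inferInstance)] := by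
    haveI : IsFiniteMeasure (P.trim hmDX) := isFiniteMeasure_trim hmDX
    refine ae_eq_condExp_of_forall_setIntegral_eq hmDX hIAint
      (fun s _ _ => huint.integrableOn) (fun s hs _ => ?_)
      ((hu_sm.mono hXleDX).aestronglyMeasurable)
    obtain ⟨E, hE, rfl⟩ := hs
    have hSmeas : MeasurableSet ((fun ω => (D ω, X ω)) ⁻¹' E) := (hD.prodMk hX) hE
    have heδ : ∀ δ : ℕ, Measurable fun ω => if ((δ, X ω) : ℕ × 𝓧) ∈ E then (1:ℝ) else 0 :=
      fun δ => Measurable.ite (hX (measurable_prodMk_left hE)) measurable_const measurable_const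
    have heδ' : ∀ δ : ℕ, StronglyMeasurable[(MeasurableSpace.comap X inferInstance)]
        fun ω => if ((δ, X ω) : ℕ × 𝓧) ∈ E then (1:ℝ) else 0 := by
      intro δ
      have hφ : Measurable fun x : 𝓧 => if ((δ, x) : ℕ × 𝓧) ∈ E then (1:ℝ) else 0 :=
        Measurable.ite (measurable_prodMk_left hE) measurable_const measurable_const
      exact (hφ.comp measX).stronglyMeasurable
    have conv : ∀ f : Ω → ℝ, ∫ x in (fun ω => (D ω, X ω)) ⁻¹' E, f x ∂P
        = ∫ ω, (if ((D ω, X ω) : ℕ × 𝓧) ∈ E then (1:ℝ) else 0) * f ω ∂P := by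
      intro f
      rw [← integral_indicator hSmeas]
      refine integral_congr_ae (ae_of_all _ fun ω => ?_)
      by_cases h : ((D ω, X ω) : ℕ × 𝓧) ∈ E <;> simp [Set.indicator_apply, h]
    -- the key claim, for each treatment value δ
    have claim : ∀ δ, δ ≤ 1 →
        ∫ ω, (if D ω = δ then (1:ℝ) else 0) *
          ((if ((δ, X ω) : ℕ × 𝓧) ∈ E then (1:ℝ) else 0) * u ω) ∂P
        = ∫ ω, (if D ω = δ then (1:ℝ) else 0) *
          ((if ((δ, X ω) : ℕ × 𝓧) ∈ E then (1:ℝ) else 0) *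
            (if Ypot d m ω ≤ a then (1:ℝ) else 0)) ∂P := by
      intro δ hδ
      have hA2prod : (P[(fun ω => (if Ypot d m ω ≤ a then (1:ℝ) else 0) *
            (if D ω = δ then (1:ℝ) else 0))|(MeasurableSpace.comap X inferInstance)])
          =ᵐ[P] fun ω => u ω * (P[(fun ω' => if D ω' = δ then (1:ℝ) else 0)|(MeasurableSpace.comap X inferInstance)]) ω := by
        have h := (condIndepFun_iff_condExp_inter_preimage_eq_mul
            ((hYpot d m).prodMk (hMpot d')) hD).mp hA2m
          (Set.Iic a ×ˢ Set.univ) {δ} (measurableSet_Iic.prod MeasurableSet.univ)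
          (measurableSet_singleton δ)
        have e1 : ((fun ω => (Ypot d m ω, Mpot d' ω)) ⁻¹' (Set.Iic a ×ˢ Set.univ) ∩
              D ⁻¹' {δ}).indicator (fun _ => (1:ℝ))
            = fun ω => (if Ypot d m ω ≤ a then (1:ℝ) else 0) *
              (if D ω = δ then (1:ℝ) else 0) := by
          funext ω
          by_cases h1 : Ypot d m ω ≤ a <;> by_cases h2 : D ω = δ <;>
            simp [Set.indicator_apply, Set.mem_prod, h1, h2]
        have e2 : ((fun ω => (Ypot d m ω, Mpot d' ω)) ⁻¹' (Set.Iic a ×ˢ Set.univ)).indicator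
              (fun _ => (1:ℝ))
            = fun ω => if Ypot d m ω ≤ a then (1:ℝ) else 0 := by
          funext ω; by_cases h1 : Ypot d m ω ≤ a <;> simp [Set.indicator_apply, h1]
        have e3 : (D ⁻¹' {δ}).indicator (fun _ => (1:ℝ))
            = fun ω => if D ω = δ then (1:ℝ) else 0 := by
          funext ω; by_cases h2 : D ω = δ <;> simp [Set.indicator_apply, h2]
        rw [e1, e2, e3] at h
        exact h
      have hpb := hoverp δ hδ
      have ta : ∫ ω, ((if ((δ, X ω) : ℕ × 𝓧) ∈ E then (1:ℝ) else 0) * u ω) *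
            (if D ω = δ then (1:ℝ) else 0) ∂P
          = ∫ ω, ((if ((δ, X ω) : ℕ × 𝓧) ∈ E then (1:ℝ) else 0) * u ω) * p δ (X ω) ∂P := by
        refine tower hmX (c := 1) ((heδ' δ).mul hu_sm) ?_ (hDint δ) (hpver δ hδ)
        filter_upwards [hu01] with ω h
        rw [abs_mul]
        exact mul_le_one₀ (iteb _ _) (abs_nonneg _) (abs_le.mpr ⟨by linarith [h.1], h.2⟩)
      have td : ∫ ω, (if ((δ, X ω) : ℕ × 𝓧) ∈ E then (1:ℝ) else 0) *
            ((if Ypot d m ω ≤ a then (1:ℝ) else 0) * (if D ω = δ then (1:ℝ) else 0)) ∂P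
          = ∫ ω, (if ((δ, X ω) : ℕ × 𝓧) ∈ E then (1:ℝ) else 0) *
            (u ω * p δ (X ω)) ∂P := by
        refine tower hmX (c := 1) (heδ' δ) (ae_of_all _ fun ω => iteb _ _) ?_ ?_
        · exact int01 (hIA.mul (hDδ δ)) (fun ω => by
            rw [abs_mul]; exact mul_le_one₀ (iteb _ _) (abs_nonneg _) (iteb _ _))
        · filter_upwards [hA2prod, hpver δ hδ] with ω h1 h2
          rw [h1, ← h2]
      calc ∫ ω, (if D ω = δ then (1:ℝ) else 0) *
            ((if ((δ, X ω) : ℕ × 𝓧) ∈ E then (1:ℝ) else 0) * u ω) ∂P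
          = ∫ ω, ((if ((δ, X ω) : ℕ × 𝓧) ∈ E then (1:ℝ) else 0) * u ω) *
            (if D ω = δ then (1:ℝ) else 0) ∂P := by
            refine integral_congr_ae (ae_of_all _ fun ω => ?_); ring
        _ = ∫ ω, ((if ((δ, X ω) : ℕ × 𝓧) ∈ E then (1:ℝ) else 0) * u ω) * p δ (X ω) ∂P := ta
        _ = ∫ ω, (if ((δ, X ω) : ℕ × 𝓧) ∈ E then (1:ℝ) else 0) * (u ω * p δ (X ω)) ∂P := by
            refine integral_congr_ae (ae_of_all _ fun ω => ?_); ring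
        _ = ∫ ω, (if ((δ, X ω) : ℕ × 𝓧) ∈ E then (1:ℝ) else 0) *
            ((if Ypot d m ω ≤ a then (1:ℝ) else 0) * (if D ω = δ then (1:ℝ) else 0)) ∂P :=
            td.symm
        _ = ∫ ω, (if D ω = δ then (1:ℝ) else 0) *
            ((if ((δ, X ω) : ℕ × 𝓧) ∈ E then (1:ℝ) else 0) *
              (if Ypot d m ω ≤ a then (1:ℝ) else 0)) ∂P := by
            refine integral_congr_ae (ae_of_all _ fun ω => ?_); ring
    -- split the set integral over the two treatment values
    have hsplit : ∀ f : Ω → ℝ, Measurable f → (∀ᵐ ω ∂P, |f ω| ≤ 1) →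
        ∫ ω, (if ((D ω, X ω) : ℕ × 𝓧) ∈ E then (1:ℝ) else 0) * f ω ∂P
        = ∫ ω, (if D ω = d then (1:ℝ) else 0) *
            ((if (((d:ℕ), X ω) : ℕ × 𝓧) ∈ E then (1:ℝ) else 0) * f ω) ∂P
          + ∫ ω, (if D ω = d' then (1:ℝ) else 0) *
            ((if (((d':ℕ), X ω) : ℕ × 𝓧) ∈ E then (1:ℝ) else 0) * f ω) ∂P := by
      intro f hfm hfb
      have hi : ∀ δ : ℕ, Integrable (fun ω => (if D ω = δ then (1:ℝ) else 0) *
          ((if ((δ, X ω) : ℕ × 𝓧) ∈ E then (1:ℝ) else 0) * f ω)) P := by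
        intro δ
        refine bddInt (((hDδ δ).mul ((heδ δ).mul hfm)).aestronglyMeasurable) (c := 1) ?_
        filter_upwards [hfb] with ω h
        rw [abs_mul, abs_mul]
        exact mul_le_one₀ (iteb _ _) (mul_nonneg (abs_nonneg _) (abs_nonneg _))
          (mul_le_one₀ (iteb _ _) (abs_nonneg _) h)
      rw [← integral_add (hi d) (hi d')]
      refine integral_congr_ae (ae_of_all _ fun ω => ?_)
      rcases hDc ω with h | h <;>
        simp only [h, if_pos rfl, if_neg hne, if_neg (Ne.symm hne), reduceIte] <;> ring
    have cu := conv u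
    have cIA := conv (fun ω => if Ypot d m ω ≤ a then (1:ℝ) else 0)
    rw [cu, cIA, hsplit u (hu_sm.mono hmX).measurable
      (by filter_upwards [hu01] with ω h; exact abs_le.mpr ⟨by linarith [h.1], h.2⟩),
      hsplit _ hIA (ae_of_all _ fun ω => iteb _ _), claim d hd, claim d' hd'1]
  -- === E3 ===
  have hE3 : ∀ (V : Ω → ℝ) (c : ℝ), StronglyMeasurable[(MeasurableSpace.comap X inferInstance)] V → (∀ᵐ ω ∂P, |V ω| ≤ c) →
      ∫ ω, ((if D ω = d then (1:ℝ) else 0) * (if M ω = m then (1:ℝ) else 0) * V ω)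
          * F d m (X ω) ∂P
      = ∫ ω, ((if D ω = d then (1:ℝ) else 0) * (if M ω = m then (1:ℝ) else 0) * V ω)
          * u ω ∂P := by
    intro V c hV hVb
    -- strongly measurable building blocks
    have hDd_DMX : StronglyMeasurable[(MeasurableSpace.comap (fun ω => (D ω, M ω, X ω)) inferInstance)] fun ω => if D ω = d then (1:ℝ) else 0 := by
      have hφ : Measurable fun t : ℕ × 𝓜 × 𝓧 => if t.1 = d then (1:ℝ) else 0 :=
        Measurable.ite (measurable_fst (measurableSet_singleton d))
          measurable_const measurable_const
      exact (hφ.comp measDMX).stronglyMeasurable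
    have hIM_DMX : StronglyMeasurable[(MeasurableSpace.comap (fun ω => (D ω, M ω, X ω)) inferInstance)] fun ω => if M ω = m then (1:ℝ) else 0 := by
      have hφ : Measurable fun t : ℕ × 𝓜 × 𝓧 => if t.2.1 = m then (1:ℝ) else 0 :=
        Measurable.ite ((measurable_fst.comp measurable_snd) (measurableSet_singleton m))
          measurable_const measurable_const
      exact (hφ.comp measDMX).stronglyMeasurable
    have hDd_DX : StronglyMeasurable[(MeasurableSpace.comap (fun ω => (D ω, X ω)) inferInstance)] fun ω => if D ω = d then (1:ℝ) else 0 := by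
      have hφ : Measurable fun t : ℕ × 𝓧 => if t.1 = d then (1:ℝ) else 0 :=
        Measurable.ite (measurable_fst (measurableSet_singleton d))
          measurable_const measurable_const
      exact (hφ.comp measDX).stronglyMeasurable
    -- (a) condition on (D,M,X) to replace the observed-outcome indicator by F
    have ta : ∫ ω, ((if D ω = d then (1:ℝ) else 0) * (if M ω = m then (1:ℝ) else 0) * V ω)
          * (if Y ω ≤ a then (1:ℝ) else 0) ∂P
        = ∫ ω, ((if D ω = d then (1:ℝ) else 0) * (if M ω = m then (1:ℝ) else 0) * V ω)
          * F (D ω) (M ω) (X ω) ∂P := by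
      refine tower hmDMX (c := c) ((hDd_DMX.mul hIM_DMX).mul (hV.mono hXleDMX)) ?_
        hYaint hFver
      filter_upwards [hVb] with ω h
      calc |(if D ω = d then (1:ℝ) else 0) * (if M ω = m then (1:ℝ) else 0) * V ω|
          = |(if D ω = d then (1:ℝ) else 0) * (if M ω = m then (1:ℝ) else 0)| * |V ω| :=
            abs_mul _ _
        _ ≤ 1 * |V ω| := by
            refine mul_le_mul_of_nonneg_right ?_ (abs_nonneg _)
            rw [abs_mul]
            exact mul_le_one₀ (iteb _ _) (abs_nonneg _) (iteb _ _)
        _ = |V ω| := one_mul _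
        _ ≤ c := h
    -- A3(d,d) product rule
    have hA3prod : (P[(fun ω => (if Ypot d m ω ≤ a then (1:ℝ) else 0) *
          (if Mpot d ω = m then (1:ℝ) else 0))|(MeasurableSpace.comap (fun ω => (D ω, X ω)) inferInstance)])
        =ᵐ[P] fun ω => (P[(fun ω' => if Ypot d m ω' ≤ a then (1:ℝ) else 0)|(MeasurableSpace.comap (fun ω => (D ω, X ω)) inferInstance)]) ω *
          (P[(fun ω' => if Mpot d ω' = m then (1:ℝ) else 0)|(MeasurableSpace.comap (fun ω => (D ω, X ω)) inferInstance)]) ω := by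
      have h := (condIndepFun_iff_condExp_inter_preimage_eq_mul
          (hYpot d m) (hMpot d)).mp hA3dd
        (Set.Iic a) {m} measurableSet_Iic (measurableSet_singleton m)
      have e1 : (Ypot d m ⁻¹' Set.Iic a ∩ Mpot d ⁻¹' {m}).indicator (fun _ => (1:ℝ))
          = fun ω => (if Ypot d m ω ≤ a then (1:ℝ) else 0) *
            (if Mpot d ω = m then (1:ℝ) else 0) := by
        funext ω
        by_cases h1 : Ypot d m ω ≤ a <;> by_cases h2 : Mpot d ω = m <;>
          simp [Set.indicator_apply, h1, h2]
      have e2 : (Ypot d m ⁻¹' Set.Iic a).indicator (fun _ => (1:ℝ))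
          = fun ω => if Ypot d m ω ≤ a then (1:ℝ) else 0 := by
        funext ω; by_cases h1 : Ypot d m ω ≤ a <;> simp [Set.indicator_apply, h1]
      have e3 : (Mpot d ⁻¹' {m}).indicator (fun _ => (1:ℝ))
          = fun ω => if Mpot d ω = m then (1:ℝ) else 0 := by
        funext ω; by_cases h2 : Mpot d ω = m <;> simp [Set.indicator_apply, h2]
      rw [e1, e2, e3] at h
      exact h
    -- (c) condition on (D,X)
    have tc : ∫ ω, ((if D ω = d then (1:ℝ) else 0) * V ω) *
          ((if Ypot d m ω ≤ a then (1:ℝ) else 0) * (if Mpot d ω = m then (1:ℝ) else 0)) ∂P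
        = ∫ ω, ((if D ω = d then (1:ℝ) else 0) * V ω) *
          (u ω * (P[(fun ω' => if Mpot d ω' = m then (1:ℝ) else 0)|(MeasurableSpace.comap (fun ω => (D ω, X ω)) inferInstance)]) ω) ∂P := by
      refine tower hmDX (c := c) (hDd_DX.mul (hV.mono hXleDX)) ?_ ?_ ?_
      · filter_upwards [hVb] with ω h
        rw [abs_mul]
        calc |if D ω = d then (1:ℝ) else 0| * |V ω| ≤ 1 * |V ω| :=
              mul_le_mul_of_nonneg_right (iteb _ _) (abs_nonneg _)
          _ = |V ω| := one_mul _
          _ ≤ c := h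
      · exact int01 (hIA.mul hIBd) (fun ω => by
          rw [abs_mul]; exact mul_le_one₀ (iteb _ _) (abs_nonneg _) (iteb _ _))
      · filter_upwards [hA3prod, hL1] with ω h1 h2
        rw [h1, ← h2]
    -- (e) pull the conditional expectation of IBd back
    have te : ∫ ω, ((if D ω = d then (1:ℝ) else 0) * V ω * u ω) *
          (if Mpot d ω = m then (1:ℝ) else 0) ∂P
        = ∫ ω, ((if D ω = d then (1:ℝ) else 0) * V ω * u ω) *
          (P[(fun ω' => if Mpot d ω' = m then (1:ℝ) else 0)|(MeasurableSpace.comap (fun ω => (D ω, X ω)) inferInstance)]) ω ∂P := by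
      refine tower hmDX (c := c) ((hDd_DX.mul (hV.mono hXleDX)).mul (hu_sm.mono hXleDX)) ?_
        hIBdint (Filter.EventuallyEq.refl _ _)
      filter_upwards [hVb, hu01] with ω h hu
      rw [abs_mul, abs_mul]
      calc |if D ω = d then (1:ℝ) else 0| * |V ω| * |u ω|
          ≤ 1 * |V ω| * 1 := by
            refine mul_le_mul (mul_le_mul_of_nonneg_right (iteb _ _) (abs_nonneg _))
              (abs_le.mpr ⟨by linarith [hu.1], hu.2⟩) (abs_nonneg _) ?_
            positivity
        _ = |V ω| := by ring
        _ ≤ c := h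
    -- chain everything
    calc ∫ ω, ((if D ω = d then (1:ℝ) else 0) * (if M ω = m then (1:ℝ) else 0) * V ω)
          * F d m (X ω) ∂P
        = ∫ ω, ((if D ω = d then (1:ℝ) else 0) * (if M ω = m then (1:ℝ) else 0) * V ω)
          * F (D ω) (M ω) (X ω) ∂P := by
          refine integral_congr_ae (ae_of_all _ fun ω => ?_)
          by_cases h1 : D ω = d <;> by_cases h2 : M ω = m <;> simp [h1, h2]
      _ = ∫ ω, ((if D ω = d then (1:ℝ) else 0) * (if M ω = m then (1:ℝ) else 0) * V ω)
          * (if Y ω ≤ a then (1:ℝ) else 0) ∂P := ta.symm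
      _ = ∫ ω, ((if D ω = d then (1:ℝ) else 0) * V ω) *
          ((if Ypot d m ω ≤ a then (1:ℝ) else 0) * (if Mpot d ω = m then (1:ℝ) else 0)) ∂P := by
          refine integral_congr_ae (ae_of_all _ fun ω => ?_)
          by_cases h1 : D ω = d
          · have hM1 : Mpot d ω = M ω := hcons_M d ω h1
            by_cases h2 : M ω = m
            · have hY1 : Ypot d m ω = Y ω := hcons_Y d m ω h1 h2
              simp [h1, hM1, h2, hY1] <;> ring
            · simp [h1, hM1, h2] <;> ring
          · simp [h1]
      _ = ∫ ω, ((if D ω = d then (1:ℝ) else 0) * V ω) *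
          (u ω * (P[(fun ω' => if Mpot d ω' = m then (1:ℝ) else 0)|(MeasurableSpace.comap (fun ω => (D ω, X ω)) inferInstance)]) ω) ∂P := tc
      _ = ∫ ω, ((if D ω = d then (1:ℝ) else 0) * V ω * u ω) *
          (P[(fun ω' => if Mpot d ω' = m then (1:ℝ) else 0)|(MeasurableSpace.comap (fun ω => (D ω, X ω)) inferInstance)]) ω ∂P := by
          refine integral_congr_ae (ae_of_all _ fun ω => ?_); ring
      _ = ∫ ω, ((if D ω = d then (1:ℝ) else 0) * V ω * u ω) *
          (if Mpot d ω = m then (1:ℝ) else 0) ∂P := te.symm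
      _ = ∫ ω, ((if D ω = d then (1:ℝ) else 0) * (if M ω = m then (1:ℝ) else 0) * V ω)
          * u ω ∂P := by
          refine integral_congr_ae (ae_of_all _ fun ω => ?_)
          by_cases h1 : D ω = d
          · have hM1 : Mpot d ω = M ω := hcons_M d ω h1
            by_cases h2 : M ω = m
            · simp [h1, hM1, h2] <;> ring
            · simp [h1, hM1, h2] <;> ring
          · simp [h1]
  -- === Fid ===
  have hFtF : ∀ᵐ ω ∂P, M ω = m → max 0 (min 1 (F d m (X ω))) = F d m (X ω) := by
    filter_upwards [hFd01] with ω h hm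
    rw [hm] at h
    rw [min_eq_right h.2, max_eq_right h.1]
  have hFid : ∀ᵐ ω ∂P, M ω = m → F d m (X ω) = u ω := by
    have hFtm : Measurable fun x : 𝓧 => max 0 (min 1 (F d m x)) :=
      measurable_const.max (measurable_const.min hFdm)
    have hV_sm : StronglyMeasurable[(MeasurableSpace.comap X inferInstance)] fun ω => max 0 (min 1 (F d m (X ω))) - u ω :=
      ((hFtm.comp measX).stronglyMeasurable).sub hu_sm
    have hFtb : ∀ ω, |max 0 (min 1 (F d m (X ω)))| ≤ 1 := by
      intro ω
      rw [abs_le]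
      constructor
      · calc (-1:ℝ) ≤ 0 := by norm_num
          _ ≤ _ := le_max_left _ _
      · exact max_le (by norm_num) (min_le_left _ _)
    have hVb : ∀ᵐ ω ∂P, |max 0 (min 1 (F d m (X ω))) - u ω| ≤ 2 := by
      filter_upwards [hu01] with ω hu
      calc |max 0 (min 1 (F d m (X ω))) - u ω|
          ≤ |max 0 (min 1 (F d m (X ω)))| + |u ω| := abs_sub _ _
        _ ≤ 1 + 1 := add_le_add (hFtb ω) (abs_le.mpr ⟨by linarith [hu.1], hu.2⟩)
        _ = 2 := by norm_num
    have e3V := hE3 _ 2 hV_sm hVb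
    -- replace F by its truncation on {M = m}
    have eqa : ∫ ω, ((if D ω = d then (1:ℝ) else 0) * (if M ω = m then (1:ℝ) else 0) *
          (max 0 (min 1 (F d m (X ω))) - u ω)) * (max 0 (min 1 (F d m (X ω)))) ∂P
        = ∫ ω, ((if D ω = d then (1:ℝ) else 0) * (if M ω = m then (1:ℝ) else 0) *
          (max 0 (min 1 (F d m (X ω))) - u ω)) * F d m (X ω) ∂P := by
      refine integral_congr_ae ?_
      filter_upwards [hFtF] with ω h
      by_cases h2 : M ω = m
      · rw [h h2]
      · simp [h2]
    have hVmeas : Measurable fun ω => max 0 (min 1 (F d m (X ω))) - u ω :=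
      ((hFtm.comp hX)).sub ((hu_sm.mono hmX).measurable)
    have int_a : Integrable (fun ω => ((if D ω = d then (1:ℝ) else 0) *
        (if M ω = m then (1:ℝ) else 0) * (max 0 (min 1 (F d m (X ω))) - u ω)) *
        (max 0 (min 1 (F d m (X ω))))) P := by
      refine bddInt ((((hDδ d).mul hIM).mul hVmeas).mul (hFtm.comp hX)).aestronglyMeasurable
        (c := 2) ?_
      filter_upwards [hVb] with ω h
      rw [abs_mul, abs_mul, abs_mul]
      calc |if D ω = d then (1:ℝ) else 0| * |if M ω = m then (1:ℝ) else 0| *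
            |max 0 (min 1 (F d m (X ω))) - u ω| * |max 0 (min 1 (F d m (X ω)))|
          ≤ 1 * 1 * 2 * 1 := by
            refine mul_le_mul (mul_le_mul (mul_le_mul (iteb _ _) (iteb _ _)
              (abs_nonneg _) (by norm_num)) h (abs_nonneg _) (by norm_num)) (hFtb ω)
              (abs_nonneg _) (by norm_num)
        _ = 2 := by norm_num
    have int_b : Integrable (fun ω => ((if D ω = d then (1:ℝ) else 0) *
        (if M ω = m then (1:ℝ) else 0) * (max 0 (min 1 (F d m (X ω))) - u ω)) * u ω) P := by
      refine bddInt ((((hDδ d).mul hIM).mul hVmeas).mul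
        ((hu_sm.mono hmX).measurable)).aestronglyMeasurable (c := 2) ?_
      filter_upwards [hVb, hu01] with ω h hu
      rw [abs_mul, abs_mul, abs_mul]
      calc |if D ω = d then (1:ℝ) else 0| * |if M ω = m then (1:ℝ) else 0| *
            |max 0 (min 1 (F d m (X ω))) - u ω| * |u ω|
          ≤ 1 * 1 * 2 * 1 := by
            refine mul_le_mul (mul_le_mul (mul_le_mul (iteb _ _) (iteb _ _)
              (abs_nonneg _) (by norm_num)) h (abs_nonneg _) (by norm_num))
              (abs_le.mpr ⟨by linarith [hu.1], hu.2⟩) (abs_nonneg _) (by norm_num)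
        _ = 2 := by norm_num
    have hzero1 : ∫ ω, ((if M ω = m then (1:ℝ) else 0) *
        (max 0 (min 1 (F d m (X ω))) - u ω)^2) * (if D ω = d then (1:ℝ) else 0) ∂P = 0 := by
      have hsplit : ∫ ω, ((if M ω = m then (1:ℝ) else 0) *
          (max 0 (min 1 (F d m (X ω))) - u ω)^2) * (if D ω = d then (1:ℝ) else 0) ∂P
          = ∫ ω, (((if D ω = d then (1:ℝ) else 0) * (if M ω = m then (1:ℝ) else 0) *
              (max 0 (min 1 (F d m (X ω))) - u ω)) * (max 0 (min 1 (F d m (X ω))))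
            - ((if D ω = d then (1:ℝ) else 0) * (if M ω = m then (1:ℝ) else 0) *
              (max 0 (min 1 (F d m (X ω))) - u ω)) * u ω) ∂P := by
        refine integral_congr_ae (ae_of_all _ fun ω => ?_); ring
      rw [hsplit, integral_sub int_a int_b, eqa, e3V, sub_self]
    -- condition on (M,X) and use the overlap in q
    have hIMVsm : StronglyMeasurable[(MeasurableSpace.comap (fun ω => (M ω, X ω)) inferInstance)] fun ω => (if M ω = m then (1:ℝ) else 0) *
        (max 0 (min 1 (F d m (X ω))) - u ω)^2 := by
      have h1 : Measurable fun t : 𝓜 × 𝓧 => if t.1 = m then (1:ℝ) else 0 :=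
        Measurable.ite (measurable_fst (measurableSet_singleton m))
          measurable_const measurable_const
      exact ((h1.comp measMX).stronglyMeasurable).mul
        (((hV_sm.mono hXleMX).pow 2))
    have hIMVb : ∀ᵐ ω ∂P, |(if M ω = m then (1:ℝ) else 0) *
        (max 0 (min 1 (F d m (X ω))) - u ω)^2| ≤ 4 := by
      filter_upwards [hVb] with ω h
      rw [abs_mul]
      calc |if M ω = m then (1:ℝ) else 0| * |(max 0 (min 1 (F d m (X ω))) - u ω)^2|
          ≤ 1 * 4 := by
            refine mul_le_mul (iteb _ _) ?_ (abs_nonneg _) (by norm_num)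
            rw [abs_pow]
            calc |max 0 (min 1 (F d m (X ω))) - u ω|^2 ≤ 2^2 := by
                  exact pow_le_pow_left₀ (abs_nonneg _) h 2
              _ = 4 := by norm_num
        _ = 4 := by norm_num
    have hzero2 : ∫ ω, ((if M ω = m then (1:ℝ) else 0) *
        (max 0 (min 1 (F d m (X ω))) - u ω)^2) * q d (M ω) (X ω) ∂P = 0 := by
      rw [← tower hmMX (c := 4) hIMVsm hIMVb (hDint d) hqverd]
      exact hzero1
    have hq1 : ∀ᵐ ω ∂P, ε₂ ≤ q d (M ω) (X ω) := by
      filter_upwards [hoverqd] with ω h; exact h.1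
    have hIMVint : Integrable (fun ω => (if M ω = m then (1:ℝ) else 0) *
        (max 0 (min 1 (F d m (X ω))) - u ω)^2) P :=
      bddInt ((hIMVsm.mono hmMX).aestronglyMeasurable) hIMVb
    have hIMVqint : Integrable (fun ω => ((if M ω = m then (1:ℝ) else 0) *
        (max 0 (min 1 (F d m (X ω))) - u ω)^2) * q d (M ω) (X ω)) P := by
      refine bddInt ((hIMVsm.mono hmMX).aestronglyMeasurable.mul
        (hqdmx.comp (hM.prodMk hX)).aestronglyMeasurable) (c := 4) ?_
      filter_upwards [hIMVb, hoverqd] with ω h hq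
      rw [abs_mul]
      calc |(if M ω = m then (1:ℝ) else 0) * (max 0 (min 1 (F d m (X ω))) - u ω)^2| *
            |q d (M ω) (X ω)| ≤ 4 * 1 := by
            refine mul_le_mul h (abs_le.mpr ⟨by linarith [hq.1], by linarith [hq.2]⟩)
              (abs_nonneg _) (by norm_num)
        _ = 4 := by norm_num
    have hae0 : (fun ω => (if M ω = m then (1:ℝ) else 0) *
        (max 0 (min 1 (F d m (X ω))) - u ω)^2) =ᵐ[P] 0 := by
      refine aeZero hε₂ (ae_of_all _ fun ω => ?_) hq1 hIMVint hIMVqint hzero2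
      positivity
    filter_upwards [hae0, hFtF] with ω h0 hFt hm
    have h1 : (if M ω = m then (1:ℝ) else 0) = 1 := by rw [if_pos hm]
    rw [Pi.zero_apply, h1, one_mul, pow_eq_zero_iff (by norm_num), sub_eq_zero] at h0
    rw [← hFt hm, h0]
  -- === final chain ===
  haveI : IsFiniteMeasure (P.trim hmX) := isFiniteMeasure_trim hmX
  have hpb' := hoverp d' hd'1
  -- strongly measurable weights
  have hpX_sm : StronglyMeasurable[(MeasurableSpace.comap X inferInstance)] fun ω => p d' (X ω) :=
    (hpd'x.comp measX).stronglyMeasurable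
  have hDd'_DX : StronglyMeasurable[(MeasurableSpace.comap (fun ω => (D ω, X ω)) inferInstance)] fun ω => if D ω = d' then (1:ℝ) else 0 := by
    have hφ : Measurable fun t : ℕ × 𝓧 => if t.1 = d' then (1:ℝ) else 0 :=
      Measurable.ite (measurable_fst (measurableSet_singleton d'))
        measurable_const measurable_const
    exact (hφ.comp measDX).stronglyMeasurable
  have h4sm : StronglyMeasurable[(MeasurableSpace.comap (fun ω => (D ω, X ω)) inferInstance)] fun ω =>
      (if D ω = d' then (1:ℝ) else 0) * u ω / p d' (X ω) :=
    ((hDd'_DX.measurable.mul (hu_sm.mono hXleDX).measurable).div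
      (hpX_sm.mono hXleDX).measurable).stronglyMeasurable
  have h4b : ∀ᵐ ω ∂P, |(if D ω = d' then (1:ℝ) else 0) * u ω / p d' (X ω)| ≤ 1/ε₁ := by
    filter_upwards [hu01, hpb'] with ω hu hp
    rw [abs_div, abs_mul]
    have hppos : 0 < p d' (X ω) := lt_of_lt_of_le hε₁ hp.1
    rw [abs_of_pos hppos]
    refine div_le_div₀ zero_le_one ?_ hε₁ hp.1
    exact mul_le_one₀ (iteb _ _) (abs_nonneg _) (abs_le.mpr ⟨by linarith [hu.1], hu.2⟩)
  have h5sm : StronglyMeasurable[(MeasurableSpace.comap (fun ω => (D ω, X ω)) inferInstance)] fun ω =>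
      (if D ω = d' then (1:ℝ) else 0) / p d' (X ω) :=
    (hDd'_DX.measurable.div (hpX_sm.mono hXleDX).measurable).stronglyMeasurable
  have h5b : ∀ᵐ ω ∂P, |(if D ω = d' then (1:ℝ) else 0) / p d' (X ω)| ≤ 1/ε₁ := by
    filter_upwards [hpb'] with ω hp
    rw [abs_div]
    have hppos : 0 < p d' (X ω) := lt_of_lt_of_le hε₁ hp.1
    rw [abs_of_pos hppos]
    exact div_le_div₀ zero_le_one (iteb _ _) hε₁ hp.1
  have h6sm : StronglyMeasurable[(MeasurableSpace.comap X inferInstance)] fun ω => (1:ℝ) / p d' (X ω) :=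
    (measurable_const.div hpX_sm.measurable).stronglyMeasurable
  have h6b : ∀ᵐ ω ∂P, |(1:ℝ) / p d' (X ω)| ≤ 1/ε₁ := by
    filter_upwards [hpb'] with ω hp
    rw [abs_div]
    have hppos : 0 < p d' (X ω) := lt_of_lt_of_le hε₁ hp.1
    rw [abs_of_pos hppos]
    exact div_le_div₀ zero_le_one (by norm_num) hε₁ hp.1
  -- A3(d,d') product rule
  have hA3prod' : (P[(fun ω => (if Ypot d m ω ≤ a then (1:ℝ) else 0) *
        (if Mpot d' ω = m then (1:ℝ) else 0))|(MeasurableSpace.comap (fun ω => (D ω, X ω)) inferInstance)])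
      =ᵐ[P] fun ω => (P[(fun ω' => if Ypot d m ω' ≤ a then (1:ℝ) else 0)|(MeasurableSpace.comap (fun ω => (D ω, X ω)) inferInstance)]) ω *
        (P[(fun ω' => if Mpot d' ω' = m then (1:ℝ) else 0)|(MeasurableSpace.comap (fun ω => (D ω, X ω)) inferInstance)]) ω := by
    have h := (condIndepFun_iff_condExp_inter_preimage_eq_mul
        (hYpot d m) (hMpot d')).mp hA3dd'
      (Set.Iic a) {m} measurableSet_Iic (measurableSet_singleton m)
    have e1 : (Ypot d m ⁻¹' Set.Iic a ∩ Mpot d' ⁻¹' {m}).indicator (fun _ => (1:ℝ))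
        = fun ω => (if Ypot d m ω ≤ a then (1:ℝ) else 0) *
          (if Mpot d' ω = m then (1:ℝ) else 0) := by
      funext ω
      by_cases h1 : Ypot d m ω ≤ a <;> by_cases h2 : Mpot d' ω = m <;>
        simp [Set.indicator_apply, h1, h2]
    have e2 : (Ypot d m ⁻¹' Set.Iic a).indicator (fun _ => (1:ℝ))
        = fun ω => if Ypot d m ω ≤ a then (1:ℝ) else 0 := by
      funext ω; by_cases h1 : Ypot d m ω ≤ a <;> simp [Set.indicator_apply, h1]
    have e3 : (Mpot d' ⁻¹' {m}).indicator (fun _ => (1:ℝ))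
        = fun ω => if Mpot d' ω = m then (1:ℝ) else 0 := by
      funext ω; by_cases h2 : Mpot d' ω = m <;> simp [Set.indicator_apply, h2]
    rw [e1, e2, e3] at h
    exact h
  -- A2 product rule with the set (Iic a) ×ˢ {m}
  have hA2prod2 : (P[(fun ω => ((if Ypot d m ω ≤ a then (1:ℝ) else 0) *
        (if Mpot d' ω = m then (1:ℝ) else 0)) * (if D ω = d' then (1:ℝ) else 0))|(MeasurableSpace.comap X inferInstance)])
      =ᵐ[P] fun ω => (P[(fun ω' => (if Ypot d m ω' ≤ a then (1:ℝ) else 0) *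
          (if Mpot d' ω' = m then (1:ℝ) else 0))|(MeasurableSpace.comap X inferInstance)]) ω *
        (P[(fun ω' => if D ω' = d' then (1:ℝ) else 0)|(MeasurableSpace.comap X inferInstance)]) ω := by
    have h := (condIndepFun_iff_condExp_inter_preimage_eq_mul
        ((hYpot d m).prodMk (hMpot d')) hD).mp hA2m
      (Set.Iic a ×ˢ {m}) {d'} (measurableSet_Iic.prod (measurableSet_singleton m))
      (measurableSet_singleton d')
    have hpre : (fun ω => (Ypot d m ω, Mpot d' ω)) ⁻¹' (Set.Iic a ×ˢ ({m} : Set 𝓜))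
        = {ω | Ypot d m ω ≤ a ∧ Mpot d' ω = m} := by
      ext ω
      simp only [Set.mem_preimage, Set.mem_prod, Set.mem_Iic, Set.mem_singleton_iff,
        Set.mem_setOf_eq]
    rw [hpre] at h
    have e1 : (({ω | Ypot d m ω ≤ a ∧ Mpot d' ω = m}) ∩
          D ⁻¹' {d'}).indicator (fun _ => (1:ℝ))
        = fun ω => ((if Ypot d m ω ≤ a then (1:ℝ) else 0) *
          (if Mpot d' ω = m then (1:ℝ) else 0)) * (if D ω = d' then (1:ℝ) else 0) := by
      funext ω
      by_cases h1 : Ypot d m ω ≤ a <;> by_cases h2 : Mpot d' ω = m <;>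
        by_cases h3 : D ω = d' <;> simp [Set.indicator_apply, h1, h2, h3]
    have e2 : ({ω | Ypot d m ω ≤ a ∧ Mpot d' ω = m}).indicator
          (fun _ => (1:ℝ))
        = fun ω => (if Ypot d m ω ≤ a then (1:ℝ) else 0) *
          (if Mpot d' ω = m then (1:ℝ) else 0) := by
      funext ω
      by_cases h1 : Ypot d m ω ≤ a <;> by_cases h2 : Mpot d' ω = m <;>
        simp [Set.indicator_apply, h1, h2]
    have e3 : (D ⁻¹' {d'}).indicator (fun _ => (1:ℝ))
        = fun ω => if D ω = d' then (1:ℝ) else 0 := by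
      funext ω; by_cases h3 : D ω = d' <;> simp [Set.indicator_apply, h3]
    rw [e1, e2, e3] at h
    exact h
  have hIAIBint : Integrable (fun ω => (if Ypot d m ω ≤ a then (1:ℝ) else 0) *
      (if Mpot d' ω = m then (1:ℝ) else 0)) P :=
    int01 (hIA.mul hIB) (fun ω => by
      rw [abs_mul]; exact mul_le_one₀ (iteb _ _) (abs_nonneg _) (iteb _ _))
  have hIAIBDint : Integrable (fun ω => ((if Ypot d m ω ≤ a then (1:ℝ) else 0) *
      (if Mpot d' ω = m then (1:ℝ) else 0)) * (if D ω = d' then (1:ℝ) else 0)) P :=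
    int01 ((hIA.mul hIB).mul (hDδ d')) (fun ω => by
      rw [abs_mul, abs_mul]
      exact mul_le_one₀ (mul_le_one₀ (iteb _ _) (abs_nonneg _) (iteb _ _))
        (abs_nonneg _) (iteb _ _))
  calc ∫ ω, (if M ω = m then (1:ℝ) else 0) *
        ((if D ω = d' then (1:ℝ) else 0) / p d' (X ω) * F d (M ω) (X ω)) ∂P
      = ∫ ω, ((if D ω = d' then (1:ℝ) else 0) * u ω / p d' (X ω)) *
        (if Mpot d' ω = m then (1:ℝ) else 0) ∂P := by
        refine integral_congr_ae ?_
        filter_upwards [hFid] with ω h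
        by_cases h2 : M ω = m
        · have hF : F d (M ω) (X ω) = u ω := by rw [h2]; exact h h2
          by_cases h1 : D ω = d'
          · have hB : Mpot d' ω = M ω := hcons_M d' ω h1
            rw [hF]
            simp only [h2, h1, hB, if_pos rfl]
            ring
          · simp [h1, h2]
        · by_cases h1 : D ω = d'
          · have hB : Mpot d' ω = M ω := hcons_M d' ω h1
            simp [h1, h2, hB]
          · simp [h1, h2]
    _ = ∫ ω, ((if D ω = d' then (1:ℝ) else 0) * u ω / p d' (X ω)) *
        (P[(fun ω' => if Mpot d' ω' = m then (1:ℝ) else 0)|(MeasurableSpace.comap (fun ω => (D ω, X ω)) inferInstance)]) ω ∂P :=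
        tower hmDX (c := 1/ε₁) h4sm h4b hIBint (Filter.EventuallyEq.refl _ _)
    _ = ∫ ω, ((if D ω = d' then (1:ℝ) else 0) / p d' (X ω)) *
        (P[(fun ω' => (if Ypot d m ω' ≤ a then (1:ℝ) else 0) *
          (if Mpot d' ω' = m then (1:ℝ) else 0))|(MeasurableSpace.comap (fun ω => (D ω, X ω)) inferInstance)]) ω ∂P := by
        refine integral_congr_ae ?_
        filter_upwards [hL1, hA3prod'] with ω h1 h2
        rw [h2, ← h1]
        ring
    _ = ∫ ω, ((if D ω = d' then (1:ℝ) else 0) / p d' (X ω)) *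
        ((if Ypot d m ω ≤ a then (1:ℝ) else 0) *
          (if Mpot d' ω = m then (1:ℝ) else 0)) ∂P :=
        (tower hmDX (c := 1/ε₁) h5sm h5b hIAIBint (Filter.EventuallyEq.refl _ _)).symm
    _ = ∫ ω, ((1:ℝ) / p d' (X ω)) *
        (((if Ypot d m ω ≤ a then (1:ℝ) else 0) *
          (if Mpot d' ω = m then (1:ℝ) else 0)) * (if D ω = d' then (1:ℝ) else 0)) ∂P := by
        refine integral_congr_ae (ae_of_all _ fun ω => ?_); ring
    _ = ∫ ω, ((1:ℝ) / p d' (X ω)) *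
        ((P[(fun ω' => (if Ypot d m ω' ≤ a then (1:ℝ) else 0) *
          (if Mpot d' ω' = m then (1:ℝ) else 0))|(MeasurableSpace.comap X inferInstance)]) ω * p d' (X ω)) ∂P := by
        refine tower hmX (c := 1/ε₁) h6sm h6b hIAIBDint ?_
        filter_upwards [hA2prod2, hpver d' hd'1] with ω h1 h2
        rw [h1, ← h2]
    _ = ∫ ω, (P[(fun ω' => (if Ypot d m ω' ≤ a then (1:ℝ) else 0) *
        (if Mpot d' ω' = m then (1:ℝ) else 0))|(MeasurableSpace.comap X inferInstance)]) ω ∂P := by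
        refine integral_congr_ae ?_
        filter_upwards [hpb'] with ω hp
        have hp0 : p d' (X ω) ≠ 0 := by
          have : 0 < p d' (X ω) := lt_of_lt_of_le hε₁ hp.1
          exact ne_of_gt this
        field_simp
    _ = ∫ ω, (if Ypot d m ω ≤ a then (1:ℝ) else 0) *
        (if Mpot d' ω = m then (1:ℝ) else 0) ∂P := integral_condExp hmX
    _ = (P ({ω | Ypot d m ω ≤ a} ∩ {ω | Mpot d' ω = m})).toReal := by
        have hset : MeasurableSet ({ω | Ypot d m ω ≤ a} ∩ {ω | Mpot d' ω = m}) :=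
          (measurableSet_le (hYpot d m) measurable_const).inter
            (hMpot d' (measurableSet_singleton m))
        have e : (fun ω => (if Ypot d m ω ≤ a then (1:ℝ) else 0) *
            (if Mpot d' ω = m then (1:ℝ) else 0))
            = ({ω | Ypot d m ω ≤ a} ∩ {ω | Mpot d' ω = m}).indicator (fun _ => (1:ℝ)) := by
          funext ω
          by_cases h1 : Ypot d m ω ≤ a <;> by_cases h2 : Mpot d' ω = m <;>
            simp [Set.indicator_apply, h1, h2]
        rw [e, integral_indicator_const (1:ℝ) hset, smul_eq_mul, mul_one, Measure.real_def]

/-- Under Assumptions 1.1–1.4 and the overlap condition, for every `a ∈ ℝ` and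
`d ∈ {0,1}` with `d' := 1 − d`, the expectation of the efficient score at the true nuisance
parameters recovers the potential-outcome c.d.f.: `E[ψ_{d,d',a}] = P(Y(d, M(d')) ≤ a)`. -/
theorem statement_1
    {Ω 𝓜 𝓧 : Type*} [MeasurableSpace Ω] [StandardBorelSpace Ω]
    [MeasurableSpace 𝓜] [Countable 𝓜] [MeasurableSingletonClass 𝓜] [MeasurableSpace 𝓧]
    (P : Measure Ω) [IsProbabilityMeasure P]
    (Y : Ω → ℝ) (D : Ω → ℕ) (M : Ω → 𝓜) (X : Ω → 𝓧)
    (hY : Measurable Y) (hD : Measurable D) (hM : Measurable M) (hX : Measurable X)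
    (hD01 : ∀ ω, D ω ≤ 1)
    -- potential outcomes and potential mediators
    (Ypot : ℕ → 𝓜 → Ω → ℝ) (Mpot : ℕ → Ω → 𝓜)
    (hYpot : ∀ d m, Measurable (Ypot d m)) (hMpot : ∀ d, Measurable (Mpot d))
    -- Assumption 1.1 (consistency / SUTVA)
    (hcons_M : ∀ d ω, D ω = d → Mpot d ω = M ω)
    (hcons_Y : ∀ d m ω, D ω = d → M ω = m → Ypot d m ω = Y ω)
    -- Assumption 1.2 : (Y(d,m), M(d')) ⫫ D | X
    (hA2 : ∀ d ≤ 1, ∀ d' ≤ 1, ∀ m : 𝓜,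
      CondIndepFun (MeasurableSpace.comap X inferInstance) hX.comap_le
        (fun ω => (Ypot d m ω, Mpot d' ω)) D P)
    -- Assumption 1.3 : Y(d,m) ⫫ M(d') | (D, X)
    (hA3 : ∀ d ≤ 1, ∀ d' ≤ 1, ∀ m : 𝓜,
      CondIndepFun (MeasurableSpace.comap (fun ω => (D ω, X ω)) inferInstance)
        (hD.prodMk hX).comap_le (Ypot d m) (Mpot d') P)
    -- Assumption 1.4 (common support) : P(D = d | M, X) > 0 a.s.
    (hA4 : ∀ d ≤ 1, ∀ᵐ ω ∂P,
      0 < (P[(fun ω' => if D ω' = d then (1:ℝ) else 0) |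
        MeasurableSpace.comap (fun ω' => (M ω', X ω')) inferInstance]) ω)
    -- threshold and treatment indices
    (a : ℝ) (d d' : ℕ) (hd : d ≤ 1) (hd'def : d' = 1 - d)
    -- true nuisance parameters
    (p : ℕ → 𝓧 → ℝ) (q : ℕ → 𝓜 → 𝓧 → ℝ) (F : ℕ → 𝓜 → 𝓧 → ℝ) (g : ℕ → 𝓧 → ℝ)
    (hpmeas : Measurable (fun t : ℕ × 𝓧 => p t.1 t.2))
    (hqmeas : Measurable (fun t : ℕ × 𝓜 × 𝓧 => q t.1 t.2.1 t.2.2))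
    (hFmeas : Measurable (fun t : ℕ × 𝓜 × 𝓧 => F t.1 t.2.1 t.2.2))
    (hgmeas : Measurable (fun t : ℕ × 𝓧 => g t.1 t.2))
    -- p_δ(X) is a version of P(D = δ | X)
    (hpver : ∀ δ ≤ 1, (fun ω => p δ (X ω)) =ᵐ[P]
      P[(fun ω' => if D ω' = δ then (1:ℝ) else 0) | MeasurableSpace.comap X inferInstance])
    -- q_δ(M,X) is a version of P(D = δ | M, X)
    (hqver : ∀ δ ≤ 1, (fun ω => q δ (M ω) (X ω)) =ᵐ[P]
      P[(fun ω' => if D ω' = δ then (1:ℝ) else 0) |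
        MeasurableSpace.comap (fun ω' => (M ω', X ω')) inferInstance])
    -- F_a(D,M,X) is a version of P(Y ≤ a | D, M, X)
    (hFver : (fun ω => F (D ω) (M ω) (X ω)) =ᵐ[P]
      P[(fun ω' => if Y ω' ≤ a then (1:ℝ) else 0) |
        MeasurableSpace.comap (fun ω' => (D ω', M ω', X ω')) inferInstance])
    -- g_a(D,X) is a version of E[F_a(d, M, X) | D, X]
    (hgver : (fun ω => g (D ω) (X ω)) =ᵐ[P]
      P[(fun ω' => F d (M ω') (X ω')) |
        MeasurableSpace.comap (fun ω' => (D ω', X ω')) inferInstance])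
    -- overlap
    (ε₁ ε₂ : ℝ) (hε₁ : ε₁ ∈ Set.Ioo (0:ℝ) (1/2)) (hε₂ : ε₂ ∈ Set.Ioo (0:ℝ) (1/2))
    (hoverp : ∀ δ ≤ 1, ∀ᵐ ω ∂P, ε₁ ≤ p δ (X ω) ∧ p δ (X ω) ≤ 1 - ε₁)
    (hoverq : ∀ δ ≤ 1, ∀ᵐ ω ∂P, ε₂ ≤ q δ (M ω) (X ω) ∧ q δ (M ω) (X ω) ≤ 1 - ε₂) :
    ∫ ω,
      ((if D ω = d then (1:ℝ) else 0) * q d' (M ω) (X ω)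
          / (p d' (X ω) * q d (M ω) (X ω))
          * ((if Y ω ≤ a then (1:ℝ) else 0) - F d (M ω) (X ω))
        + (if D ω = d' then (1:ℝ) else 0) / p d' (X ω)
          * (F d (M ω) (X ω) - g d' (X ω))
        + g d' (X ω)) ∂P
      = (P {ω | Ypot d (Mpot d' ω) ω ≤ a}).toReal := by
  classical
  -- index bookkeeping
  have hd'1 : d' ≤ 1 := by omega
  have hne : d ≠ d' := by omega
  have hDc : ∀ ω, D ω = d ∨ D ω = d' := fun ω => by have := hD01 ω; omega
  have hε₁0 : (0:ℝ) < ε₁ := hε₁.1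
  have hε₂0 : (0:ℝ) < ε₂ := hε₂.1
  have hε₁1 : ε₁ < 1 := lt_trans hε₁.2 (by norm_num)
  have hε₂1 : ε₂ < 1 := lt_trans hε₂.2 (by norm_num)
  -- σ-algebras
  have hmX : MeasurableSpace.comap X inferInstance ≤ (inferInstance : MeasurableSpace Ω) :=
    hX.comap_le
  have hmMX : MeasurableSpace.comap (fun ω => (M ω, X ω)) inferInstance ≤
      (inferInstance : MeasurableSpace Ω) := (hM.prodMk hX).comap_le
  have hmDX : MeasurableSpace.comap (fun ω => (D ω, X ω)) inferInstance ≤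
      (inferInstance : MeasurableSpace Ω) := (hD.prodMk hX).comap_le
  have hmDMX : MeasurableSpace.comap (fun ω => (D ω, M ω, X ω)) inferInstance ≤
      (inferInstance : MeasurableSpace Ω) := (hD.prodMk (hM.prodMk hX)).comap_le
  have measX : Measurable[MeasurableSpace.comap X inferInstance] X :=
    Measurable.of_comap_le le_rfl
  have measMX : Measurable[MeasurableSpace.comap (fun ω => (M ω, X ω)) inferInstance]
      (fun ω => (M ω, X ω)) := Measurable.of_comap_le le_rfl
  have measDX : Measurable[MeasurableSpace.comap (fun ω => (D ω, X ω)) inferInstance]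
      (fun ω => (D ω, X ω)) := Measurable.of_comap_le le_rfl
  have measDMX : Measurable[MeasurableSpace.comap (fun ω => (D ω, M ω, X ω)) inferInstance]
      (fun ω => (D ω, M ω, X ω)) := Measurable.of_comap_le le_rfl
  -- component measurability
  have hpd'x : Measurable fun x : 𝓧 => p d' x :=
    hpmeas.comp (measurable_const.prodMk measurable_id)
  have hgd'x : Measurable fun x : 𝓧 => g d' x :=
    hgmeas.comp (measurable_const.prodMk measurable_id)
  have hFdmx : Measurable fun t : 𝓜 × 𝓧 => F d t.1 t.2 :=
    hFmeas.comp (measurable_const.prodMk measurable_id)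
  have hqdmx : Measurable fun t : 𝓜 × 𝓧 => q d t.1 t.2 :=
    hqmeas.comp (measurable_const.prodMk measurable_id)
  have hqd'mx : Measurable fun t : 𝓜 × 𝓧 => q d' t.1 t.2 :=
    hqmeas.comp (measurable_const.prodMk measurable_id)
  have hDδ : ∀ δ : ℕ, Measurable fun ω => if D ω = δ then (1:ℝ) else 0 := fun δ =>
    Measurable.ite (hD (measurableSet_singleton δ)) measurable_const measurable_const
  have hYa : Measurable fun ω => if Y ω ≤ a then (1:ℝ) else 0 :=
    Measurable.ite (measurableSet_le hY measurable_const) measurable_const measurable_const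
  have iteb : ∀ (c : Prop) (inst : Decidable c), |if c then (1:ℝ) else 0| ≤ 1 := by
    intro c inst; split_ifs <;> norm_num
  have int01 : ∀ {f : Ω → ℝ}, Measurable f → (∀ᵐ ω ∂P, |f ω| ≤ 1) → Integrable f P :=
    fun hf hb => bddInt hf.aestronglyMeasurable hb
  have hDint : ∀ δ : ℕ, Integrable (fun ω => if D ω = δ then (1:ℝ) else 0) P := fun δ =>
    int01 (hDδ δ) (ae_of_all _ fun ω => iteb _ _)
  have hYaint : Integrable (fun ω => if Y ω ≤ a then (1:ℝ) else 0) P :=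
    int01 hYa (ae_of_all _ fun ω => iteb _ _)
  -- bounds from the overlap conditions
  have hpb' := hoverp d' hd'1
  have hqdb := hoverq d hd
  have hqd'b := hoverq d' hd'1
  -- F(D,M,X) ∈ [0,1] a.e.
  have hF01 : ∀ᵐ ω ∂P, 0 ≤ F (D ω) (M ω) (X ω) ∧ F (D ω) (M ω) (X ω) ≤ 1 := by
    have h := cond01 hmDMX hYaint (ae_of_all _ fun ω => by constructor <;> split_ifs <;>
      norm_num)
    filter_upwards [hFver, h] with ω h1 h2
    rw [h1]; exact h2
  -- F(d,M,X) ∈ [0,1] a.e., via the overlap in q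
  have hFd01 : ∀ᵐ ω ∂P, 0 ≤ F d (M ω) (X ω) ∧ F d (M ω) (X ω) ≤ 1 := by
    have hBmeas : Measurable fun ω =>
        if 0 ≤ F d (M ω) (X ω) ∧ F d (M ω) (X ω) ≤ 1 then (0:ℝ) else 1 := by
      have hset : MeasurableSet {t : 𝓜 × 𝓧 | 0 ≤ F d t.1 t.2 ∧ F d t.1 t.2 ≤ 1} :=
        (measurableSet_le measurable_const hFdmx).inter
          (measurableSet_le hFdmx measurable_const)
      have hφ : Measurable fun t : 𝓜 × 𝓧 =>
          if 0 ≤ F d t.1 t.2 ∧ F d t.1 t.2 ≤ 1 then (0:ℝ) else 1 :=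
        Measurable.ite hset measurable_const measurable_const
      exact hφ.comp (hM.prodMk hX)
    have hBsm : StronglyMeasurable[MeasurableSpace.comap (fun ω => (M ω, X ω)) inferInstance]
        (fun ω => if 0 ≤ F d (M ω) (X ω) ∧ F d (M ω) (X ω) ≤ 1 then (0:ℝ) else 1) := by
      have hset : MeasurableSet {t : 𝓜 × 𝓧 | 0 ≤ F d t.1 t.2 ∧ F d t.1 t.2 ≤ 1} :=
        (measurableSet_le measurable_const hFdmx).inter
          (measurableSet_le hFdmx measurable_const)
      have hφ : Measurable fun t : 𝓜 × 𝓧 =>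
          if 0 ≤ F d t.1 t.2 ∧ F d t.1 t.2 ≤ 1 then (0:ℝ) else 1 :=
        Measurable.ite hset measurable_const measurable_const
      exact (hφ.comp measMX).stronglyMeasurable
    have hBb : ∀ ω, |(if 0 ≤ F d (M ω) (X ω) ∧ F d (M ω) (X ω) ≤ 1 then (0:ℝ) else 1)| ≤ 1 :=
      by intro ω; split_ifs <;> norm_num
    have t1 : ∫ ω, (if 0 ≤ F d (M ω) (X ω) ∧ F d (M ω) (X ω) ≤ 1 then (0:ℝ) else 1) *
          (if D ω = d then (1:ℝ) else 0) ∂P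
        = ∫ ω, (if 0 ≤ F d (M ω) (X ω) ∧ F d (M ω) (X ω) ≤ 1 then (0:ℝ) else 1) *
          q d (M ω) (X ω) ∂P :=
      tower hmMX (c := 1) hBsm (ae_of_all _ hBb) (hDint d) (hqver d hd)
    have t2 : ∫ ω, (if 0 ≤ F d (M ω) (X ω) ∧ F d (M ω) (X ω) ≤ 1 then (0:ℝ) else 1) *
          (if D ω = d then (1:ℝ) else 0) ∂P = 0 := by
      refine integral_eq_zero_of_ae ?_
      filter_upwards [hF01] with ω h
      by_cases h1 : D ω = d
      · have : 0 ≤ F d (M ω) (X ω) ∧ F d (M ω) (X ω) ≤ 1 := by rw [← h1]; exact h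
        simp [this]
      · simp [h1]
    have hz : (fun ω => if 0 ≤ F d (M ω) (X ω) ∧ F d (M ω) (X ω) ≤ 1 then (0:ℝ) else 1)
        =ᵐ[P] 0 := by
      refine aeZero hε₂0 (ae_of_all _ fun ω => by
          simp only [Pi.zero_apply]; split_ifs <;> norm_num)
        (by filter_upwards [hqdb] with ω h; exact h.1) (int01 hBmeas (ae_of_all _ hBb)) ?_
        (t1 ▸ t2)
      refine bddInt (hBmeas.mul (hqdmx.comp (hM.prodMk hX))).aestronglyMeasurable (c := 1) ?_
      filter_upwards [hqdb] with ω h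
      rw [abs_mul]
      exact mul_le_one₀ (hBb ω) (abs_nonneg _)
        (abs_le.mpr ⟨by linarith [h.1], by linarith [h.2]⟩)
    filter_upwards [hz] with ω h
    by_contra hc
    rw [Pi.zero_apply, if_neg hc] at h
    exact one_ne_zero h
  have hFdint : Integrable (fun ω => F d (M ω) (X ω)) P := by
    refine int01 (hFdmx.comp (hM.prodMk hX)) ?_
    filter_upwards [hFd01] with ω h
    exact abs_le.mpr ⟨by linarith [h.1], h.2⟩
  -- g(D,X) ∈ [0,1] a.e.
  have hgDX01 : ∀ᵐ ω ∂P, 0 ≤ g (D ω) (X ω) ∧ g (D ω) (X ω) ≤ 1 := by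
    have h := cond01 hmDX hFdint hFd01
    filter_upwards [hgver, h] with ω h1 h2
    rw [h1]; exact h2
  -- g(d',X) ∈ [0,1] a.e., via the overlap in p
  have hg01 : ∀ᵐ ω ∂P, 0 ≤ g d' (X ω) ∧ g d' (X ω) ≤ 1 := by
    have hset : MeasurableSet {x : 𝓧 | 0 ≤ g d' x ∧ g d' x ≤ 1} :=
      (measurableSet_le measurable_const hgd'x).inter
        (measurableSet_le hgd'x measurable_const)
    have hφ : Measurable fun x : 𝓧 => if 0 ≤ g d' x ∧ g d' x ≤ 1 then (0:ℝ) else 1 :=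
      Measurable.ite hset measurable_const measurable_const
    have hBmeas : Measurable fun ω =>
        if 0 ≤ g d' (X ω) ∧ g d' (X ω) ≤ 1 then (0:ℝ) else 1 := hφ.comp hX
    have hBsm : StronglyMeasurable[MeasurableSpace.comap X inferInstance]
        (fun ω => if 0 ≤ g d' (X ω) ∧ g d' (X ω) ≤ 1 then (0:ℝ) else 1) :=
      (hφ.comp measX).stronglyMeasurable
    have hBb : ∀ ω, |(if 0 ≤ g d' (X ω) ∧ g d' (X ω) ≤ 1 then (0:ℝ) else 1)| ≤ 1 := by
      intro ω; split_ifs <;> norm_num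
    have t1 : ∫ ω, (if 0 ≤ g d' (X ω) ∧ g d' (X ω) ≤ 1 then (0:ℝ) else 1) *
          (if D ω = d' then (1:ℝ) else 0) ∂P
        = ∫ ω, (if 0 ≤ g d' (X ω) ∧ g d' (X ω) ≤ 1 then (0:ℝ) else 1) * p d' (X ω) ∂P :=
      tower hmX (c := 1) hBsm (ae_of_all _ hBb) (hDint d') (hpver d' hd'1)
    have t2 : ∫ ω, (if 0 ≤ g d' (X ω) ∧ g d' (X ω) ≤ 1 then (0:ℝ) else 1) *
          (if D ω = d' then (1:ℝ) else 0) ∂P = 0 := by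
      refine integral_eq_zero_of_ae ?_
      filter_upwards [hgDX01] with ω h
      by_cases h1 : D ω = d'
      · have : 0 ≤ g d' (X ω) ∧ g d' (X ω) ≤ 1 := by rw [← h1]; exact h
        simp [this]
      · simp [h1]
    have hz : (fun ω => if 0 ≤ g d' (X ω) ∧ g d' (X ω) ≤ 1 then (0:ℝ) else 1) =ᵐ[P] 0 := by
      refine aeZero hε₁0 (ae_of_all _ fun ω => by
          simp only [Pi.zero_apply]; split_ifs <;> norm_num)
        (by filter_upwards [hpb'] with ω h; exact h.1) (int01 hBmeas (ae_of_all _ hBb)) ?_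
        (t1 ▸ t2)
      refine bddInt (hBmeas.mul (hpd'x.comp hX)).aestronglyMeasurable (c := 1) ?_
      filter_upwards [hpb'] with ω h
      rw [abs_mul]
      exact mul_le_one₀ (hBb ω) (abs_nonneg _)
        (abs_le.mpr ⟨by linarith [h.1], by linarith [h.2]⟩)
    filter_upwards [hz] with ω h
    by_contra hc
    rw [Pi.zero_apply, if_neg hc] at h
    exact one_ne_zero h
  have hgint : Integrable (fun ω => g d' (X ω)) P := by
    refine int01 (hgd'x.comp hX) ?_
    filter_upwards [hg01] with ω h
    exact abs_le.mpr ⟨by linarith [h.1], h.2⟩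
    -- ===== Step 1: first correction term =====
  have h1meas : Measurable fun ω => (if D ω = d then (1:ℝ) else 0) * q d' (M ω) (X ω) /
      (p d' (X ω) * q d (M ω) (X ω)) :=
    ((hDδ d).mul (hqd'mx.comp (hM.prodMk hX))).div
      ((hpd'x.comp hX).mul (hqdmx.comp (hM.prodMk hX)))
  have h1sm : StronglyMeasurable[(MeasurableSpace.comap (fun ω => (D ω, M ω, X ω)) inferInstance)] fun ω =>
      (if D ω = d then (1:ℝ) else 0) * q d' (M ω) (X ω) /
      (p d' (X ω) * q d (M ω) (X ω)) := by
    have hφ : Measurable fun t : ℕ × 𝓜 × 𝓧 =>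
        (if t.1 = d then (1:ℝ) else 0) * q d' t.2.1 t.2.2 /
          (p d' t.2.2 * q d t.2.1 t.2.2) := by
      refine Measurable.div ?_ ?_
      · exact (Measurable.ite (measurable_fst (measurableSet_singleton d)) measurable_const
          measurable_const).mul (hqd'mx.comp measurable_snd)
      · exact ((hpd'x.comp (measurable_snd.comp measurable_snd))).mul
          (hqdmx.comp measurable_snd)
    exact (hφ.comp measDMX).stronglyMeasurable
  have h1b : ∀ᵐ ω ∂P, |(if D ω = d then (1:ℝ) else 0) * q d' (M ω) (X ω) /
      (p d' (X ω) * q d (M ω) (X ω))| ≤ (1-ε₂)/(ε₁*ε₂) := by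
    filter_upwards [hpb', hqdb, hqd'b] with ω hp hqd hqd'
    rw [abs_div, abs_mul]
    have hb1 : |if D ω = d then (1:ℝ) else 0| * |q d' (M ω) (X ω)| ≤ 1-ε₂ := by
      have hq' : |q d' (M ω) (X ω)| ≤ 1-ε₂ := abs_le.mpr ⟨by linarith [hqd'.1], hqd'.2⟩
      calc |if D ω = d then (1:ℝ) else 0| * |q d' (M ω) (X ω)| ≤ 1 * (1-ε₂) :=
            mul_le_mul (iteb _ _) hq' (abs_nonneg _) (by norm_num)
        _ = 1-ε₂ := one_mul _
    have hb2 : ε₁*ε₂ ≤ |p d' (X ω) * q d (M ω) (X ω)| := by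
      rw [abs_mul, abs_of_pos (lt_of_lt_of_le hε₁0 hp.1),
        abs_of_pos (lt_of_lt_of_le hε₂0 hqd.1)]
      exact mul_le_mul hp.1 hqd.1 (le_of_lt hε₂0) (by linarith [hp.1])
    exact div_le_div₀ (by linarith) hb1 (by positivity) hb2
  have tA : ∫ ω, ((if D ω = d then (1:ℝ) else 0) * q d' (M ω) (X ω) /
        (p d' (X ω) * q d (M ω) (X ω))) * (if Y ω ≤ a then (1:ℝ) else 0) ∂P
      = ∫ ω, ((if D ω = d then (1:ℝ) else 0) * q d' (M ω) (X ω) /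
        (p d' (X ω) * q d (M ω) (X ω))) * F (D ω) (M ω) (X ω) ∂P :=
    tower hmDMX (c := (1-ε₂)/(ε₁*ε₂)) h1sm h1b hYaint hFver
  have intFD : ∫ ω, ((if D ω = d then (1:ℝ) else 0) * q d' (M ω) (X ω) /
        (p d' (X ω) * q d (M ω) (X ω))) * F (D ω) (M ω) (X ω) ∂P
      = ∫ ω, ((if D ω = d then (1:ℝ) else 0) * q d' (M ω) (X ω) /
        (p d' (X ω) * q d (M ω) (X ω))) * F d (M ω) (X ω) ∂P := by
    refine integral_congr_ae (ae_of_all _ fun ω => ?_)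
    by_cases h : D ω = d
    · simp [h]
    · simp [h]
  have int_h1Ya : Integrable (fun ω => ((if D ω = d then (1:ℝ) else 0) * q d' (M ω) (X ω) /
      (p d' (X ω) * q d (M ω) (X ω))) * (if Y ω ≤ a then (1:ℝ) else 0)) P := by
    refine bddInt (h1meas.mul hYa).aestronglyMeasurable (c := (1-ε₂)/(ε₁*ε₂)) ?_
    filter_upwards [h1b] with ω h
    rw [abs_mul]
    calc |(if D ω = d then (1:ℝ) else 0) * q d' (M ω) (X ω) /
          (p d' (X ω) * q d (M ω) (X ω))| * |if Y ω ≤ a then (1:ℝ) else 0|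
        ≤ ((1-ε₂)/(ε₁*ε₂)) * 1 := mul_le_mul h (iteb _ _) (abs_nonneg _)
          (div_nonneg (by linarith) (by positivity))
      _ = (1-ε₂)/(ε₁*ε₂) := mul_one _
  have int_h1F : Integrable (fun ω => ((if D ω = d then (1:ℝ) else 0) * q d' (M ω) (X ω) /
      (p d' (X ω) * q d (M ω) (X ω))) * F d (M ω) (X ω)) P := by
    refine bddInt (h1meas.mul (hFdmx.comp (hM.prodMk hX))).aestronglyMeasurable
      (c := (1-ε₂)/(ε₁*ε₂)) ?_
    filter_upwards [h1b, hFd01] with ω h hF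
    rw [abs_mul]
    calc |(if D ω = d then (1:ℝ) else 0) * q d' (M ω) (X ω) /
          (p d' (X ω) * q d (M ω) (X ω))| * |F d (M ω) (X ω)|
        ≤ ((1-ε₂)/(ε₁*ε₂)) * 1 := mul_le_mul h (abs_le.mpr ⟨by linarith [hF.1], hF.2⟩)
          (abs_nonneg _) (div_nonneg (by linarith) (by positivity))
      _ = (1-ε₂)/(ε₁*ε₂) := mul_one _
  have I1 : ∫ ω, ((if D ω = d then (1:ℝ) else 0) * q d' (M ω) (X ω) /
      (p d' (X ω) * q d (M ω) (X ω))) *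
      ((if Y ω ≤ a then (1:ℝ) else 0) - F d (M ω) (X ω)) ∂P = 0 := by
    have e : ∫ ω, ((if D ω = d then (1:ℝ) else 0) * q d' (M ω) (X ω) /
        (p d' (X ω) * q d (M ω) (X ω))) *
        ((if Y ω ≤ a then (1:ℝ) else 0) - F d (M ω) (X ω)) ∂P
        = ∫ ω, (((if D ω = d then (1:ℝ) else 0) * q d' (M ω) (X ω) /
            (p d' (X ω) * q d (M ω) (X ω))) * (if Y ω ≤ a then (1:ℝ) else 0)
          - ((if D ω = d then (1:ℝ) else 0) * q d' (M ω) (X ω) /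
            (p d' (X ω) * q d (M ω) (X ω))) * F d (M ω) (X ω)) ∂P := by
      refine integral_congr_ae (ae_of_all _ fun ω => ?_); ring
    rw [e, integral_sub int_h1Ya int_h1F, tA, intFD, sub_self]
  -- ===== Step 2 and 3: second correction term and baseline =====
  have h2meas : Measurable fun ω => (if D ω = d' then (1:ℝ) else 0) / p d' (X ω) :=
    (hDδ d').div (hpd'x.comp hX)
  have h2sm : StronglyMeasurable[(MeasurableSpace.comap (fun ω => (D ω, X ω)) inferInstance)] fun ω =>
      (if D ω = d' then (1:ℝ) else 0) / p d' (X ω) := by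
    have hφ : Measurable fun t : ℕ × 𝓧 => (if t.1 = d' then (1:ℝ) else 0) / p d' t.2 :=
      (Measurable.ite (measurable_fst (measurableSet_singleton d')) measurable_const
        measurable_const).div (hpd'x.comp measurable_snd)
    exact (hφ.comp measDX).stronglyMeasurable
  have h2b : ∀ᵐ ω ∂P, |(if D ω = d' then (1:ℝ) else 0) / p d' (X ω)| ≤ 1/ε₁ := by
    filter_upwards [hpb'] with ω hp
    rw [abs_div, abs_of_pos (lt_of_lt_of_le hε₁0 hp.1)]
    exact div_le_div₀ zero_le_one (iteb _ _) hε₁0 hp.1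
  have tB : ∫ ω, ((if D ω = d' then (1:ℝ) else 0) / p d' (X ω)) * F d (M ω) (X ω) ∂P
      = ∫ ω, ((if D ω = d' then (1:ℝ) else 0) / p d' (X ω)) * g (D ω) (X ω) ∂P :=
    tower hmDX (c := 1/ε₁) h2sm h2b hFdint hgver
  have EFG : ∫ ω, ((if D ω = d' then (1:ℝ) else 0) / p d' (X ω)) * F d (M ω) (X ω) ∂P
      = ∫ ω, ((if D ω = d' then (1:ℝ) else 0) / p d' (X ω)) * g d' (X ω) ∂P := by
    rw [tB]
    refine integral_congr_ae (ae_of_all _ fun ω => ?_)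
    by_cases h : D ω = d'
    · simp [h]
    · simp [h]
  have int_h2F : Integrable (fun ω => ((if D ω = d' then (1:ℝ) else 0) / p d' (X ω)) *
      F d (M ω) (X ω)) P := by
    refine bddInt (h2meas.mul (hFdmx.comp (hM.prodMk hX))).aestronglyMeasurable
      (c := 1/ε₁) ?_
    filter_upwards [h2b, hFd01] with ω h hF
    rw [abs_mul]
    calc |(if D ω = d' then (1:ℝ) else 0) / p d' (X ω)| * |F d (M ω) (X ω)|
        ≤ (1/ε₁) * 1 := mul_le_mul h (abs_le.mpr ⟨by linarith [hF.1], hF.2⟩)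
          (abs_nonneg _) (by positivity)
      _ = 1/ε₁ := mul_one _
  have int_h2g : Integrable (fun ω => ((if D ω = d' then (1:ℝ) else 0) / p d' (X ω)) *
      g d' (X ω)) P := by
    refine bddInt (h2meas.mul (hgd'x.comp hX)).aestronglyMeasurable (c := 1/ε₁) ?_
    filter_upwards [h2b, hg01] with ω h hg
    rw [abs_mul]
    calc |(if D ω = d' then (1:ℝ) else 0) / p d' (X ω)| * |g d' (X ω)|
        ≤ (1/ε₁) * 1 := mul_le_mul h (abs_le.mpr ⟨by linarith [hg.1], hg.2⟩)
          (abs_nonneg _) (by positivity)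
      _ = 1/ε₁ := mul_one _
  have I2 : ∫ ω, ((if D ω = d' then (1:ℝ) else 0) / p d' (X ω)) *
      (F d (M ω) (X ω) - g d' (X ω)) ∂P = 0 := by
    have e : ∫ ω, ((if D ω = d' then (1:ℝ) else 0) / p d' (X ω)) *
        (F d (M ω) (X ω) - g d' (X ω)) ∂P
        = ∫ ω, (((if D ω = d' then (1:ℝ) else 0) / p d' (X ω)) * F d (M ω) (X ω)
          - ((if D ω = d' then (1:ℝ) else 0) / p d' (X ω)) * g d' (X ω)) ∂P := by
      refine integral_congr_ae (ae_of_all _ fun ω => ?_); ring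
    rw [e, integral_sub int_h2F int_h2g, EFG, sub_self]
  have tC : ∫ ω, (g d' (X ω) / p d' (X ω)) * (if D ω = d' then (1:ℝ) else 0) ∂P
      = ∫ ω, (g d' (X ω) / p d' (X ω)) * p d' (X ω) ∂P := by
    refine tower hmX (c := 1/ε₁) ?_ ?_ (hDint d') (hpver d' hd'1)
    · exact ((hgd'x.comp measX).div (hpd'x.comp measX)).stronglyMeasurable
    · filter_upwards [hpb', hg01] with ω hp hg
      rw [abs_div, abs_of_pos (lt_of_lt_of_le hε₁0 hp.1)]
      exact div_le_div₀ zero_le_one (abs_le.mpr ⟨by linarith [hg.1], hg.2⟩) hε₁0 hp.1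
  have I3 : ∫ ω, g d' (X ω) ∂P
      = ∫ ω, ((if D ω = d' then (1:ℝ) else 0) / p d' (X ω)) * F d (M ω) (X ω) ∂P := by
    rw [EFG]
    have e1 : ∫ ω, g d' (X ω) ∂P = ∫ ω, (g d' (X ω) / p d' (X ω)) * p d' (X ω) ∂P := by
      refine integral_congr_ae ?_
      filter_upwards [hpb'] with ω hp
      have hp0 : p d' (X ω) ≠ 0 := ne_of_gt (lt_of_lt_of_le hε₁0 hp.1)
      field_simp
    have e2 : ∫ ω, (g d' (X ω) / p d' (X ω)) * (if D ω = d' then (1:ℝ) else 0) ∂P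
        = ∫ ω, ((if D ω = d' then (1:ℝ) else 0) / p d' (X ω)) * g d' (X ω) ∂P := by
      refine integral_congr_ae (ae_of_all _ fun ω => ?_); ring
    rw [e1, ← tC, e2]
  -- ===== assemble the three terms =====
  have intT1 : Integrable (fun ω => ((if D ω = d then (1:ℝ) else 0) * q d' (M ω) (X ω) /
      (p d' (X ω) * q d (M ω) (X ω))) *
      ((if Y ω ≤ a then (1:ℝ) else 0) - F d (M ω) (X ω))) P := by
    have e : (fun ω => ((if D ω = d then (1:ℝ) else 0) * q d' (M ω) (X ω) /
        (p d' (X ω) * q d (M ω) (X ω))) *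
        ((if Y ω ≤ a then (1:ℝ) else 0) - F d (M ω) (X ω)))
        = fun ω => (((if D ω = d then (1:ℝ) else 0) * q d' (M ω) (X ω) /
            (p d' (X ω) * q d (M ω) (X ω))) * (if Y ω ≤ a then (1:ℝ) else 0)
          - ((if D ω = d then (1:ℝ) else 0) * q d' (M ω) (X ω) /
            (p d' (X ω) * q d (M ω) (X ω))) * F d (M ω) (X ω)) := by
      funext ω; ring
    rw [e]
    exact int_h1Ya.sub int_h1F
  have intT2 : Integrable (fun ω => ((if D ω = d' then (1:ℝ) else 0) / p d' (X ω)) *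
      (F d (M ω) (X ω) - g d' (X ω))) P := by
    have e : (fun ω => ((if D ω = d' then (1:ℝ) else 0) / p d' (X ω)) *
        (F d (M ω) (X ω) - g d' (X ω)))
        = fun ω => (((if D ω = d' then (1:ℝ) else 0) / p d' (X ω)) * F d (M ω) (X ω)
          - ((if D ω = d' then (1:ℝ) else 0) / p d' (X ω)) * g d' (X ω)) := by
      funext ω; ring
    rw [e]
    exact int_h2F.sub int_h2g
  have MAIN : ∫ ω, ((if D ω = d' then (1:ℝ) else 0) / p d' (X ω)) * F d (M ω) (X ω) ∂P
      = (P {ω | Ypot d (Mpot d' ω) ω ≤ a}).toReal := by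
    have hfm_meas : ∀ m : 𝓜, Measurable fun ω => (if M ω = m then (1:ℝ) else 0) *
        ((if D ω = d' then (1:ℝ) else 0) / p d' (X ω) * F d (M ω) (X ω)) := fun m =>
      (Measurable.ite (hM (measurableSet_singleton m)) measurable_const
        measurable_const).mul (h2meas.mul (hFdmx.comp (hM.prodMk hX)))
    have hpt : ∀ ω, ((if D ω = d' then (1:ℝ) else 0) / p d' (X ω)) * F d (M ω) (X ω)
        = ∑' m : 𝓜, (if M ω = m then (1:ℝ) else 0) *
          ((if D ω = d' then (1:ℝ) else 0) / p d' (X ω) * F d (M ω) (X ω)) := by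
      intro ω
      rw [tsum_eq_single (M ω) ?_]
      · rw [if_pos rfl, one_mul]
      · intro b hb
        rw [if_neg (fun h => hb h.symm), zero_mul]
    have hfm_bdd : ∀ m : 𝓜, ∀ᵐ ω ∂P, |(if M ω = m then (1:ℝ) else 0) *
        ((if D ω = d' then (1:ℝ) else 0) / p d' (X ω) * F d (M ω) (X ω))|
        ≤ (1/ε₁) * (if M ω = m then (1:ℝ) else 0) := by
      intro m
      filter_upwards [h2b, hFd01] with ω h hF
      by_cases hm : M ω = m
      · rw [if_pos hm, one_mul, mul_one, abs_mul]
        calc |(if D ω = d' then (1:ℝ) else 0) / p d' (X ω)| * |F d (M ω) (X ω)|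
            ≤ (1/ε₁) * 1 := mul_le_mul h (abs_le.mpr ⟨by linarith [hF.1], hF.2⟩)
              (abs_nonneg _) (by positivity)
          _ = 1/ε₁ := mul_one _
      · rw [if_neg hm, zero_mul, abs_zero, mul_zero]
    have hlint : ∀ m : 𝓜, ∫⁻ ω, ‖(if M ω = m then (1:ℝ) else 0) *
        ((if D ω = d' then (1:ℝ) else 0) / p d' (X ω) * F d (M ω) (X ω))‖₊ ∂P
        ≤ ENNReal.ofReal (1/ε₁) * P (M ⁻¹' {m}) := by
      intro m
      have hub : ∀ᵐ ω ∂P, (‖(if M ω = m then (1:ℝ) else 0) *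
          ((if D ω = d' then (1:ℝ) else 0) / p d' (X ω) * F d (M ω) (X ω))‖₊ : ℝ≥0∞)
          ≤ (M ⁻¹' {m}).indicator (fun _ => ENNReal.ofReal (1/ε₁)) ω := by
        filter_upwards [hfm_bdd m] with ω h
        by_cases hm : M ω = m
        · rw [Set.indicator_of_mem (show ω ∈ M ⁻¹' {m} by simp [hm])]
          rw [← enorm_eq_nnnorm, ← ofReal_norm, Real.norm_eq_abs]
          refine ENNReal.ofReal_le_ofReal ?_
          rw [if_pos hm, mul_one] at h
          rw [if_pos hm]
          exact h
        · rw [Set.indicator_of_notMem (show ω ∉ M ⁻¹' {m} by simp [hm])]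
          have hz : (if M ω = m then (1:ℝ) else 0) *
              ((if D ω = d' then (1:ℝ) else 0) / p d' (X ω) * F d (M ω) (X ω)) = 0 := by
            rw [if_neg hm, zero_mul]
          rw [hz]
          simp
      calc ∫⁻ ω, ‖(if M ω = m then (1:ℝ) else 0) *
            ((if D ω = d' then (1:ℝ) else 0) / p d' (X ω) * F d (M ω) (X ω))‖₊ ∂P
          ≤ ∫⁻ ω, (M ⁻¹' {m}).indicator (fun _ => ENNReal.ofReal (1/ε₁)) ω ∂P :=
            lintegral_mono_ae hub
        _ = ENNReal.ofReal (1/ε₁) * P (M ⁻¹' {m}) :=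
            lintegral_indicator_const (hM (measurableSet_singleton m)) _
    have hsum1 : ∑' m : 𝓜, P (M ⁻¹' {m}) = 1 := by
      have hdis : Pairwise (Function.onFun Disjoint fun m : 𝓜 => M ⁻¹' {m}) := by
        intro i j hij
        exact Disjoint.preimage M (by simpa using hij)
      have hmeas : ∀ m : 𝓜, MeasurableSet (M ⁻¹' {m}) := fun m =>
        hM (measurableSet_singleton m)
      rw [← measure_iUnion hdis hmeas]
      have huniv : (⋃ m : 𝓜, M ⁻¹' {m}) = Set.univ := by
        ext ω; simp
      rw [huniv, measure_univ]
    have hne_top : (∑' m : 𝓜, ∫⁻ ω, ‖(if M ω = m then (1:ℝ) else 0) *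
        ((if D ω = d' then (1:ℝ) else 0) / p d' (X ω) * F d (M ω) (X ω))‖₊ ∂P) ≠ ⊤ := by
      refine ne_of_lt (lt_of_le_of_lt (ENNReal.tsum_le_tsum hlint) ?_)
      rw [ENNReal.tsum_mul_left, hsum1, mul_one]
      exact ENNReal.ofReal_lt_top
    have hswap : ∫ ω, (∑' m : 𝓜, (if M ω = m then (1:ℝ) else 0) *
        ((if D ω = d' then (1:ℝ) else 0) / p d' (X ω) * F d (M ω) (X ω))) ∂P
        = ∑' m : 𝓜, ∫ ω, (if M ω = m then (1:ℝ) else 0) *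
          ((if D ω = d' then (1:ℝ) else 0) / p d' (X ω) * F d (M ω) (X ω)) ∂P :=
      integral_tsum (fun m => (hfm_meas m).aestronglyMeasurable) hne_top
    have hkey : ∀ m : 𝓜, ∫ ω, (if M ω = m then (1:ℝ) else 0) *
        ((if D ω = d' then (1:ℝ) else 0) / p d' (X ω) * F d (M ω) (X ω)) ∂P
        = (P ({ω | Ypot d m ω ≤ a} ∩ {ω | Mpot d' ω = m})).toReal := fun m =>
      key_m P Y D M X hY hD hM hX hD01 Ypot Mpot hYpot hMpot hcons_M hcons_Y a d d'
        hd hd'1 hne m (hA2 d hd d' hd'1 m) (hA3 d hd d hd m) (hA3 d hd d' hd'1 m)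
        p F q hpmeas hqmeas hFmeas hpver (hqver d hd) hFver ε₁ ε₂ hε₁0 hε₂0
        hoverp (hoverq d hd) hε₁1 hε₂1 hFd01
    have hdisj : Pairwise (Function.onFun Disjoint fun m : 𝓜 =>
        {ω | Ypot d m ω ≤ a} ∩ {ω | Mpot d' ω = m}) := by
      intro i j hij
      refine Set.disjoint_left.mpr ?_
      rintro ω ⟨_, h2⟩ ⟨_, h4⟩
      exact hij (h2.symm.trans h4)
    have hmeas2 : ∀ m : 𝓜, MeasurableSet ({ω | Ypot d m ω ≤ a} ∩ {ω | Mpot d' ω = m}) :=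
      fun m => (measurableSet_le (hYpot d m) measurable_const).inter
        (hMpot d' (measurableSet_singleton m))
    calc ∫ ω, ((if D ω = d' then (1:ℝ) else 0) / p d' (X ω)) * F d (M ω) (X ω) ∂P
        = ∫ ω, (∑' m : 𝓜, (if M ω = m then (1:ℝ) else 0) *
          ((if D ω = d' then (1:ℝ) else 0) / p d' (X ω) * F d (M ω) (X ω))) ∂P := by
          refine integral_congr_ae (ae_of_all _ fun ω => ?_)
          exact hpt ω
      _ = ∑' m : 𝓜, ∫ ω, (if M ω = m then (1:ℝ) else 0) *
          ((if D ω = d' then (1:ℝ) else 0) / p d' (X ω) * F d (M ω) (X ω)) ∂P := hswap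
      _ = ∑' m : 𝓜, (P ({ω | Ypot d m ω ≤ a} ∩ {ω | Mpot d' ω = m})).toReal :=
          tsum_congr hkey
      _ = (∑' m : 𝓜, P ({ω | Ypot d m ω ≤ a} ∩ {ω | Mpot d' ω = m})).toReal :=
          (ENNReal.tsum_toReal_eq (fun m => measure_ne_top P _)).symm
      _ = (P {ω | Ypot d (Mpot d' ω) ω ≤ a}).toReal := by
          congr 1
          rw [← measure_iUnion hdisj hmeas2]
          congr 1
          ext ω
          simp only [Set.mem_iUnion, Set.mem_inter_iff, Set.mem_setOf_eq]
          constructor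
          · rintro ⟨m, h1, h2⟩
            rw [h2]
            exact h1
          · intro h
            exact ⟨Mpot d' ω, h, rfl⟩
  calc ∫ ω,
      ((if D ω = d then (1:ℝ) else 0) * q d' (M ω) (X ω)
          / (p d' (X ω) * q d (M ω) (X ω))
          * ((if Y ω ≤ a then (1:ℝ) else 0) - F d (M ω) (X ω))
        + (if D ω = d' then (1:ℝ) else 0) / p d' (X ω)
          * (F d (M ω) (X ω) - g d' (X ω))
        + g d' (X ω)) ∂P
      = (∫ ω, ((if D ω = d then (1:ℝ) else 0) * q d' (M ω) (X ω)
          / (p d' (X ω) * q d (M ω) (X ω))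
          * ((if Y ω ≤ a then (1:ℝ) else 0) - F d (M ω) (X ω))
        + (if D ω = d' then (1:ℝ) else 0) / p d' (X ω)
          * (F d (M ω) (X ω) - g d' (X ω))) ∂P) + ∫ ω, g d' (X ω) ∂P :=
        integral_add (intT1.add intT2) hgint
    _ = (∫ ω, (if D ω = d then (1:ℝ) else 0) * q d' (M ω) (X ω)
          / (p d' (X ω) * q d (M ω) (X ω))
          * ((if Y ω ≤ a then (1:ℝ) else 0) - F d (M ω) (X ω)) ∂P)
        + (∫ ω, (if D ω = d' then (1:ℝ) else 0) / p d' (X ω)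
          * (F d (M ω) (X ω) - g d' (X ω)) ∂P) + ∫ ω, g d' (X ω) ∂P := by
        rw [integral_add intT1 intT2]
    _ = 0 + 0 + ∫ ω, ((if D ω = d' then (1:ℝ) else 0) / p d' (X ω)) *
          F d (M ω) (X ω) ∂P := by rw [I1, I2, I3]
    _ = (P {ω | Ypot d (Mpot d' ω) ω ≤ a}).toReal := by rw [MAIN]; ring
end

section
/- Under Assumptions 1.1 and 1.2 and the overlap condition ε₁ ≤ p_d(X) P-a.s., for every a ∈ ℝ and d ∈ {0,1}, the doubly robust score with both treatment state indices equal to d satisfies E[ (1{D=d}/p_d(X))·(Y_a − G_a(d,X)) + G_a(d,X) ] = P(Y(d, M(d)) ≤ a), where G_a(δ,x) is measurable with G_a(D,X) a version of P(Y ≤ a | D, X). -/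
open MeasureTheory ProbabilityTheory

set_option maxHeartbeats 1000000 in
/-- Under Assumptions 1.1 and 1.2 and overlap `ε₁ ≤ p_d(X)` a.s., for every
`a ∈ ℝ` and `d ∈ {0,1}`, the doubly robust score with both treatment indices equal to `d`
satisfies `E[(1{D=d}/p_d(X))·(Y_a − G_a(d,X)) + G_a(d,X)] = P(Y(d, M(d)) ≤ a)`, where
`G_a(D,X)` is a version of `P(Y ≤ a | D, X)`. -/
theorem statement_2
    {Ω 𝓜 𝓧 : Type*} [MeasurableSpace Ω] [StandardBorelSpace Ω]
    [MeasurableSpace 𝓜] [Countable 𝓜] [MeasurableSingletonClass 𝓜] [MeasurableSpace 𝓧]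
    (P : Measure Ω) [IsProbabilityMeasure P]
    (Y : Ω → ℝ) (D : Ω → ℕ) (M : Ω → 𝓜) (X : Ω → 𝓧)
    (hY : Measurable Y) (hD : Measurable D) (hM : Measurable M) (hX : Measurable X)
    (hD01 : ∀ ω, D ω ≤ 1)
    -- potential outcomes and potential mediators
    (Ypot : ℕ → 𝓜 → Ω → ℝ) (Mpot : ℕ → Ω → 𝓜)
    (hYpot : ∀ d m, Measurable (Ypot d m)) (hMpot : ∀ d, Measurable (Mpot d))
    -- Assumption 1.1 (consistency / SUTVA)
    (hcons_M : ∀ d ω, D ω = d → Mpot d ω = M ω)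
    (hcons_Y : ∀ d m ω, D ω = d → M ω = m → Ypot d m ω = Y ω)
    -- Assumption 1.2 : (Y(d,m), M(d')) ⫫ D | X
    (hA2 : ∀ d ≤ 1, ∀ d' ≤ 1, ∀ m : 𝓜,
      CondIndepFun (MeasurableSpace.comap X inferInstance) hX.comap_le
        (fun ω => (Ypot d m ω, Mpot d' ω)) D P)
    -- threshold and treatment index
    (a : ℝ) (d : ℕ) (hd : d ≤ 1)
    -- the propensity score p_δ(X), a version of P(D = δ | X), with overlap
    (p : ℕ → 𝓧 → ℝ)
    (hpmeas : Measurable (fun t : ℕ × 𝓧 => p t.1 t.2))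
    (hpver : ∀ δ ≤ 1, (fun ω => p δ (X ω)) =ᵐ[P]
      P[(fun ω' => if D ω' = δ then (1:ℝ) else 0) | MeasurableSpace.comap X inferInstance])
    (ε₁ : ℝ) (hε₁ : ε₁ ∈ Set.Ioo (0:ℝ) (1/2))
    (hoverp : ∀ δ ≤ 1, ∀ᵐ ω ∂P, ε₁ ≤ p δ (X ω) ∧ p δ (X ω) ≤ 1 - ε₁)
    -- G_a(D,X) : a version of P(Y ≤ a | D, X)
    (G : ℕ → 𝓧 → ℝ)
    (hGmeas : Measurable (fun t : ℕ × 𝓧 => G t.1 t.2))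
    (hGver : (fun ω => G (D ω) (X ω)) =ᵐ[P]
      P[(fun ω' => if Y ω' ≤ a then (1:ℝ) else 0) |
        MeasurableSpace.comap (fun ω' => (D ω', X ω')) inferInstance]) :
    ∫ ω,
      ((if D ω = d then (1:ℝ) else 0) / p d (X ω)
          * ((if Y ω ≤ a then (1:ℝ) else 0) - G d (X ω))
        + G d (X ω)) ∂P
      = (P {ω | Ypot d (Mpot d ω) ω ≤ a}).toReal := by
  classical
  obtain ⟨hε₁pos, hε₁lt⟩ := hε₁
  have hm' := hX.comap_le
  have hcomap : ∀ {E : Type} [MeasurableSpace E] (h : 𝓧 → E), Measurable h →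
      Measurable[MeasurableSpace.comap X inferInstance] (fun ω => h (X ω)) := by
    intro E _ h hh s hs
    exact ⟨h ⁻¹' s, hh hs, rfl⟩
  -- the propensity function and its properties
  have hpd : Measurable (p d) := hpmeas.comp (measurable_const.prodMk measurable_id)
  set g : Ω → ℝ := fun ω => p d (X ω) with hgdef
  have hg_meas : Measurable g := hpd.comp hX
  have hg_meas' : Measurable[MeasurableSpace.comap X inferInstance] g := hcomap (p d) hpd
  have hg_ae : ∀ᵐ ω ∂P, ε₁ ≤ g ω ∧ g ω ≤ 1 - ε₁ := hoverp d hd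
  -- sets
  set C : Set Ω := D ⁻¹' {d} with hCdef
  have hC : MeasurableSet C := hD (measurableSet_singleton d)
  have hfC : (fun ω' => if D ω' = d then (1:ℝ) else 0)
      = C.indicator (fun _ => (1:ℝ)) := by
    funext ω
    by_cases h : D ω = d <;> simp [Set.indicator_apply, hCdef, h]
  have hgver : g =ᵐ[P] P[C.indicator (fun _ => (1:ℝ)) | MeasurableSpace.comap X inferInstance] := by
    have := hpver d hd
    rwa [hfC] at this
  set Gd : Ω → ℝ := fun ω => G d (X ω) with hGddef
  have hGdmeas : Measurable (G d) := hGmeas.comp (measurable_const.prodMk measurable_id)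
  have hGd_meas : Measurable Gd := hGdmeas.comp hX
  have hGd_meas' : Measurable[MeasurableSpace.comap X inferInstance] Gd := hcomap (G d) hGdmeas
  set Ya : Ω → ℝ := fun ω => if Y ω ≤ a then (1:ℝ) else 0 with hYadef
  have hYa_meas : Measurable Ya := by
    have : Ya = (Y ⁻¹' Set.Iic a).indicator (fun _ => (1:ℝ)) := by
      funext ω; by_cases h : Y ω ≤ a <;> simp [Set.indicator_apply, hYadef, h]
    rw [this]
    exact (measurable_const.indicator (hY measurableSet_Iic))
  have hYa_bd : ∀ ω, ‖Ya ω‖ ≤ 1 := by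
    intro ω; by_cases h : Y ω ≤ a <;> simp [hYadef, h]
  have hYa_int : Integrable Ya P :=
    (integrable_const (1:ℝ)).mono' hYa_meas.aestronglyMeasurable (ae_of_all _ hYa_bd)
  -- a.e. bound on Gd, using the overlap condition and the version property of G
  have hGd_ae : ∀ᵐ ω ∂P, 0 ≤ Gd ω ∧ Gd ω ≤ 1 := by
    have hmDX := (hD.prodMk hX).comap_le
    have hcond0 : 0 ≤ᵐ[P] P[Ya | (MeasurableSpace.comap (fun ω' => (D ω', X ω')) inferInstance)] :=
      condExp_nonneg (ae_of_all _ fun ω => by by_cases h : Y ω ≤ a <;> simp [hYadef, h])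
    have hcond1 : P[Ya | (MeasurableSpace.comap (fun ω' => (D ω', X ω')) inferInstance)] ≤ᵐ[P] fun _ => (1:ℝ) := by
      have h1 : P[Ya | (MeasurableSpace.comap (fun ω' => (D ω', X ω')) inferInstance)] ≤ᵐ[P] P[(fun _ => (1:ℝ)) | (MeasurableSpace.comap (fun ω' => (D ω', X ω')) inferInstance)] :=
        condExp_mono hYa_int (integrable_const 1)
          (ae_of_all _ fun ω => by by_cases h : Y ω ≤ a <;> simp [hYadef, h])
      calc P[Ya | (MeasurableSpace.comap (fun ω' => (D ω', X ω')) inferInstance)] ≤ᵐ[P] P[(fun _ => (1:ℝ)) | (MeasurableSpace.comap (fun ω' => (D ω', X ω')) inferInstance)] := h1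
        _ = fun _ => (1:ℝ) := condExp_const hmDX 1
    have hGDX01 : ∀ᵐ ω ∂P, 0 ≤ G (D ω) (X ω) ∧ G (D ω) (X ω) ≤ 1 := by
      filter_upwards [hGver, hcond0, hcond1] with ω h1 h2 h3
      rw [h1]; exact ⟨h2, h3⟩
    set A : Set Ω := X ⁻¹' {x | ¬ (0 ≤ G d x ∧ G d x ≤ 1)} with hAdef
    have hAm : MeasurableSet {x : 𝓧 | ¬ (0 ≤ G d x ∧ G d x ≤ 1)} := by
      have : {x : 𝓧 | ¬ (0 ≤ G d x ∧ G d x ≤ 1)}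
          = ((G d) ⁻¹' (Set.Ici 0 ∩ Set.Iic 1))ᶜ := by
        ext x; simp [Set.mem_preimage, Set.mem_Ici, Set.mem_Iic, and_comm]
      rw [this]
      exact (hGdmeas (measurableSet_Ici.inter measurableSet_Iic)).compl
    have hA' : MeasurableSet[MeasurableSpace.comap X inferInstance] A := ⟨_, hAm, rfl⟩
    have hA : MeasurableSet A := hm' _ hA'
    have hAC : P (A ∩ C) = 0 := by
      rw [measure_eq_zero_iff_ae_notMem]
      filter_upwards [hGDX01] with ω h
      rintro ⟨hAω, hCω⟩
      have hDd : D ω = d := hCω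
      apply hAω
      simpa [hDd] using h
    -- show P A = 0 using overlap
    have hCint : Integrable (C.indicator (fun _ => (1:ℝ))) P :=
      (integrable_const (1:ℝ)).indicator hC
    have h1 : ∫ ω in A, C.indicator (fun _ => (1:ℝ)) ω ∂P = 0 := by
      rw [setIntegral_indicator hC]
      have h0 : P.restrict (A ∩ C) = 0 := Measure.restrict_eq_zero.mpr hAC
      rw [h0, integral_zero_measure]
    have h2 : ∫ ω in A, (P[C.indicator (fun _ => (1:ℝ)) | MeasurableSpace.comap X inferInstance]) ω ∂P = 0 := by
      rw [setIntegral_condExp hm' hCint hA']; exact h1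
    have h3 : ∫ ω in A, g ω ∂P = 0 := by
      rw [setIntegral_congr_ae hA (by filter_upwards [hgver] with ω h _ using h)]
      exact h2
    have hg_int : Integrable g P := by
      refine (integrable_const (1:ℝ)).mono' hg_meas.aestronglyMeasurable ?_
      filter_upwards [hg_ae] with ω ⟨ha, hb⟩
      rw [Real.norm_eq_abs, abs_of_nonneg (le_trans hε₁pos.le ha)]
      linarith
    have h4 : ε₁ * (P A).toReal ≤ 0 := by
      have : ∫ ω in A, (fun _ => ε₁) ω ∂P ≤ ∫ ω in A, g ω ∂P := by
        refine setIntegral_mono_ae ((integrable_const ε₁).integrableOn)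
          hg_int.integrableOn ?_
        filter_upwards [hg_ae] with ω h using h.1
      rw [setIntegral_const] at this
      rw [h3] at this
      simpa [smul_eq_mul, mul_comm, Measure.real_def] using this
    have hPA : P A = 0 := by
      have h5 : (P A).toReal ≤ 0 := by
        by_contra h
        push_neg at h
        nlinarith
      have h6 : (P A).toReal = 0 := le_antisymm h5 ENNReal.toReal_nonneg
      exact (ENNReal.toReal_eq_zero_iff _).mp h6 |>.resolve_right (measure_ne_top P A)
    rw [ae_iff]
    exact hPA
  have hGd_int : Integrable Gd P := by
    refine (integrable_const (1:ℝ)).mono' hGd_meas.aestronglyMeasurable ?_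
    filter_upwards [hGd_ae] with ω ⟨h1, h2⟩
    rw [Real.norm_eq_abs, abs_of_nonneg h1]; exact h2
  -- the family of sets B m and the target set S
  set S : Set Ω := {ω | Ypot d (Mpot d ω) ω ≤ a} with hSdef
  set B : 𝓜 → Set Ω := fun m => (fun ω => (Ypot d m ω, Mpot d ω)) ⁻¹' (Set.Iic a ×ˢ {m})
    with hBdef
  have hBmeas : ∀ m, MeasurableSet (B m) := fun m =>
    ((hYpot d m).prodMk (hMpot d)) (measurableSet_Iic.prod (measurableSet_singleton m))
  have hBmem : ∀ m ω, ω ∈ B m ↔ (Ypot d m ω ≤ a ∧ Mpot d ω = m) := by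
    intro m ω
    exact ⟨fun h => ⟨h.1, h.2⟩, fun h => ⟨h.1, h.2⟩⟩
  have hSeq : S = ⋃ m, B m := by
    ext ω
    simp only [hSdef, Set.mem_setOf_eq, Set.mem_iUnion]
    constructor
    · intro h; exact ⟨Mpot d ω, (hBmem _ ω).mpr ⟨h, rfl⟩⟩
    · rintro ⟨m, hm⟩
      obtain ⟨h1, h2⟩ := (hBmem m ω).mp hm
      rw [h2]; exact h1
  have hdisj : Pairwise (Function.onFun Disjoint B) := by
    intro m1 m2 hne
    rw [Function.onFun, Set.disjoint_left]
    intro ω h1 h2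
    exact hne (((hBmem m1 ω).mp h1).2.symm.trans ((hBmem m2 ω).mp h2).2)
  have hS : MeasurableSet S := by rw [hSeq]; exact MeasurableSet.iUnion hBmeas
  -- key conditional independence consequence
  have hkey : ∀ m : 𝓜, (P⟦B m ∩ C | MeasurableSpace.comap X inferInstance⟧) =ᵐ[P]
      fun ω => (P⟦B m | MeasurableSpace.comap X inferInstance⟧) ω * (P⟦C | MeasurableSpace.comap X inferInstance⟧) ω := by
    intro m
    exact (condIndepFun_iff_condExp_inter_preimage_eq_mul
      ((hYpot d m).prodMk (hMpot d)) hD).mp (hA2 d hd d hd m)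
      (Set.Iic a ×ˢ {m}) {d} (measurableSet_Iic.prod (measurableSet_singleton m))
      (measurableSet_singleton d)
  -- the weight function F = g⁻¹ · 1_C
  set F : Ω → ℝ := fun ω => (g ω)⁻¹ * C.indicator (fun _ => (1:ℝ)) ω with hFdef
  have hF_meas : Measurable F := hg_meas.inv.mul (measurable_const.indicator hC)
  have hind_bd : ∀ (T : Set Ω) ω, ‖T.indicator (fun _ => (1:ℝ)) ω‖ ≤ 1 := by
    intro T ω; by_cases h : ω ∈ T <;> simp [Set.indicator_apply, h]
  have hginv_bd : ∀ᵐ ω ∂P, ‖(g ω)⁻¹‖ ≤ ε₁⁻¹ := by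
    filter_upwards [hg_ae] with ω ⟨h1, _⟩
    have hgpos : 0 < g ω := lt_of_lt_of_le hε₁pos h1
    rw [Real.norm_eq_abs, abs_of_pos (inv_pos.mpr hgpos)]
    exact inv_anti₀ hε₁pos h1
  have hF_bd : ∀ᵐ ω ∂P, ‖F ω‖ ≤ ε₁⁻¹ := by
    filter_upwards [hginv_bd] with ω h1
    calc ‖F ω‖ = ‖(g ω)⁻¹‖ * ‖C.indicator (fun _ => (1:ℝ)) ω‖ := norm_mul _ _
      _ ≤ ε₁⁻¹ * 1 := by
          exact mul_le_mul h1 (hind_bd C ω) (norm_nonneg _) (le_trans (norm_nonneg _) h1)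
      _ = ε₁⁻¹ := mul_one _
  have hF_int : Integrable F P :=
    (integrable_const (ε₁⁻¹)).mono' hF_meas.aestronglyMeasurable hF_bd
  -- key per-m integral computation
  have hFm : ∀ m : 𝓜, ∫ ω, (g ω)⁻¹ * (B m ∩ C).indicator (fun _ => (1:ℝ)) ω ∂P
      = (P (B m)).toReal := by
    intro m
    have hBC : MeasurableSet (B m ∩ C) := (hBmeas m).inter hC
    have hintBC : Integrable ((B m ∩ C).indicator (fun _ => (1:ℝ))) P :=
      (integrable_const (1:ℝ)).indicator hBC
    have hginv_sm : StronglyMeasurable[MeasurableSpace.comap X inferInstance] fun ω => (g ω)⁻¹ :=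
      (hcomap (fun x => (p d x)⁻¹) hpd.inv).stronglyMeasurable
    have hint_prod : Integrable (fun ω => (g ω)⁻¹ * (B m ∩ C).indicator (fun _ => (1:ℝ)) ω) P := by
      refine (integrable_const (ε₁⁻¹)).mono'
        ((hg_meas.inv.mul (measurable_const.indicator hBC)).aestronglyMeasurable) ?_
      filter_upwards [hginv_bd] with ω h1
      calc ‖(g ω)⁻¹ * (B m ∩ C).indicator (fun _ => (1:ℝ)) ω‖
          = ‖(g ω)⁻¹‖ * ‖(B m ∩ C).indicator (fun _ => (1:ℝ)) ω‖ := norm_mul _ _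
        _ ≤ ε₁⁻¹ * 1 :=
            mul_le_mul h1 (hind_bd _ ω) (norm_nonneg _) (le_trans (norm_nonneg _) h1)
        _ = ε₁⁻¹ := mul_one _
    have hmul : P[(fun ω => (g ω)⁻¹ * (B m ∩ C).indicator (fun _ => (1:ℝ)) ω) | MeasurableSpace.comap X inferInstance]
        =ᵐ[P] fun ω => (g ω)⁻¹ * (P⟦B m ∩ C | MeasurableSpace.comap X inferInstance⟧) ω :=
      condExp_mul_of_stronglyMeasurable_left hginv_sm hint_prod hintBC
    calc ∫ ω, (g ω)⁻¹ * (B m ∩ C).indicator (fun _ => (1:ℝ)) ω ∂P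
        = ∫ ω, (P[(fun ω => (g ω)⁻¹ * (B m ∩ C).indicator (fun _ => (1:ℝ)) ω) | MeasurableSpace.comap X inferInstance]) ω ∂P :=
          (integral_condExp hm').symm
      _ = ∫ ω, (g ω)⁻¹ * (P⟦B m ∩ C | MeasurableSpace.comap X inferInstance⟧) ω ∂P := integral_congr_ae hmul
      _ = ∫ ω, (P⟦B m | MeasurableSpace.comap X inferInstance⟧) ω ∂P := by
          refine integral_congr_ae ?_
          filter_upwards [hkey m, hgver, hg_ae] with ω h1 h2 ⟨h3, _⟩
          have hne : g ω ≠ 0 := ne_of_gt (lt_of_lt_of_le hε₁pos h3)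
          rw [h1, ← h2, mul_comm ((P⟦B m | MeasurableSpace.comap X inferInstance⟧) ω) (g ω), inv_mul_cancel_left₀ hne]
      _ = ∫ ω, (B m).indicator (fun _ => (1:ℝ)) ω ∂P := integral_condExp hm'
      _ = (P (B m)).toReal := integral_indicator_one (hBmeas m)
  -- setIntegral version
  have hFset : ∀ m : 𝓜, ∫ ω in B m, F ω ∂P = (P (B m)).toReal := by
    intro m
    rw [← integral_indicator (hBmeas m)]
    rw [show (B m).indicator F
        = fun ω => (g ω)⁻¹ * (B m ∩ C).indicator (fun _ => (1:ℝ)) ω from ?_]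
    · exact hFm m
    · funext ω
      by_cases hB : ω ∈ B m
      · by_cases hCm : ω ∈ C <;>
          simp [Set.indicator_apply, hB, hCm, hFdef, Set.mem_inter_iff]
      · simp [Set.indicator_apply, hB, Set.mem_inter_iff]
  -- integral of F over S
  have hFS : ∫ ω in S, F ω ∂P = (P S).toReal := by
    rw [hSeq, integral_iUnion hBmeas hdisj hF_int.integrableOn]
    rw [measure_iUnion hdisj hBmeas]
    rw [ENNReal.tsum_toReal_eq (fun m => measure_ne_top P _)]
    exact tsum_congr hFset
  -- term 1
  have hT1 : ∫ ω, F ω * Ya ω ∂P = (P S).toReal := by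
    rw [← hFS, ← integral_indicator hS]
    refine integral_congr_ae (ae_of_all _ ?_)
    intro ω
    by_cases hCm : ω ∈ C
    · have hDd : D ω = d := hCm
      have hMeq : Mpot d ω = M ω := hcons_M d ω hDd
      have hYeq : Ypot d (Mpot d ω) ω = Y ω := by
        rw [hMeq]; exact hcons_Y d (M ω) ω hDd rfl
      by_cases hSm : ω ∈ S
      · have hYa1 : Ya ω = 1 := by
          simp only [hYadef]
          rw [if_pos]
          rw [← hYeq]; exact hSm
        simp [Set.indicator_apply, hSm, hYa1]
      · have hYa0 : Ya ω = 0 := by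
          simp only [hYadef]
          rw [if_neg]
          rw [← hYeq]; exact hSm
        simp [Set.indicator_apply, hSm, hYa0]
    · by_cases hSm : ω ∈ S <;>
        simp [Set.indicator_apply, hSm, hCm, hFdef]
  -- term 2 = term 3
  have hT2int : Integrable (fun ω => F ω * Gd ω) P := by
    refine (integrable_const (ε₁⁻¹)).mono'
      ((hF_meas.mul hGd_meas).aestronglyMeasurable) ?_
    filter_upwards [hF_bd, hGd_ae] with ω h1 ⟨h2, h3⟩
    calc ‖F ω * Gd ω‖ = ‖F ω‖ * ‖Gd ω‖ := norm_mul _ _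
      _ ≤ ε₁⁻¹ * 1 := by
          refine mul_le_mul h1 ?_ (norm_nonneg _) (le_trans (norm_nonneg _) h1)
          rw [Real.norm_eq_abs, abs_of_nonneg h2]; exact h3
      _ = ε₁⁻¹ := mul_one _
  have hT1int : Integrable (fun ω => F ω * Ya ω) P := by
    refine (integrable_const (ε₁⁻¹)).mono'
      ((hF_meas.mul hYa_meas).aestronglyMeasurable) ?_
    filter_upwards [hF_bd] with ω h1
    calc ‖F ω * Ya ω‖ = ‖F ω‖ * ‖Ya ω‖ := norm_mul _ _
      _ ≤ ε₁⁻¹ * 1 := mul_le_mul h1 (hYa_bd ω) (norm_nonneg _) (le_trans (norm_nonneg _) h1)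
      _ = ε₁⁻¹ := mul_one _
  have hT2 : ∫ ω, F ω * Gd ω ∂P = ∫ ω, Gd ω ∂P := by
    have hCint : Integrable (C.indicator (fun _ => (1:ℝ))) P :=
      (integrable_const (1:ℝ)).indicator hC
    have hh_sm : StronglyMeasurable[MeasurableSpace.comap X inferInstance] fun ω => (g ω)⁻¹ * Gd ω :=
      ((hcomap (fun x => (p d x)⁻¹) hpd.inv).mul hGd_meas').stronglyMeasurable
    have heq : (fun ω => F ω * Gd ω)
        = fun ω => ((g ω)⁻¹ * Gd ω) * C.indicator (fun _ => (1:ℝ)) ω := by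
      funext ω; simp only [hFdef]; ring
    have hint2 : Integrable (fun ω => ((g ω)⁻¹ * Gd ω) * C.indicator (fun _ => (1:ℝ)) ω) P := by
      rw [← heq]; exact hT2int
    have hmul : P[(fun ω => ((g ω)⁻¹ * Gd ω) * C.indicator (fun _ => (1:ℝ)) ω) | MeasurableSpace.comap X inferInstance]
        =ᵐ[P] fun ω => ((g ω)⁻¹ * Gd ω) * (P⟦C | MeasurableSpace.comap X inferInstance⟧) ω :=
      condExp_mul_of_stronglyMeasurable_left hh_sm hint2 hCint
    rw [heq]
    calc ∫ ω, ((g ω)⁻¹ * Gd ω) * C.indicator (fun _ => (1:ℝ)) ω ∂P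
        = ∫ ω, (P[(fun ω => ((g ω)⁻¹ * Gd ω) * C.indicator (fun _ => (1:ℝ)) ω) | MeasurableSpace.comap X inferInstance]) ω ∂P :=
          (integral_condExp hm').symm
      _ = ∫ ω, ((g ω)⁻¹ * Gd ω) * (P⟦C | MeasurableSpace.comap X inferInstance⟧) ω ∂P := integral_congr_ae hmul
      _ = ∫ ω, Gd ω ∂P := by
          refine integral_congr_ae ?_
          filter_upwards [hgver, hg_ae] with ω h2 ⟨h3, _⟩
          have hne : g ω ≠ 0 := ne_of_gt (lt_of_lt_of_le hε₁pos h3)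
          rw [← h2]
          field_simp
  -- assemble
  have hsplit : (fun ω =>
      ((if D ω = d then (1:ℝ) else 0) / p d (X ω)
          * ((if Y ω ≤ a then (1:ℝ) else 0) - G d (X ω))
        + G d (X ω)))
      = fun ω => (F ω * Ya ω - F ω * Gd ω) + Gd ω := by
    funext ω
    simp only [hFdef, hYadef, hGddef, hgdef]
    have hCind : C.indicator (fun _ => (1:ℝ)) ω = if D ω = d then 1 else 0 := by
      by_cases h : D ω = d <;> simp [Set.indicator_apply, hCdef, h]
    rw [hCind, div_eq_mul_inv]
    ring
  rw [hsplit]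
  have hsub : Integrable (fun ω => F ω * Ya ω - F ω * Gd ω) P := hT1int.sub hT2int
  rw [integral_add hsub hGd_int, integral_sub hT1int hT2int, hT1, hT2]
  ring
end

section
/- Double robustness for d = d'. Let p̃ : 𝓧 → [ε, 1−ε] and h̃ : 𝓧 → [0,1] be measurable plug-in models with ε ∈ (0,1/2). Under Assumptions 1.1 and 1.2, if either (i) p̃(X) = P(D = d | X) P-a.s., or (ii) h̃(X) = P(Y ≤ a | D = d, X) P-a.s., then E[ (1{D=d}/p̃(X))·(Y_a − h̃(X)) + h̃(X) ] = P(Y(d, M(d)) ≤ a) for every a ∈ ℝ and d ∈ {0,1}. -/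
open MeasureTheory ProbabilityTheory

lemma aux_condexp_iUnion {Ω : Type*} {m : MeasurableSpace Ω} [mΩ : MeasurableSpace Ω]
    [StandardBorelSpace Ω] (μ : Measure Ω) [IsFiniteMeasure μ] (hm : m ≤ mΩ)
    {ι : Type*} [Countable ι] {A : ι → Set Ω} (hA : ∀ i, MeasurableSet[mΩ] (A i))
    (hdisj : Pairwise (Function.onFun Disjoint A)) :
    μ⟦⋃ i, A i | m⟧ =ᵐ[μ] fun ω => ∑' i, (μ⟦A i | m⟧) ω := by
  have h1 := condExpKernel_ae_eq_condExp (μ := μ) hm (MeasurableSet.iUnion hA)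
  have h2 : ∀ᵐ ω ∂μ, ∀ i, (condExpKernel μ m ω (A i)).toReal = (μ⟦A i | m⟧) ω :=
    ae_all_iff.2 fun i => condExpKernel_ae_eq_condExp hm (hA i)
  filter_upwards [h1, h2] with ω h1 h2
  rw [← h1, measureReal_def, measure_iUnion hdisj hA,
    ENNReal.tsum_toReal_eq (fun i => measure_ne_top _ _)]
  exact tsum_congr h2

lemma statement6_core
    {Ω 𝓜 𝓧 : Type*} {mX m2 : MeasurableSpace Ω} [mΩ : MeasurableSpace Ω]
    [StandardBorelSpace Ω]
    [MeasurableSpace 𝓜] [Countable 𝓜] [MeasurableSingletonClass 𝓜] [MeasurableSpace 𝓧]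
    (P : Measure Ω) [IsProbabilityMeasure P]
    (Y : Ω → ℝ) (D : Ω → ℕ) (M : Ω → 𝓜) (X : Ω → 𝓧)
    (hY : Measurable Y) (hD : Measurable D) (hM : Measurable M) (hX : Measurable X)
    (hmXle : mX ≤ mΩ) (hm2le : m2 ≤ mΩ) (hmX2 : mX ≤ m2)
    (hXmX : Measurable[mX] X) (hDm2 : Measurable[m2] D) (hXm2 : Measurable[m2] X)
    (Ypot : ℕ → 𝓜 → Ω → ℝ) (Mpot : ℕ → Ω → 𝓜)
    (hYpot : ∀ d m, Measurable (Ypot d m)) (hMpot : ∀ d, Measurable (Mpot d))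
    (hcons_M : ∀ d ω, D ω = d → Mpot d ω = M ω)
    (hcons_Y : ∀ d m ω, D ω = d → M ω = m → Ypot d m ω = Y ω)
    (a : ℝ) (d : ℕ) (hd : d ≤ 1)
    (hA2 : ∀ m : 𝓜, CondIndepFun mX hmXle (fun ω => (Ypot d m ω, Mpot d ω)) D P)
    (ε₁ : ℝ) (hε₁ : ε₁ ∈ Set.Ioo (0:ℝ) (1/2))
    (hoverp : ∀ᵐ ω ∂P,
      ε₁ ≤ (P[(fun ω' => if D ω' = d then (1:ℝ) else 0) | mX]) ω ∧
      (P[(fun ω' => if D ω' = d then (1:ℝ) else 0) | mX]) ω ≤ 1 - ε₁)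
    (ε : ℝ) (hε : ε ∈ Set.Ioo (0:ℝ) (1/2))
    (ptil : 𝓧 → ℝ) (htil : 𝓧 → ℝ)
    (hptilmeas : Measurable ptil) (hhtilmeas : Measurable htil)
    (hptilrange : ∀ x, ptil x ∈ Set.Icc ε (1 - ε))
    (hhtilrange : ∀ x, htil x ∈ Set.Icc (0:ℝ) 1)
    (hrobust :
      ((fun ω => ptil (X ω)) =ᵐ[P]
        P[(fun ω' => if D ω' = d then (1:ℝ) else 0) | mX])
      ∨ (∀ᵐ ω ∂P, D ω = d →
          htil (X ω) = (P[(fun ω' => if Y ω' ≤ a then (1:ℝ) else 0) | m2]) ω)) :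
    ∫ ω,
      ((if D ω = d then (1:ℝ) else 0) / ptil (X ω)
          * ((if Y ω ≤ a then (1:ℝ) else 0) - htil (X ω))
        + htil (X ω)) ∂P
      = (P {ω | Ypot d (Mpot d ω) ω ≤ a}).toReal := by
  classical
  obtain ⟨hε0, hε12⟩ := hε
  obtain ⟨hε₁0, -⟩ := hε₁
  -- sets
  set B : Set Ω := D ⁻¹' {d} with hBdef
  set S : Set Ω := {ω | Ypot d (Mpot d ω) ω ≤ a} with hSdef
  set A : 𝓜 → Set Ω := fun i => (fun ω => (Ypot d i ω, Mpot d ω)) ⁻¹' (Set.Iic a ×ˢ {i})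
    with hAdef
  have hA_mem : ∀ i ω, ω ∈ A i ↔ (Ypot d i ω ≤ a ∧ Mpot d ω = i) := by
    intro i ω
    simp only [hAdef, Set.mem_preimage, Set.mem_prod, Set.mem_Iic, Set.mem_singleton_iff]
  have hAmeas : ∀ i, MeasurableSet (A i) := fun i =>
    ((hYpot d i).prodMk (hMpot d)) (measurableSet_Iic.prod (measurableSet_singleton i))
  have hSunion : S = ⋃ i, A i := by
    ext ω
    simp only [hSdef, Set.mem_setOf_eq, Set.mem_iUnion, hA_mem]
    constructor
    · intro h; exact ⟨Mpot d ω, h, rfl⟩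
    · rintro ⟨i, h1, rfl⟩; exact h1
  have hSmeas : MeasurableSet S := hSunion ▸ MeasurableSet.iUnion hAmeas
  have hBmeas : MeasurableSet B := hD (measurableSet_singleton d)
  have hBmem : ∀ ω, ω ∈ B ↔ D ω = d := by intro ω; simp [hBdef]
  have hdisj : Pairwise (Function.onFun Disjoint A) := by
    intro i j hij
    refine Set.disjoint_left.2 ?_
    intro ω h1 h2
    rw [hA_mem] at h1 h2
    exact hij (h1.2 ▸ h2.2 ▸ rfl)
  -- conditional expectations
  set p : Ω → ℝ := P⟦B | mX⟧ with hpdef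
  set q : Ω → ℝ := P⟦S | mX⟧ with hqdef
  -- per-m conditional independence
  have hCi : ∀ i : 𝓜, P⟦A i ∩ B | mX⟧ =ᵐ[P] P⟦A i | mX⟧ * p := by
    intro i
    have h := (condIndepFun_iff mX hmXle (fun ω => (Ypot d i ω, Mpot d ω)) D
      ((hYpot d i).prodMk (hMpot d)) hD P).1 (hA2 i)
    exact h (A i) B ⟨Set.Iic a ×ˢ {i}, measurableSet_Iic.prod (measurableSet_singleton i), rfl⟩
      ⟨{d}, measurableSet_singleton d, rfl⟩
  -- product identity for the union
  have hprod : P⟦S ∩ B | mX⟧ =ᵐ[P] q * p := by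
    have hAB : ∀ i, MeasurableSet (A i ∩ B) := fun i => (hAmeas i).inter hBmeas
    have hdisj2 : Pairwise (Function.onFun Disjoint (fun i => A i ∩ B)) :=
      fun i j hij => (hdisj hij).mono Set.inter_subset_left Set.inter_subset_left
    have h1 : P⟦S ∩ B | mX⟧ =ᵐ[P] fun ω => ∑' i, (P⟦A i ∩ B | mX⟧) ω := by
      have hSB : S ∩ B = ⋃ i, (A i ∩ B) := by rw [hSunion, Set.iUnion_inter]
      rw [hSB]; exact aux_condexp_iUnion P hmXle hAB hdisj2
    have h2 : q =ᵐ[P] fun ω => ∑' i, (P⟦A i | mX⟧) ω := by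
      rw [hqdef, hSunion]; exact aux_condexp_iUnion P hmXle hAmeas hdisj
    have h3 : ∀ᵐ ω ∂P, ∀ i, (P⟦A i ∩ B | mX⟧) ω = (P⟦A i | mX⟧) ω * p ω := by
      refine ae_all_iff.2 fun i => ?_
      filter_upwards [hCi i] with ω hω using by simpa using hω
    filter_upwards [h1, h2, h3] with ω h1 h2 h3
    simp only [Pi.mul_apply]
    rw [h1, tsum_congr h3, tsum_mul_right, ← h2]
  -- indicator identities
  have hindB : (fun ω => if D ω = d then (1:ℝ) else 0) = B.indicator (fun _ => (1:ℝ)) := by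
    funext ω
    by_cases h : D ω = d
    · rw [Set.indicator_of_mem ((hBmem ω).2 h)]; simp [h]
    · rw [Set.indicator_of_notMem (fun hm => h ((hBmem ω).1 hm))]; simp [h]
  rw [hindB] at hoverp hrobust
  have hoverp' : ∀ᵐ ω ∂P, ε₁ ≤ p ω ∧ p ω ≤ 1 - ε₁ := hoverp
  -- consistency
  have hcons : ∀ ω, D ω = d → (ω ∈ S ↔ Y ω ≤ a) := by
    intro ω hω
    have h1 : Mpot d ω = M ω := hcons_M d ω hω
    have h2 : Ypot d (M ω) ω = Y ω := hcons_Y d (M ω) ω hω rfl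
    simp only [hSdef, Set.mem_setOf_eq, h1, h2]
  have hkey : ∀ ω, B.indicator (fun _ => (1:ℝ)) ω * (if Y ω ≤ a then (1:ℝ) else 0)
      = (S ∩ B).indicator (fun _ => (1:ℝ)) ω := by
    intro ω
    by_cases hω : D ω = d
    · rw [Set.indicator_of_mem ((hBmem ω).2 hω)]
      by_cases hya : Y ω ≤ a
      · rw [Set.indicator_of_mem (Set.mem_inter ((hcons ω hω).2 hya) ((hBmem ω).2 hω))]; simp [hya]
      · rw [Set.indicator_of_notMem (fun h => hya ((hcons ω hω).1 h.1))]; simp [hya]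
    · rw [Set.indicator_of_notMem (fun hm => hω ((hBmem ω).1 hm)),
        Set.indicator_of_notMem (fun h => hω ((hBmem ω).1 h.2))]
      ring
  -- basic bounds and measurability
  have hptpos : ∀ x : 𝓧, 0 < ptil x := fun x => lt_of_lt_of_le hε0 (hptilrange x).1
  have hcbound : ∀ ω, |1 / ptil (X ω)| ≤ 1 / ε := by
    intro ω
    rw [abs_of_pos (div_pos one_pos (hptpos _))]
    exact one_div_le_one_div_of_le hε0 (hptilrange _).1
  have hhbound : ∀ ω, |htil (X ω)| ≤ 1 := fun ω =>
    abs_le.2 ⟨by linarith [(hhtilrange (X ω)).1], (hhtilrange (X ω)).2⟩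
  have hindabs : ∀ (s : Set Ω) (ω : Ω), |s.indicator (fun _ => (1:ℝ)) ω| ≤ 1 := by
    intro s ω
    by_cases h : ω ∈ s
    · rw [Set.indicator_of_mem h]; norm_num
    · rw [Set.indicator_of_notMem h]; norm_num
  have hbdd : ∀ (f : Ω → ℝ) (C : ℝ), AEStronglyMeasurable f P → (∀ ω, |f ω| ≤ C) →
      Integrable f P := fun f C hf h =>
    (integrable_const C).mono' hf (Filter.Eventually.of_forall fun ω => by
      rw [Real.norm_eq_abs]; exact h ω)
  have hcmeas : Measurable fun ω => 1 / ptil (X ω) :=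
    measurable_const.div (hptilmeas.comp hX)
  have hhmeas : Measurable fun ω => htil (X ω) := hhtilmeas.comp hX
  have hintind : ∀ {s : Set Ω}, MeasurableSet s →
      Integrable (s.indicator (fun _ => (1:ℝ))) P := fun {s} hs =>
    hbdd _ 1 (measurable_const.indicator hs).aestronglyMeasurable (hindabs s)
  -- the three pieces
  set u : Ω → ℝ := (fun ω => 1 / ptil (X ω)) * (S ∩ B).indicator (fun _ => (1:ℝ)) with hudef
  set v : Ω → ℝ := (fun ω => 1 / ptil (X ω) * htil (X ω)) * B.indicator (fun _ => (1:ℝ))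
    with hvdef
  have hu : Integrable u P := by
    refine hbdd _ (1/ε * 1) ?_ ?_
    · exact (hcmeas.mul (measurable_const.indicator (hSmeas.inter hBmeas))).aestronglyMeasurable
    · intro ω
      rw [hudef, Pi.mul_apply, abs_mul]
      exact mul_le_mul (hcbound ω) (hindabs _ ω) (abs_nonneg _)
        (le_of_lt (div_pos one_pos hε0))
  have hv : Integrable v P := by
    refine hbdd _ (1/ε * 1 * 1) ?_ ?_
    · exact ((hcmeas.mul hhmeas).mul
        (measurable_const.indicator hBmeas)).aestronglyMeasurable
    · intro ω
      rw [hvdef, Pi.mul_apply, abs_mul, abs_mul]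
      refine mul_le_mul (mul_le_mul (hcbound ω) (hhbound ω) (abs_nonneg _)
        (le_of_lt (div_pos one_pos hε0))) (hindabs _ ω) (abs_nonneg _) ?_
      positivity
  have hw : Integrable (fun ω => htil (X ω)) P :=
    hbdd _ 1 hhmeas.aestronglyMeasurable hhbound
  -- pointwise decomposition of the integrand
  have hupoint : ∀ ω,
      ((if D ω = d then (1:ℝ) else 0) / ptil (X ω)
        * ((if Y ω ≤ a then (1:ℝ) else 0) - htil (X ω)) + htil (X ω))
      = u ω - v ω + htil (X ω) := by
    intro ω
    have hiB : (if D ω = d then (1:ℝ) else 0) = B.indicator (fun _ => (1:ℝ)) ω :=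
      congrFun hindB ω
    rw [hudef, hvdef, Pi.mul_apply, Pi.mul_apply, ← hkey ω, hiB, div_eq_mul_inv]
    ring
  have hsplit : ∫ ω,
      ((if D ω = d then (1:ℝ) else 0) / ptil (X ω)
        * ((if Y ω ≤ a then (1:ℝ) else 0) - htil (X ω)) + htil (X ω)) ∂P
      = ∫ ω, u ω ∂P - ∫ ω, v ω ∂P + ∫ ω, htil (X ω) ∂P := by
    have h1 : ∫ ω, (u ω - v ω + htil (X ω)) ∂P
        = (∫ ω, (u ω - v ω) ∂P) + ∫ ω, htil (X ω) ∂P := integral_add (hu.sub hv) hw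
    have h2 : ∫ ω, (u ω - v ω) ∂P = (∫ ω, u ω ∂P) - ∫ ω, v ω ∂P := integral_sub hu hv
    rw [integral_congr_ae (Filter.Eventually.of_forall hupoint), h1, h2]
  -- strong measurability wrt mX
  have hcsm : StronglyMeasurable[mX] fun ω => 1 / ptil (X ω) :=
    (measurable_const.div (hptilmeas.comp hXmX)).stronglyMeasurable
  have hhsm : StronglyMeasurable[mX] fun ω => htil (X ω) :=
    (hhtilmeas.comp hXmX).stronglyMeasurable
  -- conditional expectation computations
  have hcondu : P[u | mX] =ᵐ[P] fun ω => 1 / ptil (X ω) * (q ω * p ω) := by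
    have h1 : P[u | mX] =ᵐ[P] (fun ω => 1 / ptil (X ω))
        * P[(S ∩ B).indicator (fun _ => (1:ℝ)) | mX] :=
      condExp_mul_of_stronglyMeasurable_left hcsm hu (hintind (hSmeas.inter hBmeas))
    filter_upwards [h1, hprod] with ω h1 h2
    simp only [Pi.mul_apply] at h1 h2
    rw [h1, h2]
  have hcondv : P[v | mX] =ᵐ[P] fun ω => (1 / ptil (X ω) * htil (X ω)) * p ω := by
    have h1 : P[v | mX] =ᵐ[P] (fun ω => 1 / ptil (X ω) * htil (X ω))
        * P[B.indicator (fun _ => (1:ℝ)) | mX] :=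
      condExp_mul_of_stronglyMeasurable_left (hcsm.mul hhsm) hv (hintind hBmeas)
    filter_upwards [h1] with ω h1
    simp only [Pi.mul_apply] at h1
    rw [h1]
  have hTu : ∫ ω, u ω ∂P = ∫ ω, 1 / ptil (X ω) * (q ω * p ω) ∂P := by
    rw [← integral_condExp hmXle (f := u)]
    exact integral_congr_ae hcondu
  have hTv : ∫ ω, v ω ∂P = ∫ ω, (1 / ptil (X ω) * htil (X ω)) * p ω ∂P := by
    rw [← integral_condExp hmXle (f := v)]
    exact integral_congr_ae hcondv
  have hTq : ∫ ω, q ω ∂P = (P S).toReal := by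
    rw [hqdef, integral_condExp hmXle]
    rw [integral_indicator_const (1:ℝ) hSmeas]
    simp [measureReal_def]
  -- case split
  rcases hrobust with hrob | hrob
  · -- propensity model correct
    have he1 : (fun ω => 1 / ptil (X ω) * (q ω * p ω)) =ᵐ[P] q := by
      filter_upwards [hrob] with ω hω
      rw [hpdef, ← hω]
      have h0 : ptil (X ω) ≠ 0 := ne_of_gt (hptpos _)
      field_simp
    have he2 : (fun ω => (1 / ptil (X ω) * htil (X ω)) * p ω)
        =ᵐ[P] fun ω => htil (X ω) := by
      filter_upwards [hrob] with ω hω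
      rw [hpdef, ← hω]
      have h0 : ptil (X ω) ≠ 0 := ne_of_gt (hptpos _)
      field_simp
    rw [hsplit, hTu, hTv, integral_congr_ae he1, integral_congr_ae he2, hTq]
    ring
  · -- outcome model correct: show htil (X ·) =ᵐ q
    have hYameas : Measurable fun ω => if Y ω ≤ a then (1:ℝ) else 0 :=
      Measurable.ite (hY measurableSet_Iic) measurable_const measurable_const
    have hYa : Integrable (fun ω => if Y ω ≤ a then (1:ℝ) else 0) P :=
      hbdd _ 1 hYameas.aestronglyMeasurable (fun ω => by by_cases h : Y ω ≤ a <;> simp [h])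
    have hiBsm2 : StronglyMeasurable[m2] (B.indicator (fun _ => (1:ℝ))) :=
      (measurable_const.indicator (hDm2 (measurableSet_singleton d))).stronglyMeasurable
    have hiBYa : Integrable ((B.indicator (fun _ => (1:ℝ)))
        * fun ω => if Y ω ≤ a then (1:ℝ) else 0) P := by
      refine hbdd _ (1*1) ?_ ?_
      · exact ((measurable_const.indicator hBmeas).mul hYameas).aestronglyMeasurable
      · intro ω
        rw [Pi.mul_apply, abs_mul]
        refine mul_le_mul (hindabs _ ω) ?_ (abs_nonneg _) (by norm_num)
        by_cases h : Y ω ≤ a <;> simp [h]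
    have ht1 : P[(S ∩ B).indicator (fun _ => (1:ℝ)) | mX]
        =ᵐ[P] P[P[(S ∩ B).indicator (fun _ => (1:ℝ)) | m2] | mX] :=
      (condExp_condExp_of_le hmX2 hm2le).symm
    have heq : (S ∩ B).indicator (fun _ => (1:ℝ))
        = (B.indicator (fun _ => (1:ℝ))) * fun ω => if Y ω ≤ a then (1:ℝ) else 0 := by
      funext ω; rw [Pi.mul_apply, hkey ω]
    have ht2 : P[(S ∩ B).indicator (fun _ => (1:ℝ)) | m2]
        =ᵐ[P] (B.indicator (fun _ => (1:ℝ)))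
          * P[(fun ω => if Y ω ≤ a then (1:ℝ) else 0) | m2] := by
      rw [heq]
      exact condExp_mul_of_stronglyMeasurable_left hiBsm2 hiBYa hYa
    have ht3 : (B.indicator (fun _ => (1:ℝ)))
          * P[(fun ω => if Y ω ≤ a then (1:ℝ) else 0) | m2]
        =ᵐ[P] (fun ω => htil (X ω)) * (B.indicator (fun _ => (1:ℝ))) := by
      filter_upwards [hrob] with ω hω
      simp only [Pi.mul_apply]
      by_cases h : D ω = d
      · rw [Set.indicator_of_mem ((hBmem ω).2 h), ← hω h]; ring
      · rw [Set.indicator_of_notMem (fun hm => h ((hBmem ω).1 hm))]; ring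
    have hiBh : Integrable ((fun ω => htil (X ω)) * B.indicator (fun _ => (1:ℝ))) P := by
      refine hbdd _ (1*1) ?_ ?_
      · exact (hhmeas.mul (measurable_const.indicator hBmeas)).aestronglyMeasurable
      · intro ω
        rw [Pi.mul_apply, abs_mul]
        exact mul_le_mul (hhbound ω) (hindabs _ ω) (abs_nonneg _) (by norm_num)
    have ht4 : P[(fun ω => htil (X ω)) * B.indicator (fun _ => (1:ℝ)) | mX]
        =ᵐ[P] (fun ω => htil (X ω)) * p :=
      condExp_mul_of_stronglyMeasurable_left hhsm hiBh (hintind hBmeas)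
    have hqp : q * p =ᵐ[P] (fun ω => htil (X ω)) * p := by
      calc q * p =ᵐ[P] P[(S ∩ B).indicator (fun _ => (1:ℝ)) | mX] := hprod.symm
      _ =ᵐ[P] P[P[(S ∩ B).indicator (fun _ => (1:ℝ)) | m2] | mX] := ht1
      _ =ᵐ[P] P[(fun ω => htil (X ω)) * B.indicator (fun _ => (1:ℝ)) | mX] :=
          condExp_congr_ae (ht2.trans ht3)
      _ =ᵐ[P] (fun ω => htil (X ω)) * p := ht4
    have hheq : (fun ω => htil (X ω)) =ᵐ[P] q := by
      filter_upwards [hqp, hoverp'] with ω h1 h2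
      have hp0 : p ω ≠ 0 := ne_of_gt (lt_of_lt_of_le hε₁0 h2.1)
      simp only [Pi.mul_apply] at h1
      exact mul_right_cancel₀ hp0 h1.symm
    have he1 : (fun ω => 1 / ptil (X ω) * (q ω * p ω)) =ᵐ[P]
        (fun ω => (1 / ptil (X ω) * htil (X ω)) * p ω) := by
      filter_upwards [hheq] with ω hω
      rw [← hω]; ring
    have hw2 : ∫ ω, htil (X ω) ∂P = (P S).toReal := by
      rw [integral_congr_ae hheq, hTq]
    rw [hsplit, hTu, hTv, integral_congr_ae he1, hw2]
    ring

/-- Double robustness for `d = d'`. Under Assumptions 1.1 and 1.2 and overlap,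
if either the plug-in propensity model `p̃` or the plug-in outcome model `h̃` is correct,
then `E[(1{D=d}/p̃(X))·(Y_a − h̃(X)) + h̃(X)] = P(Y(d, M(d)) ≤ a)`. -/
theorem statement_6
    {Ω 𝓜 𝓧 : Type*} [MeasurableSpace Ω] [StandardBorelSpace Ω]
    [MeasurableSpace 𝓜] [Countable 𝓜] [MeasurableSingletonClass 𝓜] [MeasurableSpace 𝓧]
    (P : Measure Ω) [IsProbabilityMeasure P]
    (Y : Ω → ℝ) (D : Ω → ℕ) (M : Ω → 𝓜) (X : Ω → 𝓧)
    (hY : Measurable Y) (hD : Measurable D) (hM : Measurable M) (hX : Measurable X)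
    (hD01 : ∀ ω, D ω ≤ 1)
    -- potential outcomes and potential mediators
    (Ypot : ℕ → 𝓜 → Ω → ℝ) (Mpot : ℕ → Ω → 𝓜)
    (hYpot : ∀ d m, Measurable (Ypot d m)) (hMpot : ∀ d, Measurable (Mpot d))
    -- Assumption 1.1 (consistency / SUTVA)
    (hcons_M : ∀ d ω, D ω = d → Mpot d ω = M ω)
    (hcons_Y : ∀ d m ω, D ω = d → M ω = m → Ypot d m ω = Y ω)
    -- Assumption 1.2 : (Y(d,m), M(d')) ⫫ D | X
    (hA2 : ∀ d ≤ 1, ∀ d' ≤ 1, ∀ m : 𝓜,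
      CondIndepFun (MeasurableSpace.comap X inferInstance) hX.comap_le
        (fun ω => (Ypot d m ω, Mpot d' ω)) D P)
    -- overlap for the true propensity score
    (ε₁ : ℝ) (hε₁ : ε₁ ∈ Set.Ioo (0:ℝ) (1/2))
    (hoverp : ∀ δ ≤ 1, ∀ᵐ ω ∂P,
      ε₁ ≤ (P[(fun ω' => if D ω' = δ then (1:ℝ) else 0) |
              MeasurableSpace.comap X inferInstance]) ω ∧
      (P[(fun ω' => if D ω' = δ then (1:ℝ) else 0) |
              MeasurableSpace.comap X inferInstance]) ω ≤ 1 - ε₁)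
    -- threshold and treatment index
    (a : ℝ) (d : ℕ) (hd : d ≤ 1)
    -- measurable plug-in models with the required ranges
    (ε : ℝ) (hε : ε ∈ Set.Ioo (0:ℝ) (1/2))
    (ptil : 𝓧 → ℝ) (htil : 𝓧 → ℝ)
    (hptilmeas : Measurable ptil) (hhtilmeas : Measurable htil)
    (hptilrange : ∀ x, ptil x ∈ Set.Icc ε (1 - ε))
    (hhtilrange : ∀ x, htil x ∈ Set.Icc (0:ℝ) 1)
    -- (i) the propensity model is correct, or (ii) the outcome model is correct
    (hrobust :
      ((fun ω => ptil (X ω)) =ᵐ[P]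
        P[(fun ω' => if D ω' = d then (1:ℝ) else 0) |
          MeasurableSpace.comap X inferInstance])
      ∨ (∀ᵐ ω ∂P, D ω = d →
          htil (X ω) = (P[(fun ω' => if Y ω' ≤ a then (1:ℝ) else 0) |
            MeasurableSpace.comap (fun ω' => (D ω', X ω')) inferInstance]) ω)) :
    ∫ ω,
      ((if D ω = d then (1:ℝ) else 0) / ptil (X ω)
          * ((if Y ω ≤ a then (1:ℝ) else 0) - htil (X ω))
        + htil (X ω)) ∂P
      = (P {ω | Ypot d (Mpot d ω) ω ≤ a}).toReal := by
  have hpairm2 : Measurable[MeasurableSpace.comap (fun ω => (D ω, X ω)) inferInstance]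
      (fun ω => (D ω, X ω)) := Measurable.of_comap_le le_rfl
  have hDm2 : Measurable[MeasurableSpace.comap (fun ω => (D ω, X ω)) inferInstance] D :=
    measurable_fst.comp hpairm2
  have hXm2 : Measurable[MeasurableSpace.comap (fun ω => (D ω, X ω)) inferInstance] X :=
    measurable_snd.comp hpairm2
  exact statement6_core P Y D M X hY hD hM hX hX.comap_le ((hD.prodMk hX).comap_le)
    hXm2.comap_le (Measurable.of_comap_le le_rfl) hDm2 hXm2
    Ypot Mpot hYpot hMpot hcons_M hcons_Y a d hd (fun m => hA2 d hd d hd m)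
    ε₁ hε₁ (hoverp d hd) ε hε ptil htil hptilmeas hhtilmeas hptilrange hhtilrange hrobust
end
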